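/- arXiv:0810.4957 — 7 statements merged into one kernel-verified Lean document; each statement's English description precedes it below -/
import Mathlib

section
/- (Martingale Representation) For any {F_t}-adapted R^K-valued martingale L, there exists an adapted R^{K×N}-valued process Z such that L_{t+1} = L_0 + ∑_{0≤u≤t} Z_u M_{u+1} for all t, and Z is unique up to the equivalence ∼_M. -/
open MeasureTheory


lemma condexp_apply_fin {Ω : Type*} {m m0 : MeasurableSpace Ω} {μ : Measure Ω}
    [IsFiniteMeasure μ] (hm : m ≤ m0) {n : ℕ} {F : Ω → Fin n → ℝ} (hF : Integrable F μ)
    (j : Fin n) :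
    (fun ω => (μ[F|m]) ω j) =ᵐ[μ] μ[fun ω => F ω j|m] := by
  have hSF : SigmaFinite (μ.trim hm) := by infer_instance
  set L : (Fin n → ℝ) →L[ℝ] ℝ := ContinuousLinearMap.proj j
  refine ae_eq_condExp_of_forall_setIntegral_eq hm ?_ ?_ ?_ ?_
  · exact L.integrable_comp hF
  · exact fun s _ _ => (L.integrable_comp integrable_condExp).integrableOn
  · intro s hs hμs
    have h1 : ∫ x in s, (μ[F|m]) x j ∂μ = L (∫ x in s, (μ[F|m]) x ∂μ) :=
      L.integral_comp_comm integrable_condExp.integrableOn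
    have h2 : ∫ x in s, F x j ∂μ = L (∫ x in s, F x ∂μ) :=
      L.integral_comp_comm hF.integrableOn
    rw [h1, h2, setIntegral_condExp hm hF hs]
  · exact StronglyMeasurable.aestronglyMeasurable
      (L.continuous.comp_stronglyMeasurable stronglyMeasurable_condExp)

lemma factor_through {Ω β γ : Type*} [MeasurableSpace Ω] [MeasurableSpace β] [MeasurableSpace γ]
    [MeasurableSingletonClass γ] [Inhabited γ] (Y : Ω → β) (f : Ω → γ)
    (hf : Measurable[MeasurableSpace.comap Y inferInstance] f) :
    ∃ h : β → γ, ∀ ω, f ω = h (Y ω) := by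
  classical
  refine ⟨fun y => if hy : y ∈ Set.range Y then f hy.choose else default, fun ω => ?_⟩
  have hmem : Y ω ∈ Set.range Y := ⟨ω, rfl⟩
  simp only [dif_pos hmem]
  obtain ⟨B, hB, hBeq⟩ := hf (measurableSet_singleton (f hmem.choose))
  have hω0 : hmem.choose ∈ Y ⁻¹' B := by
    rw [hBeq]; exact rfl
  have hYeq : Y ω = Y hmem.choose := hmem.choose_spec.symm
  have hω : ω ∈ Y ⁻¹' B := by
    have : Y ω ∈ B := hYeq ▸ hω0
    exact this
  rw [hBeq] at hω
  exact hω

lemma integrable_apply_fin {Ω : Type*} [MeasurableSpace Ω] {μ : Measure Ω} {n : ℕ}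
    {F : Ω → Fin n → ℝ} (hF : Integrable F μ) (j : Fin n) :
    Integrable (fun ω => F ω j) μ := by
  have := (ContinuousLinearMap.proj (R := ℝ) (φ := fun _ : Fin n => ℝ) j).integrable_comp hF
  simpa using this

lemma measurable_pi_lambda' {Ω δ : Type*} {π : δ → Type*} [∀ a, MeasurableSpace (π a)]
    {m : MeasurableSpace Ω} (f : Ω → ∀ a, π a) (hf : ∀ a, Measurable[m] fun c => f c a) :
    Measurable[m] f :=
  measurable_pi_lambda f hf

lemma mr_step
    {Ω : Type*} {m0 : MeasurableSpace Ω} {μ : Measure Ω} [IsProbabilityMeasure μ]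
    {N K : ℕ} (𝓕 : Filtration ℕ m0)
    (X : ℕ → Ω → (Fin N → ℝ))
    (hXval : ∀ t ω, ∃ i : Fin N, X t ω = fun j => if j = i then (1 : ℝ) else 0)
    (h𝓕 : ∀ t, (𝓕 t : MeasurableSpace Ω)
      = MeasurableSpace.comap (fun ω (s : Fin (t + 1)) => X (s : ℕ) ω) inferInstance)
    (hXint : ∀ t, Integrable (X t) μ)
    (M : ℕ → Ω → (Fin N → ℝ))
    (hM : ∀ t, M t = X t - μ[X t | 𝓕 (t - 1)])
    (L : ℕ → Ω → Fin K → ℝ)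
    (hL : Martingale L 𝓕 μ) (u : ℕ) :
    ∃ Zu : Ω → Fin K → Fin N → ℝ, StronglyMeasurable[𝓕 u] Zu ∧
      ∀ᵐ ω ∂μ, (fun i => ∑ j, Zu ω i j * M (u + 1) ω j) = L (u + 1) ω - L u ω := by
  classical
  have hm : (𝓕 u : MeasurableSpace Ω) ≤ m0 := 𝓕.le u
  set e : Fin N → (Fin N → ℝ) := fun i j => if j = i then (1 : ℝ) else 0 with he
  -- factorization of L (u+1)
  have hLmeas : Measurable[MeasurableSpace.comap
      (fun ω (s : Fin (u + 1 + 1)) => X (s : ℕ) ω) inferInstance] (L (u + 1)) := by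
    have := (hL.stronglyAdapted (u + 1)).measurable
    rwa [h𝓕 (u + 1)] at this
  obtain ⟨h, hh⟩ := factor_through _ _ hLmeas
  set G : Fin N → Ω → Fin K → ℝ :=
    fun j ω => h (Fin.snoc (fun s : Fin (u + 1) => X (s : ℕ) ω) (e j)) with hG
  -- snoc identity
  have hsnoc : ∀ ω, Fin.snoc (fun s : Fin (u + 1) => X (s : ℕ) ω) (X (u + 1) ω)
      = fun s : Fin (u + 1 + 1) => X (s : ℕ) ω := by
    intro ω
    funext s
    refine Fin.lastCases ?_ (fun i => ?_) s
    · simp [Fin.snoc_last]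
    · simp [Fin.snoc_castSucc]
  -- pointwise: G j * X j = L(u+1) * X j
  have hGX : ∀ ω (i : Fin K) (j : Fin N),
      G j ω i * X (u + 1) ω j = L (u + 1) ω i * X (u + 1) ω j := by
    intro ω i j
    obtain ⟨k, hk⟩ := hXval (u + 1) ω
    by_cases hjk : j = k
    · subst hjk
      have hek : e j = X (u + 1) ω := by rw [hk]
      have hGe : G j ω = L (u + 1) ω := by
        rw [hG]
        simp only
        rw [hek, hsnoc ω]
        exact (hh ω).symm
      rw [hGe]
    · have : X (u + 1) ω j = 0 := by rw [hk]; simp [hjk]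
      rw [this, mul_zero, mul_zero]
  have hXsum : ∀ ω, ∑ j, X (u + 1) ω j = 1 := by
    intro ω
    obtain ⟨k, hk⟩ := hXval (u + 1) ω
    rw [hk]
    simp
  -- measurability of G j
  have hGmeas : ∀ j, Measurable[𝓕 u] (G j) := by
    intro j
    rw [h𝓕 u]
    intro B hB
    set T : Set (Fin (u + 1) → Fin N → ℝ) := Set.pi Set.univ (fun _ => Set.range e) with hT
    have hTfin : T.Finite := Set.Finite.pi (fun _ => Set.finite_range e)
    set S : Set (Fin (u + 1) → Fin N → ℝ) := {y ∈ T | h (Fin.snoc y (e j)) ∈ B} with hS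
    have hSfin : S.Finite := hTfin.subset (fun y hy => hy.1)
    refine ⟨S, hSfin.measurableSet, ?_⟩
    ext ω
    simp only [Set.mem_preimage, hS, Set.mem_setOf_eq, hT, Set.mem_pi, Set.mem_univ,
      forall_true_left]
    constructor
    · rintro ⟨-, hB'⟩; exact hB'
    · intro hB'
      refine ⟨fun s => ?_, hB'⟩
      obtain ⟨k, hk⟩ := hXval (s : ℕ) ω
      exact ⟨k, hk.symm⟩
  -- the process
  refine ⟨fun ω i j => G j ω i - L u ω i, ?_, ?_⟩
  · have hmeasZ : Measurable[𝓕 u] (fun ω (i : Fin K) (j : Fin N) => G j ω i - L u ω i) := by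
      exact measurable_pi_lambda' _ (fun i => measurable_pi_lambda' _ (fun j =>
        ((measurable_pi_apply i).comp (hGmeas j)).sub
          ((measurable_pi_apply i).comp (hL.stronglyAdapted u).measurable)))
    exact hmeasZ.stronglyMeasurable
  -- the a.e. identity
  · set c : Fin N → Ω → ℝ := fun j => μ[fun ω => X (u + 1) ω j|𝓕 u] with hc
    have hMc : ∀ j : Fin N, (fun ω => M (u + 1) ω j)
        =ᵐ[μ] fun ω => X (u + 1) ω j - c j ω := by
      intro j
      have h1 : (fun ω => M (u + 1) ω j)
          = fun ω => X (u + 1) ω j - (μ[X (u + 1)|𝓕 u]) ω j := by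
        funext ω
        have := hM (u + 1)
        rw [Nat.add_sub_cancel] at this
        rw [this]
        simp
      rw [h1]
      filter_upwards [condexp_apply_fin hm (hXint (u + 1)) j] with ω hω
      rw [hω]
    have hsum1 : (fun ω => ∑ j, c j ω) =ᵐ[μ] fun _ => (1 : ℝ) := by
      have h2 : μ[∑ j, (fun ω => X (u + 1) ω j)|𝓕 u]
          =ᵐ[μ] ∑ j, μ[fun ω => X (u + 1) ω j|𝓕 u] :=
        condExp_finsetSum (fun j _ => integrable_apply_fin (hXint (u + 1)) j) _
      have h3 : (∑ j, (fun ω => X (u + 1) ω j)) = fun _ : Ω => (1 : ℝ) := by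
        funext ω
        rw [Finset.sum_apply]
        exact hXsum ω
      rw [h3] at h2
      rw [condExp_const hm] at h2
      filter_upwards [h2] with ω hω
      have : (∑ j, μ[fun ω => X (u + 1) ω j|𝓕 u]) ω = ∑ j, c j ω := by
        rw [Finset.sum_apply]
      rw [← this, ← hω]
    -- integrability of products
    have hLi_int : ∀ i : Fin K, Integrable (fun ω => L (u + 1) ω i) μ := fun i =>
      integrable_apply_fin (hL.integrable (u + 1)) i
    have hXj_aesm : ∀ j : Fin N, AEStronglyMeasurable (fun ω => X (u + 1) ω j) μ := fun j =>
      (integrable_apply_fin (hXint (u + 1)) j).aestronglyMeasurable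
    have hXj_bdd : ∀ (j : Fin N) ω, ‖X (u + 1) ω j‖ ≤ 1 := by
      intro j ω
      obtain ⟨k, hk⟩ := hXval (u + 1) ω
      rw [hk]
      by_cases hjk : j = k <;> simp [hjk]
    have hprod_int : ∀ (i : Fin K) (j : Fin N),
        Integrable (fun ω => G j ω i * X (u + 1) ω j) μ := by
      intro i j
      have : (fun ω => G j ω i * X (u + 1) ω j)
          = fun ω => X (u + 1) ω j * L (u + 1) ω i := by
        funext ω
        rw [hGX ω i j, mul_comm]
      rw [this]
      exact (hLi_int i).bdd_mul (c := 1) (hXj_aesm j) (Filter.Eventually.of_forall (hXj_bdd j))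
    have hGi_sm : ∀ (i : Fin K) (j : Fin N), StronglyMeasurable[𝓕 u] (fun ω => G j ω i) :=
      fun i j => ((measurable_pi_apply i).comp (hGmeas j)).stronglyMeasurable
    -- key conditional expectation identity
    have hGc : ∀ i : Fin K,
        (fun ω => ∑ j, G j ω i * c j ω) =ᵐ[μ] fun ω => L u ω i := by
      intro i
      have h4 : ∀ j : Fin N, μ[(fun ω => G j ω i) * (fun ω => X (u + 1) ω j)|𝓕 u]
          =ᵐ[μ] (fun ω => G j ω i) * c j :=
        fun j => condExp_mul_of_stronglyMeasurable_left (hGi_sm i j) (hprod_int i j)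
          (integrable_apply_fin (hXint (u + 1)) j)
      have h5 : μ[∑ j, ((fun ω => G j ω i) * (fun ω => X (u + 1) ω j))|𝓕 u]
          =ᵐ[μ] ∑ j, μ[(fun ω => G j ω i) * (fun ω => X (u + 1) ω j)|𝓕 u] :=
        condExp_finsetSum (fun j _ => hprod_int i j) _
      have h6 : (∑ j, ((fun ω => G j ω i) * (fun ω => X (u + 1) ω j)))
          = fun ω => L (u + 1) ω i := by
        funext ω
        rw [Finset.sum_apply]
        have : ∑ j, ((fun ω => G j ω i) * fun ω => X (u + 1) ω j) ω
            = ∑ j, L (u + 1) ω i * X (u + 1) ω j := by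
          refine Finset.sum_congr rfl (fun j _ => ?_)
          exact hGX ω i j
        rw [this, ← Finset.mul_sum, hXsum ω, mul_one]
      have h7 : μ[fun ω => L (u + 1) ω i|𝓕 u] =ᵐ[μ] fun ω => L u ω i := by
        have hmart : μ[L (u + 1)|𝓕 u] =ᵐ[μ] L u := hL.condExp_ae_eq (Nat.le_succ u)
        have := condexp_apply_fin hm (hL.integrable (u + 1)) i
        filter_upwards [this, hmart] with ω hω1 hω2
        rw [← hω1, hω2]
      rw [h6] at h5
      have hsum_eq : ∀ j : Fin N, μ[(fun ω => G j ω i) * (fun ω => X (u + 1) ω j)|𝓕 u]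
          =ᵐ[μ] (fun ω => G j ω i) * c j := h4
      have h8 : (∑ j, μ[(fun ω => G j ω i) * (fun ω => X (u + 1) ω j)|𝓕 u])
          =ᵐ[μ] ∑ j, ((fun ω => G j ω i) * c j) := by
        have hall := Filter.eventually_all.mpr hsum_eq
        filter_upwards [hall] with ω hω
        rw [Finset.sum_apply, Finset.sum_apply]
        exact Finset.sum_congr rfl (fun j _ => hω j)
      filter_upwards [h5, h8, h7] with ω hω5 hω8 hω7
      have : (∑ j, ((fun ω => G j ω i) * c j)) ω = ∑ j, G j ω i * c j ω := by
        rw [Finset.sum_apply]; rfl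
      rw [← this, ← hω8, ← hω5, hω7]
    -- assemble
    have hallMc := Filter.eventually_all.mpr hMc
    have hallGc := Filter.eventually_all.mpr hGc
    filter_upwards [hallMc, hsum1, hallGc] with ω hωM hω1 hωG
    funext i
    have expand : ∑ j, (G j ω i - L u ω i) * M (u + 1) ω j
        = ∑ j, (G j ω i - L u ω i) * (X (u + 1) ω j - c j ω) :=
      Finset.sum_congr rfl (fun j _ => by rw [hωM j])
    rw [expand]
    have : ∑ j, (G j ω i - L u ω i) * (X (u + 1) ω j - c j ω)
        = (∑ j, G j ω i * X (u + 1) ω j) - (∑ j, G j ω i * c j ω)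
          - L u ω i * (∑ j, X (u + 1) ω j) + L u ω i * (∑ j, c j ω) := by
      rw [Finset.mul_sum, Finset.mul_sum, ← Finset.sum_sub_distrib, ← Finset.sum_sub_distrib,
        ← Finset.sum_add_distrib]
      exact Finset.sum_congr rfl (fun j _ => by ring)
    rw [this]
    have hLX : ∑ j, G j ω i * X (u + 1) ω j = L (u + 1) ω i := by
      have : ∑ j, G j ω i * X (u + 1) ω j = ∑ j, L (u + 1) ω i * X (u + 1) ω j :=
        Finset.sum_congr rfl (fun j _ => hGX ω i j)
      rw [this, ← Finset.mul_sum, hXsum ω, mul_one]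
    rw [hLX, hωG i, hXsum ω, hω1, Pi.sub_apply]
    ring


/-- Martingale representation.  Any adapted `ℝ^K`-valued martingale `L`
can be written as `L (t+1) = L 0 + ∑_{0 ≤ u ≤ t} Z u • M (u+1)`, with `Z` adapted and
unique up to the equivalence `∼_M`. -/
theorem martingale_representation
    {Ω : Type*} {m0 : MeasurableSpace Ω} {μ : Measure Ω} [IsProbabilityMeasure μ]
    {N K : ℕ} (𝓕 : Filtration ℕ m0)
    (X : ℕ → Ω → (Fin N → ℝ))
    (hXval : ∀ t ω, ∃ i : Fin N, X t ω = fun j => if j = i then (1 : ℝ) else 0)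
    (h𝓕 : ∀ t, (𝓕 t : MeasurableSpace Ω)
      = MeasurableSpace.comap (fun ω (s : Fin (t + 1)) => X (s : ℕ) ω) inferInstance)
    (hXint : ∀ t, Integrable (X t) μ)
    (M : ℕ → Ω → (Fin N → ℝ))
    (hM : ∀ t, M t = X t - μ[X t | 𝓕 (t - 1)])
    (L : ℕ → Ω → Fin K → ℝ)
    (hL : Martingale L 𝓕 μ) :
    ∃ Z : ℕ → Ω → Fin K → Fin N → ℝ,
      (∀ t, StronglyMeasurable[𝓕 t] (Z t)) ∧
      (∀ t, ∀ᵐ ω ∂μ,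
        L (t + 1) ω = L 0 ω
          + ∑ u ∈ Finset.range (t + 1), (fun i => ∑ j, Z u ω i j * M (u + 1) ω j)) ∧
      ∀ Z' : ℕ → Ω → Fin K → Fin N → ℝ,
        (∀ t, StronglyMeasurable[𝓕 t] (Z' t)) →
        (∀ t, ∀ᵐ ω ∂μ,
          L (t + 1) ω = L 0 ω
            + ∑ u ∈ Finset.range (t + 1), (fun i => ∑ j, Z' u ω i j * M (u + 1) ω j)) →
        ∀ u, ∀ᵐ ω ∂μ,
          (fun i => ∑ j, Z u ω i j * M (u + 1) ω j)
            = (fun i => ∑ j, Z' u ω i j * M (u + 1) ω j) := by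
  classical
  choose Z hZsm hZae using fun u => mr_step 𝓕 X hXval h𝓕 hXint M hM L hL u
  have hrep : ∀ t : ℕ, ∀ᵐ ω ∂μ,
      L (t + 1) ω = L 0 ω
        + ∑ u ∈ Finset.range (t + 1), (fun i => ∑ j, Z u ω i j * M (u + 1) ω j) := by
    intro t
    have hall : ∀ᵐ ω ∂μ, ∀ u : ℕ,
        (fun i => ∑ j, Z u ω i j * M (u + 1) ω j) = L (u + 1) ω - L u ω :=
      ae_all_iff.mpr hZae
    filter_upwards [hall] with ω hω
    have : ∑ u ∈ Finset.range (t + 1), (fun i => ∑ j, Z u ω i j * M (u + 1) ω j)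
        = ∑ u ∈ Finset.range (t + 1), (L (u + 1) ω - L u ω) :=
      Finset.sum_congr rfl (fun u _ => hω u)
    rw [this, Finset.sum_range_sub (fun u => L u ω)]
    abel
  refine ⟨Z, hZsm, hrep, ?_⟩
  intro Z' hZ'sm hZ'rep u
  have hallZ : ∀ᵐ ω ∂μ, ∀ t : ℕ,
      L (t + 1) ω = L 0 ω
        + ∑ v ∈ Finset.range (t + 1), (fun i => ∑ j, Z v ω i j * M (v + 1) ω j) :=
    ae_all_iff.mpr hrep
  have hallZ' : ∀ᵐ ω ∂μ, ∀ t : ℕ,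
      L (t + 1) ω = L 0 ω
        + ∑ v ∈ Finset.range (t + 1), (fun i => ∑ j, Z' v ω i j * M (v + 1) ω j) :=
    ae_all_iff.mpr hZ'rep
  filter_upwards [hallZ, hallZ'] with ω h1 h2
  have hS : ∀ t : ℕ,
      ∑ v ∈ Finset.range (t + 1), (fun i => ∑ j, Z v ω i j * M (v + 1) ω j)
        = ∑ v ∈ Finset.range (t + 1), (fun i => ∑ j, Z' v ω i j * M (v + 1) ω j) := by
    intro t
    have e1 := h1 t
    have e2 := h2 t
    rw [e1] at e2
    exact add_left_cancel e2
  cases u with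
  | zero =>
    have := hS 0
    simpa [Finset.sum_range_one] using this
  | succ v =>
    have ha := hS (v + 1)
    have hb := hS v
    have e3 := Finset.sum_range_succ
      (fun w => (fun i => ∑ j, Z w ω i j * M (w + 1) ω j)) (v + 1)
    have e4 := Finset.sum_range_succ
      (fun w => (fun i => ∑ j, Z' w ω i j * M (w + 1) ω j)) (v + 1)
    rw [e3, e4, hb] at ha
    exact add_left_cancel ha
end

section
/- For any R^K-valued F_t-measurable random variable W with E[W | F_{t-1}] = 0, there exists an F_{t-1}-measurable random matrix Z_{t-1} ∈ R^{K×N} such that W = Z_{t-1} M_t P-a.s., and Z_{t-1} is unique up to the equivalence Z^1 M_t = Z^2 M_t P-a.s. -/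
open MeasureTheory

/-- Evaluation of a conditional expectation of a `Fin n → ℝ`-valued function. -/
lemma condexp_eval_aux {Ω : Type*} {m m0 : MeasurableSpace Ω} {μ : Measure Ω} [IsFiniteMeasure μ]
    (hm : m ≤ m0) {n : ℕ} (F : Ω → Fin n → ℝ) (hF : Integrable F μ) (j : Fin n) :
    (fun ω => (μ[F|m]) ω j) =ᵐ[μ] μ[fun ω => F ω j|m] := by
  have hFj : Integrable (fun ω => F ω j) μ :=
    (ContinuousLinearMap.proj (R := ℝ) (φ := fun _ : Fin n => ℝ) j).integrable_comp hF
  refine ae_eq_condExp_of_forall_setIntegral_eq hm hFj ?_ ?_ ?_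
  · intro s _ _
    exact ((ContinuousLinearMap.proj (R := ℝ) (φ := fun _ : Fin n => ℝ) j).integrable_comp
      integrable_condExp).integrableOn
  · intro s hs hμs
    have h1 := (ContinuousLinearMap.proj (R := ℝ) (φ := fun _ : Fin n => ℝ) j).integral_comp_comm
      ((integrable_condExp (f := F) (m := m) (μ := μ)).integrableOn (s := s))
    have h2 := (ContinuousLinearMap.proj (R := ℝ) (φ := fun _ : Fin n => ℝ) j).integral_comp_comm
      (hF.integrableOn (s := s))
    simp only [ContinuousLinearMap.proj_apply] at h1 h2
    rw [h1, h2, setIntegral_condExp hm hF hs]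
  · exact ((continuous_apply j).comp_stronglyMeasurable
      (stronglyMeasurable_condExp (f := F) (m := m) (μ := μ))).aestronglyMeasurable

/-- any `ℝ^K`-valued `𝓕 t`-measurable `W` with `E[W | 𝓕 (t-1)] = 0` can be
written `W = Z_{t-1} M t` a.s. for some `𝓕 (t-1)`-measurable matrix `Z_{t-1}`, unique up to
the equivalence `Z¹ M t = Z² M t` a.s. -/
theorem mean_zero_representation
    {Ω : Type*} {m0 : MeasurableSpace Ω} {μ : Measure Ω} [IsProbabilityMeasure μ]
    {N K : ℕ} (𝓕 : Filtration ℕ m0)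
    (X : ℕ → Ω → (Fin N → ℝ))
    (hXval : ∀ t ω, ∃ i : Fin N, X t ω = fun j => if j = i then (1 : ℝ) else 0)
    (h𝓕 : ∀ t, (𝓕 t : MeasurableSpace Ω)
      = MeasurableSpace.comap (fun ω (s : Fin (t + 1)) => X (s : ℕ) ω) inferInstance)
    (hXint : ∀ t, Integrable (X t) μ)
    (M : ℕ → Ω → (Fin N → ℝ))
    (hM : ∀ t, M t = X t - μ[X t | 𝓕 (t - 1)])
    (t : ℕ) (ht : 1 ≤ t)
    (W : Ω → Fin K → ℝ)
    (hWmeas : StronglyMeasurable[𝓕 t] W)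
    (hWint : Integrable W μ)
    (hW : μ[W | 𝓕 (t - 1)] =ᵐ[μ] 0) :
    ∃ Z : Ω → Fin K → Fin N → ℝ,
      StronglyMeasurable[𝓕 (t - 1)] Z ∧
      (W =ᵐ[μ] fun ω i => ∑ j, Z ω i j * M t ω j) ∧
      ∀ Z' : Ω → Fin K → Fin N → ℝ,
        StronglyMeasurable[𝓕 (t - 1)] Z' →
        (W =ᵐ[μ] fun ω i => ∑ j, Z' ω i j * M t ω j) →
        (fun ω i => ∑ j, Z ω i j * M t ω j) =ᵐ[μ] (fun ω i => ∑ j, Z' ω i j * M t ω j) := by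
  classical
  have hm : 𝓕 (t - 1) ≤ m0 := 𝓕.le _
  -- basis vectors
  set e : Fin N → Fin N → ℝ := fun i j => if j = i then 1 else 0 with he
  have hXsum : ∀ ω, ∑ j, X t ω j = 1 := by
    intro ω
    obtain ⟨i, hi⟩ := hXval t ω
    rw [hi]
    simp
  set φ : Ω → Fin (t + 1) → Fin N → ℝ := fun ω s => X (s : ℕ) ω with hφ
  set ψ : Ω → Fin (t - 1 + 1) → Fin N → ℝ := fun ω s => X (s : ℕ) ω with hψ
  have hWm : Measurable[MeasurableSpace.comap φ inferInstance] W := by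
    have h := hWmeas.measurable
    rwa [h𝓕 t] at h
  have hWconst : ∀ ω ω', φ ω = φ ω' → W ω = W ω' := by
    intro ω ω' hωω'
    obtain ⟨A, -, hA⟩ := hWm (measurableSet_singleton (W ω))
    have h1 : ω ∈ φ ⁻¹' A := by rw [hA]; exact rfl
    have h2 : ω' ∈ φ ⁻¹' A := by
      simp only [Set.mem_preimage] at h1 ⊢; rwa [← hωω']
    rw [hA] at h2
    exact h2.symm
  set g : (Fin (t + 1) → Fin N → ℝ) → Fin K → ℝ :=
    fun p => if h : ∃ ω, φ ω = p then W h.choose else 0 with hg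
  have hgφ : ∀ ω, g (φ ω) = W ω := by
    intro ω
    have h : ∃ ω', φ ω' = φ ω := ⟨ω, rfl⟩
    rw [hg]
    simp only [dif_pos h]
    exact hWconst _ _ h.choose_spec
  set G : (Fin (t - 1 + 1) → Fin N → ℝ) → Fin K → Fin N → ℝ :=
    fun p i j => g (fun s => if hs : (s : ℕ) < t then p ⟨(s : ℕ), by omega⟩ else e j) i with hG
  set Z : Ω → Fin K → Fin N → ℝ := fun ω => G (ψ ω) with hZ
  -- measurability of Z
  have hR : Set.Finite {p : Fin (t - 1 + 1) → Fin N → ℝ | ∀ s, ∃ i, p s = e i} := by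
    apply Set.Finite.subset
      (Set.finite_range fun c : Fin (t - 1 + 1) → Fin N => fun s => e (c s))
    intro p hp
    exact ⟨fun s => (hp s).choose, funext fun s => ((hp s).choose_spec).symm⟩
  have hZmeas0 : Measurable[MeasurableSpace.comap ψ inferInstance] Z := by
    intro B hB
    refine ⟨{p | (∀ s, ∃ i, p s = e i) ∧ G p ∈ B}, ?_, ?_⟩
    · exact Set.Finite.measurableSet (hR.subset fun p hp => hp.1)
    · ext ω
      simp only [Set.mem_preimage, Set.mem_setOf_eq, hZ]
      constructor
      · rintro ⟨-, h2⟩; exact h2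
      · intro h
        exact ⟨fun s => hXval _ ω, h⟩
  have hZsm : StronglyMeasurable[𝓕 (t - 1)] Z := by
    rw [h𝓕 (t - 1)]
    exact hZmeas0.stronglyMeasurable
  -- pointwise identities
  have hZW : ∀ ω (j0 : Fin N), X t ω = e j0 → ∀ i, Z ω i j0 = W ω i := by
    intro ω j0 hj0 i
    rw [← hgφ ω]
    simp only [hZ, hG]
    congr 1
    funext s
    split_ifs with hs
    · rfl
    · have hst : (s : ℕ) = t := by have := s.isLt; omega
      show e j0 = φ ω s
      show e j0 = X (s : ℕ) ω
      rw [hst, hj0]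
  have hZX : ∀ ω i j, Z ω i j * X t ω j = W ω i * X t ω j := by
    intro ω i j
    obtain ⟨j0, hj0⟩ := hXval t ω
    by_cases hjj : j = j0
    · subst hjj
      rw [hZW ω j hj0 i]
    · have hz : X t ω j = 0 := by rw [hj0]; simp [hjj]
      rw [hz, mul_zero, mul_zero]
  have hsum1 : ∀ ω i, ∑ j, Z ω i j * X t ω j = W ω i := by
    intro ω i
    calc ∑ j, Z ω i j * X t ω j = ∑ j, W ω i * X t ω j :=
          Finset.sum_congr rfl fun j _ => hZX ω i j
      _ = W ω i * ∑ j, X t ω j := (Finset.mul_sum _ _ _).symm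
      _ = W ω i := by rw [hXsum ω, mul_one]
  -- integrability of components
  have hWi_int : ∀ i, Integrable (fun ω => W ω i) μ := fun i =>
    (ContinuousLinearMap.proj (R := ℝ) (φ := fun _ : Fin K => ℝ) i).integrable_comp hWint
  have hXj_int : ∀ j, Integrable (fun ω => X t ω j) μ := fun j =>
    (ContinuousLinearMap.proj (R := ℝ) (φ := fun _ : Fin N => ℝ) j).integrable_comp (hXint t)
  have hXj_bdd : ∀ ω j, ‖X t ω j‖ ≤ 1 := by
    intro ω j
    obtain ⟨j0, hj0⟩ := hXval t ω
    rw [hj0]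
    by_cases hjj : j = j0 <;> simp [hjj]
  have hWX_int : ∀ i j, Integrable (fun ω => W ω i * X t ω j) μ := by
    intro i j
    have h := Integrable.bdd_mul (hWi_int i) (hXj_int j).1 (ae_of_all _ fun ω => hXj_bdd ω j)
    simpa [mul_comm] using h
  -- the key a.e. identity
  have hkey : ∀ i, (fun ω => ∑ j, Z ω i j * (μ[X t | 𝓕 (t - 1)]) ω j) =ᵐ[μ] fun _ => (0 : ℝ) := by
    intro i
    have hj : ∀ j : Fin N, (fun ω => Z ω i j * (μ[X t | 𝓕 (t - 1)]) ω j)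
        =ᵐ[μ] μ[fun ω => W ω i * X t ω j | 𝓕 (t - 1)] := by
      intro j
      have hc : Continuous fun z : Fin K → Fin N → ℝ => z i j :=
        (continuous_apply j).comp (continuous_apply i)
      have hZij_sm : StronglyMeasurable[𝓕 (t - 1)] (fun ω => Z ω i j) :=
        hc.comp_stronglyMeasurable hZsm
      have hfg_eq : ((fun ω => Z ω i j) * fun ω => X t ω j) = fun ω => W ω i * X t ω j := by
        funext ω; exact hZX ω i j
      have h1 := condExp_mul_of_stronglyMeasurable_left hZij_sm (hfg_eq ▸ hWX_int i j) (hXj_int j)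
      rw [hfg_eq] at h1
      have h2 := condexp_eval_aux hm (X t) (hXint t) j
      calc (fun ω => Z ω i j * (μ[X t | 𝓕 (t - 1)]) ω j)
          =ᵐ[μ] (fun ω => Z ω i j) * μ[fun ω => X t ω j | 𝓕 (t - 1)] := by
            filter_upwards [h2] with ω hω
            exact congrArg (fun x => Z ω i j * x) hω
        _ =ᵐ[μ] μ[fun ω => W ω i * X t ω j | 𝓕 (t - 1)] := h1.symm
    have hall : ∀ᵐ ω ∂μ, ∀ j, Z ω i j * (μ[X t | 𝓕 (t - 1)]) ω j
        = (μ[fun ω => W ω i * X t ω j | 𝓕 (t - 1)]) ω := ae_all_iff.mpr fun j => hj j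
    have hs2 := (condExp_finset_sum (m := 𝓕 (t - 1)) (μ := μ) (s := Finset.univ)
      (f := fun j => fun ω => W ω i * X t ω j) (fun j _ => hWX_int i j)).symm
    have hsum_eq : (∑ j : Fin N, fun ω => W ω i * X t ω j) = fun ω => W ω i := by
      funext ω
      rw [Finset.sum_apply]
      calc ∑ j, W ω i * X t ω j = W ω i * ∑ j, X t ω j := (Finset.mul_sum _ _ _).symm
        _ = W ω i := by rw [hXsum ω, mul_one]
    rw [hsum_eq] at hs2
    have hs2' : (fun ω => ∑ j, (μ[fun ω => W ω i * X t ω j | 𝓕 (t - 1)]) ω)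
        = (∑ j : Fin N, μ[fun ω => W ω i * X t ω j | 𝓕 (t - 1)]) := by
      funext ω; rw [Finset.sum_apply]
    have hs3 := (condexp_eval_aux hm W hWint i).symm
    have hs4 : (fun ω => (μ[W | 𝓕 (t - 1)]) ω i) =ᵐ[μ] fun _ => (0 : ℝ) := by
      filter_upwards [hW] with ω hω
      show (μ[W | 𝓕 (t - 1)]) ω i = 0
      rw [hω]
      rfl
    calc (fun ω => ∑ j, Z ω i j * (μ[X t | 𝓕 (t - 1)]) ω j)
        =ᵐ[μ] fun ω => ∑ j, (μ[fun ω => W ω i * X t ω j | 𝓕 (t - 1)]) ω := by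
          filter_upwards [hall] with ω hω
          exact Finset.sum_congr rfl fun j _ => hω j
      _ =ᵐ[μ] μ[fun ω => W ω i | 𝓕 (t - 1)] := hs2' ▸ hs2
      _ =ᵐ[μ] fun ω => (μ[W | 𝓕 (t - 1)]) ω i := hs3
      _ =ᵐ[μ] fun _ => (0 : ℝ) := hs4
  have hmain : W =ᵐ[μ] fun ω i => ∑ j, Z ω i j * M t ω j := by
    have hall0 : ∀ᵐ ω ∂μ, ∀ i, ∑ j, Z ω i j * (μ[X t | 𝓕 (t - 1)]) ω j = 0 :=
      ae_all_iff.mpr fun i => hkey i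
    filter_upwards [hall0] with ω hω
    show W ω = fun i => ∑ j, Z ω i j * M t ω j
    funext i
    have hMt : ∀ j, M t ω j = X t ω j - (μ[X t | 𝓕 (t - 1)]) ω j := by
      intro j; rw [hM t]; rfl
    calc W ω i = ∑ j, Z ω i j * X t ω j - ∑ j, Z ω i j * (μ[X t | 𝓕 (t - 1)]) ω j := by
          rw [hsum1 ω i, hω i, sub_zero]
      _ = ∑ j, (Z ω i j * X t ω j - Z ω i j * (μ[X t | 𝓕 (t - 1)]) ω j) :=
          (Finset.sum_sub_distrib _ _).symm
      _ = ∑ j, Z ω i j * M t ω j := by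
          refine Finset.sum_congr rfl fun j _ => ?_
          rw [hMt j, mul_sub]
  exact ⟨Z, hZsm, hmain, fun Z' _ hZ' => hmain.symm.trans hZ'⟩
end

section
/- (Existence and uniqueness for discrete BSDEs) Suppose the driver F: Ω × {0,...,T} × R^K × R^{K×N} → R^K satisfies: (i) if Z^1 ∼_M Z^2 then F(ω,t,Y_t,Z^1_t) = F(ω,t,Y_t,Z^2_t) a.s. for all t and Y; (ii) for any Z and t, the map y ↦ y - F(ω,t,y,Z_t) is a.s. a bijection of R^K. Then for any essentially bounded F_T-measurable terminal condition Q in R^K, the backward equation Y_t - ∑_{t≤u<T} F(ω,u,Y_u,Z_u) + ∑_{t≤u<T} Z_u M_{u+1} = Q has an adapted solution (Y,Z), unique up to indistinguishability for Y and ∼_M-equivalence for Z. -/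
open MeasureTheory

namespace BSDEaux

noncomputable section

variable {Ω : Type*} {m0 : MeasurableSpace Ω} {N : ℕ}

/-- standard basis vector -/
def e (N : ℕ) (i : Fin N) : Fin N → ℝ := fun j => if j = i then 1 else 0

lemma e_inj {N : ℕ} {i j : Fin N} (h : e N i = e N j) : i = j := by
  by_contra hne
  have h1 := congrFun h i
  simp [e, hne] at h1

variable (X : ℕ → Ω → Fin N → ℝ)
variable (hXval : ∀ t ω, ∃ i : Fin N, X t ω = fun j => if j = i then (1 : ℝ) else 0)

/-- the index of the basis vector `X t ω` -/
def idx (t : ℕ) (ω : Ω) : Fin N := (hXval t ω).choose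

lemma X_eq_e (t : ℕ) (ω : Ω) : X t ω = e N (idx X hXval t ω) := (hXval t ω).choose_spec

/-- the path of the process up to time `t` -/
def path (t : ℕ) (ω : Ω) : Fin (t + 1) → Fin N := fun s => idx X hXval s ω

variable {𝓕 : Filtration ℕ m0}

lemma smeas_of_factors
    (h𝓕 : ∀ t, (𝓕 t : MeasurableSpace Ω)
      = MeasurableSpace.comap (fun ω (s : Fin (t + 1)) => X (s : ℕ) ω) inferInstance)
    {α : Type*} [MeasurableSpace α] [TopologicalSpace α]
    [TopologicalSpace.PseudoMetrizableSpace α]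
    [SecondCountableTopology α] [OpensMeasurableSpace α]
    (t : ℕ) {f : Ω → α} (g : (Fin (t + 1) → Fin N) → α)
    (hfg : ∀ ω, f ω = g (path X hXval t ω)) :
    StronglyMeasurable[𝓕 t] f := by
  refine Measurable.stronglyMeasurable (fun B hB => ?_)
  rw [h𝓕 t, MeasurableSpace.measurableSet_comap]
  refine ⟨⋃ p ∈ {p : Fin (t + 1) → Fin N | g p ∈ B}, {fun s => e N (p s)}, ?_, ?_⟩
  · exact MeasurableSet.biUnion (Set.to_countable _) fun p _ => measurableSet_singleton _
  · ext ω
    simp only [Set.mem_preimage, Set.mem_iUnion, Set.mem_singleton_iff, Set.mem_setOf_eq]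
    constructor
    · rintro ⟨p, hp, hXp⟩
      have hpeq : path X hXval t ω = p := by
        funext s
        exact e_inj ((X_eq_e X hXval s ω).symm.trans (congrFun hXp s))
      rw [hfg ω, hpeq]; exact hp
    · intro hf
      exact ⟨path X hXval t ω, by rwa [← hfg ω], funext fun s => X_eq_e X hXval s ω⟩

lemma eq_of_smeas
    (h𝓕 : ∀ t, (𝓕 t : MeasurableSpace Ω)
      = MeasurableSpace.comap (fun ω (s : Fin (t + 1)) => X (s : ℕ) ω) inferInstance)
    {α : Type*} [MeasurableSpace α] [MeasurableSingletonClass α] [TopologicalSpace α]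
    [TopologicalSpace.PseudoMetrizableSpace α] [BorelSpace α]
    (t : ℕ) {f : Ω → α} (hf : StronglyMeasurable[𝓕 t] f)
    {ω1 ω2 : Ω} (hpath : path X hXval t ω1 = path X hXval t ω2) :
    f ω1 = f ω2 := by
  have hm : MeasurableSet[𝓕 t] (f ⁻¹' {f ω1}) := hf.measurable (measurableSet_singleton _)
  rw [h𝓕 t, MeasurableSpace.measurableSet_comap] at hm
  obtain ⟨C, -, hC⟩ := hm
  have hπ : (fun s : Fin (t + 1) => X (s : ℕ) ω1) = fun s : Fin (t + 1) => X (s : ℕ) ω2 := by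
    funext s
    rw [X_eq_e X hXval s ω1, X_eq_e X hXval s ω2]
    exact congrArg (e N) (congrFun hpath s)
  have h1 : (fun s : Fin (t + 1) => X (s : ℕ) ω1) ∈ C := by
    have : ω1 ∈ (fun ω (s : Fin (t + 1)) => X (s : ℕ) ω) ⁻¹' C := by
      rw [hC]; exact rfl
    exact this
  have h2 : ω2 ∈ (fun ω (s : Fin (t + 1)) => X (s : ℕ) ω) ⁻¹' C := by
    show (fun s : Fin (t + 1) => X (s : ℕ) ω2) ∈ C
    rwa [← hπ]
  rw [hC] at h2
  exact h2.symm

lemma exists_factor [Nonempty Ω]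
    (h𝓕 : ∀ t, (𝓕 t : MeasurableSpace Ω)
      = MeasurableSpace.comap (fun ω (s : Fin (t + 1)) => X (s : ℕ) ω) inferInstance)
    {α : Type*} [MeasurableSpace α] [MeasurableSingletonClass α] [TopologicalSpace α]
    [TopologicalSpace.PseudoMetrizableSpace α] [BorelSpace α]
    (t : ℕ) {f : Ω → α} (hf : StronglyMeasurable[𝓕 t] f) :
    ∃ g : (Fin (t + 1) → Fin N) → α, ∀ ω, f ω = g (path X hXval t ω) := by
  classical
  refine ⟨fun p => if h : ∃ ω, path X hXval t ω = p then f h.choose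
    else f (Classical.arbitrary Ω), fun ω => ?_⟩
  have h : ∃ ω', path X hXval t ω' = path X hXval t ω := ⟨ω, rfl⟩
  simp only [dif_pos h]
  exact (eq_of_smeas X hXval h𝓕 t hf h.choose_spec).symm

lemma smeas_of_const_on_fibers [Nonempty Ω]
    (h𝓕 : ∀ t, (𝓕 t : MeasurableSpace Ω)
      = MeasurableSpace.comap (fun ω (s : Fin (t + 1)) => X (s : ℕ) ω) inferInstance)
    {α : Type*} [MeasurableSpace α] [MeasurableSingletonClass α] [TopologicalSpace α]
    [TopologicalSpace.PseudoMetrizableSpace α]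
    [SecondCountableTopology α] [OpensMeasurableSpace α]
    (t : ℕ) {f : Ω → α}
    (hpc : ∀ ω1 ω2, path X hXval t ω1 = path X hXval t ω2 → f ω1 = f ω2) :
    StronglyMeasurable[𝓕 t] f := by
  classical
  refine smeas_of_factors X hXval h𝓕 t
    (fun p => if h : ∃ ω, path X hXval t ω = p then f h.choose
      else f (Classical.arbitrary Ω)) (fun ω => ?_)
  have h : ∃ ω', path X hXval t ω' = path X hXval t ω := ⟨ω, rfl⟩
  simp only [dif_pos h]
  exact (hpc _ _ h.choose_spec).symm

include hXval in
lemma bounded_of_smeas [Nonempty Ω]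
    (h𝓕 : ∀ t, (𝓕 t : MeasurableSpace Ω)
      = MeasurableSpace.comap (fun ω (s : Fin (t + 1)) => X (s : ℕ) ω) inferInstance)
    {α : Type*} [NormedAddCommGroup α] [MeasurableSpace α] [BorelSpace α]
    (t : ℕ) {f : Ω → α} (hf : StronglyMeasurable[𝓕 t] f) :
    ∃ C, ∀ ω, ‖f ω‖ ≤ C := by
  obtain ⟨g, hg⟩ := exists_factor X hXval h𝓕 t hf
  refine ⟨∑ p : Fin (t + 1) → Fin N, ‖g p‖, fun ω => ?_⟩
  rw [hg ω]
  exact Finset.single_le_sum (f := fun p => ‖g p‖) (fun p _ => norm_nonneg _)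
    (Finset.mem_univ _)

include hXval in
lemma integrable_of_smeas [Nonempty Ω]
    (h𝓕 : ∀ t, (𝓕 t : MeasurableSpace Ω)
      = MeasurableSpace.comap (fun ω (s : Fin (t + 1)) => X (s : ℕ) ω) inferInstance)
    {μ : Measure Ω} [IsFiniteMeasure μ]
    {α : Type*} [NormedAddCommGroup α] [MeasurableSpace α] [BorelSpace α]
    (t : ℕ) {f : Ω → α} (hf : StronglyMeasurable[𝓕 t] f) :
    Integrable f μ := by
  obtain ⟨C, hC⟩ := bounded_of_smeas X hXval h𝓕 t hf
  exact ⟨(hf.mono (𝓕.le t)).aestronglyMeasurable,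
    HasFiniteIntegral.of_bounded (Filter.Eventually.of_forall hC)⟩

lemma condexp_eval {K : ℕ} (μ : Measure Ω) [IsFiniteMeasure μ] (𝓕 : Filtration ℕ m0) (t : ℕ)
    {f : Ω → Fin K → ℝ} (hf : Integrable f μ) (i : Fin K) :
    (fun ω => (μ[f|𝓕 t]) ω i) =ᵐ[μ] μ[fun ω => f ω i|𝓕 t] := by
  haveI : SigmaFinite (μ.trim (𝓕.le t)) := by infer_instance
  have hL : ∀ (h : Ω → Fin K → ℝ), Integrable h μ → Integrable (fun ω => h ω i) μ := by
    intro h hh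
    exact (ContinuousLinearMap.proj (R := ℝ) (φ := fun _ : Fin K => ℝ) i).integrable_comp hh
  refine ae_eq_condExp_of_forall_setIntegral_eq (𝓕.le t) (hL f hf)
    (fun s hs hμs => (hL _ integrable_condExp).integrableOn)
    (fun s hs hμs => ?_)
    ((continuous_apply i).comp_stronglyMeasurable
      (stronglyMeasurable_condExp (f := f) (μ := μ) (m := 𝓕 t))).aestronglyMeasurable
  calc ∫ ω in s, (μ[f|𝓕 t]) ω i ∂μ
      = (ContinuousLinearMap.proj (R := ℝ) (φ := fun _ : Fin K => ℝ) i)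
        (∫ ω in s, (μ[f|𝓕 t]) ω ∂μ) :=
        ContinuousLinearMap.integral_comp_comm (ContinuousLinearMap.proj (R := ℝ) (φ := fun _ : Fin K => ℝ) i) ((integrable_condExp (f := f) (μ := μ) (m := 𝓕 t)).integrableOn)
    _ = (ContinuousLinearMap.proj (R := ℝ) (φ := fun _ : Fin K => ℝ) i)
        (∫ ω in s, f ω ∂μ) := by rw [setIntegral_condExp (𝓕.le t) hf hs]
    _ = ∫ ω in s, f ω i ∂μ :=
        (ContinuousLinearMap.integral_comp_comm (ContinuousLinearMap.proj (R := ℝ) (φ := fun _ : Fin K => ℝ) i) hf.integrableOn).symm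

end

end BSDEaux

namespace BSDEaux

lemma rep {Ω : Type*} [Nonempty Ω] {m0 : MeasurableSpace Ω} {N K : ℕ}
    (μ : Measure Ω) [IsFiniteMeasure μ] (𝓕 : Filtration ℕ m0)
    (X : ℕ → Ω → Fin N → ℝ)
    (hXval : ∀ t ω, ∃ i : Fin N, X t ω = fun j => if j = i then (1 : ℝ) else 0)
    (h𝓕 : ∀ t, (𝓕 t : MeasurableSpace Ω)
      = MeasurableSpace.comap (fun ω (s : Fin (t + 1)) => X (s : ℕ) ω) inferInstance)
    (hXint : ∀ t, Integrable (X t) μ)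
    (M : ℕ → Ω → Fin N → ℝ) (hM : ∀ t, M t = X t - μ[X t | 𝓕 (t - 1)])
    (t : ℕ) (H : Ω → Fin K → ℝ) (hH : StronglyMeasurable[𝓕 (t + 1)] H) :
    ∃ Z : Ω → Fin K → Fin N → ℝ, StronglyMeasurable[𝓕 t] Z ∧
      ∀ᵐ ω ∂μ, ∀ i, ∑ j, Z ω i j * M (t + 1) ω j
        = H ω i - (μ[fun ω' => H ω' i|𝓕 t]) ω := by
  classical
  obtain ⟨g, hg⟩ := exists_factor X hXval h𝓕 (t + 1) hH
  set ex : (Fin (t + 1) → Fin N) → Fin N → (Fin (t + 2) → Fin N) :=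
    fun p j s => if h : (s : ℕ) < t + 1 then p ⟨s, h⟩ else j with hex
  set Zf : Ω → Fin K → Fin N → ℝ := fun ω i j => g (ex (path X hXval t ω) j) i with hZf
  have hZsm : StronglyMeasurable[𝓕 t] Zf :=
    smeas_of_factors X hXval h𝓕 t (fun p i j => g (ex p j) i) (fun ω => rfl)
  have hpathsucc : ∀ ω, path X hXval (t + 1) ω
      = ex (path X hXval t ω) (idx X hXval (t + 1) ω) := by
    intro ω; funext s
    by_cases h : (s : ℕ) < t + 1
    · simp only [hex]
      rw [dif_pos h]
      rfl
    · have hlt := s.isLt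
      have hs : (s : ℕ) = t + 1 := by omega
      simp only [hex]
      rw [dif_neg h]
      show idx X hXval (s : ℕ) ω = idx X hXval (t + 1) ω
      rw [hs]
  have hptX : ∀ ω i, ∑ j, Zf ω i j * X (t + 1) ω j = H ω i := by
    intro ω i
    rw [X_eq_e X hXval (t + 1) ω]
    have h1 : ∀ j, Zf ω i j * e N (idx X hXval (t + 1) ω) j
        = if j = idx X hXval (t + 1) ω then Zf ω i j else 0 := by
      intro j; simp [e, mul_ite]
    rw [Finset.sum_congr rfl fun j _ => h1 j]
    rw [Finset.sum_ite_eq' Finset.univ (idx X hXval (t + 1) ω) (fun j => Zf ω i j)]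
    rw [if_pos (Finset.mem_univ _)]
    show g (ex (path X hXval t ω) (idx X hXval (t + 1) ω)) i = H ω i
    rw [← hpathsucc ω, hg ω]
  obtain ⟨C, hC⟩ := bounded_of_smeas X hXval h𝓕 t hZsm
  have hZc : ∀ i j, StronglyMeasurable[𝓕 t] (fun ω => Zf ω i j) := by
    intro i j
    exact smeas_of_factors X hXval h𝓕 t (fun p => g (ex p j) i) (fun ω => rfl)
  have hZcb : ∀ i j ω, ‖Zf ω i j‖ ≤ C := by
    intro i j ω
    calc ‖Zf ω i j‖ ≤ ‖Zf ω i‖ := norm_le_pi_norm (Zf ω i) j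
      _ ≤ ‖Zf ω‖ := norm_le_pi_norm (Zf ω) i
      _ ≤ C := hC ω
  have hXj : ∀ j, Integrable (fun ω => X (t + 1) ω j) μ := fun j =>
    (ContinuousLinearMap.proj (R := ℝ) (φ := fun _ : Fin N => ℝ) j).integrable_comp
      (hXint (t + 1))
  have hZXint : ∀ i j, Integrable (fun ω => Zf ω i j * X (t + 1) ω j) μ := fun i j =>
    Integrable.bdd_mul (hXj j) ((hZc i j).mono (𝓕.le t)).aestronglyMeasurable
      (Filter.Eventually.of_forall fun ω => hZcb i j ω)
  have hMpt : ∀ ω j, M (t + 1) ω j = X (t + 1) ω j - (μ[X (t + 1)|𝓕 t]) ω j := by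
    intro ω j
    have h1 := hM (t + 1)
    rw [Nat.add_sub_cancel] at h1
    rw [h1]; rfl
  refine ⟨Zf, hZsm, ?_⟩
  rw [ae_all_iff]
  intro i
  have hE1 : μ[fun ω => H ω i|𝓕 t]
      =ᵐ[μ] fun ω => ∑ j, Zf ω i j * (μ[X (t + 1)|𝓕 t]) ω j := by
    have hfe : (fun ω => H ω i) = ∑ j : Fin N, fun ω => Zf ω i j * X (t + 1) ω j := by
      funext ω
      rw [Finset.sum_apply]
      exact (hptX ω i).symm
    rw [hfe]
    refine (condExp_finsetSum (fun j _ => hZXint i j) _).trans ?_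
    have hj : ∀ j : Fin N, μ[fun ω => Zf ω i j * X (t + 1) ω j|𝓕 t]
        =ᵐ[μ] fun ω => Zf ω i j * (μ[X (t + 1)|𝓕 t]) ω j := by
      intro j
      have h0 : (fun ω => Zf ω i j * X (t + 1) ω j)
          = (fun ω => Zf ω i j) * (fun ω => X (t + 1) ω j) := rfl
      rw [h0]
      refine (condExp_mul_of_stronglyMeasurable_left (hZc i j) (by rw [← h0]; exact hZXint i j)
        (hXj j)).trans ?_
      have hce := condexp_eval μ 𝓕 t (hXint (t + 1)) j
      filter_upwards [hce] with ω hω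
      show Zf ω i j * (μ[fun ω' => X (t + 1) ω' j|𝓕 t]) ω
        = Zf ω i j * (μ[X (t + 1)|𝓕 t]) ω j
      rw [← hω]
    have hall : ∀ᵐ ω ∂μ, ∀ j : Fin N,
        (μ[fun ω' => Zf ω' i j * X (t + 1) ω' j|𝓕 t]) ω
          = Zf ω i j * (μ[X (t + 1)|𝓕 t]) ω j := ae_all_iff.2 fun j => hj j
    filter_upwards [hall] with ω hω
    rw [Finset.sum_apply]
    exact Finset.sum_congr rfl fun j _ => hω j
  filter_upwards [hE1] with ω hω
  rw [hω, ← hptX ω i, ← Finset.sum_sub_distrib]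
  exact Finset.sum_congr rfl fun j _ => by rw [hMpt ω j]; ring

end BSDEaux

namespace BSDEaux

lemma smeas_comp {Ω : Type*} [Nonempty Ω] {m0 : MeasurableSpace Ω} {N : ℕ}
    (X : ℕ → Ω → Fin N → ℝ)
    (hXval : ∀ t ω, ∃ i : Fin N, X t ω = fun j => if j = i then (1 : ℝ) else 0)
    {𝓕 : Filtration ℕ m0}
    (h𝓕 : ∀ t, (𝓕 t : MeasurableSpace Ω)
      = MeasurableSpace.comap (fun ω (s : Fin (t + 1)) => X (s : ℕ) ω) inferInstance)
    {α β : Type*} [MeasurableSpace α] [MeasurableSingletonClass α] [TopologicalSpace α]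
    [TopologicalSpace.PseudoMetrizableSpace α] [BorelSpace α]
    [MeasurableSpace β] [MeasurableSingletonClass β] [TopologicalSpace β]
    [TopologicalSpace.PseudoMetrizableSpace β]
    [SecondCountableTopology β] [OpensMeasurableSpace β]
    (t : ℕ) {f : Ω → α} (hf : StronglyMeasurable[𝓕 t] f) (φ : α → β) :
    StronglyMeasurable[𝓕 t] (fun ω => φ (f ω)) :=
  smeas_of_const_on_fibers X hXval h𝓕 t
    (fun ω1 ω2 hp => by rw [eq_of_smeas X hXval h𝓕 t hf hp])

end BSDEaux


open BSDEaux

/-- existence and uniqueness of solutions to the discrete BSDE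
`Y t - ∑_{t ≤ u < T} F(ω,u,Y u,Z u) + ∑_{t ≤ u < T} Z u • M (u+1) = Q` under
(i) invariance of `F` under `∼_M` in `Z`, and (ii) a.s. bijectivity of
`y ↦ y - F(ω,t,y,z)`. -/
theorem bsde_existence_uniqueness
    {Ω : Type*} {m0 : MeasurableSpace Ω} {μ : Measure Ω} [IsProbabilityMeasure μ]
    {N K T : ℕ} (𝓕 : Filtration ℕ m0)
    (X : ℕ → Ω → (Fin N → ℝ))
    (hXval : ∀ t ω, ∃ i : Fin N, X t ω = fun j => if j = i then (1 : ℝ) else 0)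
    (h𝓕 : ∀ t, (𝓕 t : MeasurableSpace Ω)
      = MeasurableSpace.comap (fun ω (s : Fin (t + 1)) => X (s : ℕ) ω) inferInstance)
    (hXint : ∀ t, Integrable (X t) μ)
    (M : ℕ → Ω → (Fin N → ℝ))
    (hM : ∀ t, M t = X t - μ[X t | 𝓕 (t - 1)])
    (F : Ω → ℕ → (Fin K → ℝ) → (Fin K → Fin N → ℝ) → (Fin K → ℝ))
    (hFmeas : ∀ t < T, ∀ (Y : Ω → Fin K → ℝ) (Z : Ω → Fin K → Fin N → ℝ),
      StronglyMeasurable[𝓕 t] Y → StronglyMeasurable[𝓕 t] Z →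
      StronglyMeasurable[𝓕 t] (fun ω => F ω t (Y ω) (Z ω)))
    -- Assumption (i): invariance of F under ∼_M equivalent strategies
    (hFinv : ∀ t < T, ∀ (Y : Ω → Fin K → ℝ) (Z1 Z2 : Ω → Fin K → Fin N → ℝ),
      (∀ᵐ ω ∂μ, (fun i => ∑ j, Z1 ω i j * M (t + 1) ω j)
          = (fun i => ∑ j, Z2 ω i j * M (t + 1) ω j)) →
      ∀ᵐ ω ∂μ, F ω t (Y ω) (Z1 ω) = F ω t (Y ω) (Z2 ω))
    -- Assumption (ii): a.s. bijectivity of y ↦ y - F(ω,t,y,z)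
    (hFbij : ∀ t < T, ∀ Z : Ω → Fin K → Fin N → ℝ,
      ∀ᵐ ω ∂μ, Function.Bijective (fun y : Fin K → ℝ => y - F ω t y (Z ω)))
    (Q : Ω → Fin K → ℝ)
    (hQmeas : StronglyMeasurable[𝓕 T] Q)
    (hQbdd : ∃ C, ∀ ω, ‖Q ω‖ ≤ C) :
    ∃ (Y : ℕ → Ω → Fin K → ℝ) (Z : ℕ → Ω → Fin K → Fin N → ℝ),
      (∀ t, StronglyMeasurable[𝓕 t] (Y t)) ∧
      (∀ t, StronglyMeasurable[𝓕 t] (Z t)) ∧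
      (∀ t ≤ T, ∀ᵐ ω ∂μ,
        Y t ω - ∑ u ∈ Finset.Ico t T, F ω u (Y u ω) (Z u ω)
          + ∑ u ∈ Finset.Ico t T, (fun i => ∑ j, Z u ω i j * M (u + 1) ω j) = Q ω) ∧
      ∀ (Y' : ℕ → Ω → Fin K → ℝ) (Z' : ℕ → Ω → Fin K → Fin N → ℝ),
        (∀ t, StronglyMeasurable[𝓕 t] (Y' t)) →
        (∀ t, StronglyMeasurable[𝓕 t] (Z' t)) →
        (∀ t ≤ T, ∀ᵐ ω ∂μ,
          Y' t ω - ∑ u ∈ Finset.Ico t T, F ω u (Y' u ω) (Z' u ω)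
            + ∑ u ∈ Finset.Ico t T, (fun i => ∑ j, Z' u ω i j * M (u + 1) ω j) = Q ω) →
        (∀ t ≤ T, Y t =ᵐ[μ] Y' t) ∧
        (∀ u < T, ∀ᵐ ω ∂μ,
          (fun i => ∑ j, Z u ω i j * M (u + 1) ω j)
            = (fun i => ∑ j, Z' u ω i j * M (u + 1) ω j)) := by
  classical
  haveI hne : Nonempty Ω := by
    rcases isEmpty_or_nonempty Ω with h | h
    · exfalso
      have h1 : μ Set.univ = 1 := measure_univ
      rw [Set.univ_eq_empty_iff.2 h, measure_empty] at h1
      exact zero_ne_one h1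
    · exact h
  -- choice of representing strategies
  have hrep : ∀ t (H : Ω → Fin K → ℝ), ∃ Z : Ω → Fin K → Fin N → ℝ,
      StronglyMeasurable[𝓕 (t + 1)] H →
      (StronglyMeasurable[𝓕 t] Z ∧ ∀ᵐ ω ∂μ, ∀ i,
        ∑ j, Z ω i j * M (t + 1) ω j = H ω i - (μ[fun ω' => H ω' i|𝓕 t]) ω) := by
    intro t H
    by_cases hH : StronglyMeasurable[𝓕 (t + 1)] H
    · obtain ⟨Z, h1, h2⟩ := rep μ 𝓕 X hXval h𝓕 hXint M hM t H hH
      exact ⟨Z, fun _ => ⟨h1, h2⟩⟩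
    · exact ⟨0, fun h => absurd h hH⟩
  choose R hR using hrep
  -- the backward recursion
  obtain ⟨W, hW0, hWs⟩ : ∃ W : ℕ → Ω → Fin K → ℝ, W 0 = Q ∧ ∀ n, W (n + 1) = fun ω =>
      Function.invFun
        (fun y : Fin K → ℝ => y - F ω (T - (n + 1)) y (R (T - (n + 1)) (W n) ω))
        (fun i => (μ[fun ω' => W n ω' i|𝓕 (T - (n + 1))]) ω) :=
    ⟨fun n => Nat.rec Q (fun m prev => fun ω =>
      Function.invFun
        (fun y : Fin K → ℝ => y - F ω (T - (m + 1)) y (R (T - (m + 1)) prev ω))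
        (fun i => (μ[fun ω' => prev ω' i|𝓕 (T - (m + 1))]) ω)) n, rfl, fun n => rfl⟩
  obtain ⟨Y, hYlt, hYge⟩ : ∃ Y : ℕ → Ω → Fin K → ℝ,
      (∀ t, t < T → Y t = W (T - t)) ∧ (∀ t, T ≤ t → Y t = Q) :=
    ⟨fun t => if h : t < T then W (T - t) else Q, fun t ht => dif_pos ht,
      fun t ht => dif_neg (Nat.not_lt.2 ht)⟩
  obtain ⟨Z, hZlt, hZge⟩ : ∃ Z : ℕ → Ω → Fin K → Fin N → ℝ,
      (∀ t, t < T → Z t = R t (W (T - (t + 1)))) ∧ (∀ t, T ≤ t → Z t = 0) :=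
    ⟨fun t => if h : t < T then R t (W (T - (t + 1))) else 0, fun t ht => dif_pos ht,
      fun t ht => dif_neg (Nat.not_lt.2 ht)⟩
  -- measurability of one backward step
  have hstepsm : ∀ t, t < T → ∀ H : Ω → Fin K → ℝ, StronglyMeasurable[𝓕 (t + 1)] H →
      StronglyMeasurable[𝓕 t] (fun ω => Function.invFun
        (fun y : Fin K → ℝ => y - F ω t y (R t H ω))
        (fun i => (μ[fun ω' => H ω' i|𝓕 t]) ω)) := by
    intro t ht H hH
    obtain ⟨hZsm', -⟩ := hR t H hH
    have hGsm : StronglyMeasurable[𝓕 t] (fun ω => (fun i => (μ[fun ω' => H ω' i|𝓕 t]) ω)) := by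
      refine smeas_of_const_on_fibers X hXval h𝓕 t (fun ω1 ω2 hp => ?_)
      funext i
      exact eq_of_smeas X hXval h𝓕 t
        (stronglyMeasurable_condExp (f := fun ω' => H ω' i) (m := 𝓕 t)) hp
    refine smeas_of_const_on_fibers X hXval h𝓕 t (fun ω1 ω2 hp => ?_)
    have hZeq : R t H ω1 = R t H ω2 := eq_of_smeas X hXval h𝓕 t hZsm' hp
    have hGeq : (fun i => (μ[fun ω' => H ω' i|𝓕 t]) ω1)
        = fun i => (μ[fun ω' => H ω' i|𝓕 t]) ω2 := eq_of_smeas X hXval h𝓕 t hGsm hp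
    have hFeq : ∀ y, F ω1 t y (R t H ω1) = F ω2 t y (R t H ω2) := by
      intro y
      have hsm := hFmeas t ht (fun _ => y) (R t H) stronglyMeasurable_const hZsm'
      exact eq_of_smeas X hXval h𝓕 t hsm hp
    show Function.invFun (fun y : Fin K → ℝ => y - F ω1 t y (R t H ω1))
        (fun i => (μ[fun ω' => H ω' i|𝓕 t]) ω1)
      = Function.invFun (fun y : Fin K → ℝ => y - F ω2 t y (R t H ω2))
        (fun i => (μ[fun ω' => H ω' i|𝓕 t]) ω2)
    rw [hGeq]
    have hfn : (fun y : Fin K → ℝ => y - F ω1 t y (R t H ω1))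
        = fun y => y - F ω2 t y (R t H ω2) := by
      funext y; rw [hFeq y]
    rw [hfn]
  -- measurability of the recursion
  have hWsm : ∀ n, n ≤ T → StronglyMeasurable[𝓕 (T - n)] (W n) := by
    intro n
    induction n with
    | zero => intro _; rw [Nat.sub_zero, hW0]; exact hQmeas
    | succ n ih =>
      intro hn
      have h1 : T - n = (T - (n + 1)) + 1 := by omega
      have h2 := ih (by omega)
      rw [h1] at h2
      rw [hWs n]
      exact hstepsm (T - (n + 1)) (by omega) (W n) h2
  have hYsm : ∀ t, StronglyMeasurable[𝓕 t] (Y t) := by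
    intro t
    by_cases ht : t < T
    · rw [hYlt t ht]
      have h2 := hWsm (T - t) (by omega)
      have h3 : T - (T - t) = t := by omega
      rwa [h3] at h2
    · rw [hYge t (by omega)]
      exact hQmeas.mono (𝓕.mono (by omega))
  have hZsm : ∀ t, StronglyMeasurable[𝓕 t] (Z t) := by
    intro t
    by_cases ht : t < T
    · rw [hZlt t ht]
      have hHsm : StronglyMeasurable[𝓕 (t + 1)] (W (T - (t + 1))) := by
        have h2 := hWsm (T - (t + 1)) (by omega)
        have h3 : T - (T - (t + 1)) = t + 1 := by omega
        rwa [h3] at h2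
      exact (hR t (W (T - (t + 1))) hHsm).1
    · rw [hZge t (by omega)]
      exact stronglyMeasurable_const
  -- the one-step equation for the constructed solution
  have hstepeq : ∀ t, t < T → ∀ᵐ ω ∂μ,
      Y t ω - F ω t (Y t ω) (Z t ω) + (fun i => ∑ j, Z t ω i j * M (t + 1) ω j)
        = Y (t + 1) ω := by
    intro t ht
    set n := T - (t + 1) with hn
    have hYW1 : Y (t + 1) = W n := by
      by_cases h : t + 1 < T
      · rw [hYlt (t + 1) h]
      · rw [hYge (t + 1) (by omega)]
        have h0 : n = 0 := by omega
        rw [h0, hW0]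
    have hHsm : StronglyMeasurable[𝓕 (t + 1)] (W n) := by
      have h2 := hWsm n (by omega)
      have h3 : T - n = t + 1 := by omega
      rwa [h3] at h2
    obtain ⟨hZsm', hrepeq⟩ := hR t (W n) hHsm
    have hZt : Z t = R t (W n) := hZlt t ht
    have hYt : Y t = fun ω => Function.invFun
        (fun y : Fin K → ℝ => y - F ω t y (R t (W n) ω))
        (fun i => (μ[fun ω' => W n ω' i|𝓕 t]) ω) := by
      rw [hYlt t ht]
      have h1 : T - t = n + 1 := by omega
      have h2 : T - (n + 1) = t := by omega
      rw [h1, hWs n, h2]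
    filter_upwards [hrepeq, hFbij t ht (R t (W n))] with ω hω hbij
    have e1 : Y t ω - F ω t (Y t ω) (Z t ω)
        = fun i => (μ[fun ω' => W n ω' i|𝓕 t]) ω := by
      rw [hYt, hZt]
      exact Function.rightInverse_invFun hbij.surjective _
    have e2 : (fun i => ∑ j, Z t ω i j * M (t + 1) ω j)
        = fun i => W n ω i - (μ[fun ω' => W n ω' i|𝓕 t]) ω := by
      rw [hZt]; funext i; exact hω i
    rw [e1, e2, hYW1]
    funext i
    show (μ[fun ω' => W n ω' i|𝓕 t]) ω + (W n ω i - (μ[fun ω' => W n ω' i|𝓕 t]) ω)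
      = W n ω i
    ring
  -- the full equation for the constructed solution
  have heqn : ∀ k t, t + k = T → ∀ᵐ ω ∂μ,
      Y t ω - ∑ u ∈ Finset.Ico t T, F ω u (Y u ω) (Z u ω)
        + ∑ u ∈ Finset.Ico t T, (fun i => ∑ j, Z u ω i j * M (u + 1) ω j) = Q ω := by
    intro k
    induction k with
    | zero =>
      intro t htk
      have h0 : t = T := by omega
      subst h0
      simp only [Finset.Ico_self, Finset.sum_empty, sub_zero, add_zero]
      have h1 : Y t = Q := hYge t le_rfl
      exact Filter.Eventually.of_forall fun ω => by rw [h1]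
    | succ k ih =>
      intro t htk
      have ht : t < T := by omega
      filter_upwards [ih (t + 1) (by omega), hstepeq t ht] with ω h1 h2
      rw [Finset.sum_eq_sum_Ico_succ_bot ht, Finset.sum_eq_sum_Ico_succ_bot ht]
      linear_combination h2 + h1
  have hfull : ∀ t ≤ T, ∀ᵐ ω ∂μ,
      Y t ω - ∑ u ∈ Finset.Ico t T, F ω u (Y u ω) (Z u ω)
        + ∑ u ∈ Finset.Ico t T, (fun i => ∑ j, Z u ω i j * M (u + 1) ω j) = Q ω :=
    fun t ht => heqn (T - t) t (by omega)
  -- preliminary facts about M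
  have hMfun : ∀ u j, (fun ω => M (u + 1) ω j)
      = (fun ω => X (u + 1) ω j) - fun ω => (μ[X (u + 1)|𝓕 u]) ω j := by
    intro u j; funext ω
    have h1 := hM (u + 1)
    rw [Nat.add_sub_cancel] at h1
    rw [h1]; rfl
  have hXj : ∀ u j, Integrable (fun ω => X u ω j) μ := fun u j =>
    (ContinuousLinearMap.proj (R := ℝ) (φ := fun _ : Fin N => ℝ) j).integrable_comp (hXint u)
  have hCj : ∀ u j, Integrable (fun ω => (μ[X (u + 1)|𝓕 u]) ω j) μ := fun u j =>
    (ContinuousLinearMap.proj (R := ℝ) (φ := fun _ : Fin N => ℝ) j).integrable_comp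
      (integrable_condExp (f := X (u + 1)) (m := 𝓕 u))
  have hMj_int : ∀ u j, Integrable (fun ω => M (u + 1) ω j) μ := by
    intro u j; rw [hMfun u j]; exact (hXj (u + 1) j).sub (hCj u j)
  have hMzero : ∀ u j, μ[fun ω => M (u + 1) ω j|𝓕 u] =ᵐ[μ] 0 := by
    intro u j
    rw [hMfun u j]
    refine (condExp_sub (hXj (u + 1) j) (hCj u j) _).trans ?_
    have h2 : μ[fun ω => (μ[X (u + 1)|𝓕 u]) ω j|𝓕 u] = fun ω => (μ[X (u + 1)|𝓕 u]) ω j :=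
      condExp_of_stronglyMeasurable (𝓕.le u)
        ((continuous_apply j).comp_stronglyMeasurable stronglyMeasurable_condExp) (hCj u j)
    rw [h2]
    filter_upwards [condexp_eval μ 𝓕 u (hXint (u + 1)) j] with ω hω
    show (μ[fun ω' => X (u + 1) ω' j|𝓕 u]) ω - (μ[X (u + 1)|𝓕 u]) ω j = (0 : Ω → ℝ) ω
    rw [← hω]
    simp
  -- conditional expectation of gains processes vanishes
  have hUint : ∀ u (Zc : Ω → Fin K → Fin N → ℝ), StronglyMeasurable[𝓕 u] Zc → ∀ i,
      Integrable (fun ω => ∑ j, Zc ω i j * M (u + 1) ω j) μ := by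
    intro u Zc hZc i
    obtain ⟨C, hC⟩ := bounded_of_smeas X hXval h𝓕 u hZc
    have hfe : (fun ω => ∑ j, Zc ω i j * M (u + 1) ω j)
        = ∑ j : Fin N, fun ω => Zc ω i j * M (u + 1) ω j := by
      funext ω; rw [Finset.sum_apply]
    rw [hfe]
    refine integrable_finset_sum' _ fun j _ => ?_
    refine Integrable.bdd_mul (c := C) (hMj_int u j)
      (((smeas_comp X hXval h𝓕 u hZc (fun z => z i j)).mono (𝓕.le u)).aestronglyMeasurable)
      (Filter.Eventually.of_forall fun ω => ?_)
    calc ‖Zc ω i j‖ ≤ ‖Zc ω i‖ := norm_le_pi_norm (Zc ω i) j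
      _ ≤ ‖Zc ω‖ := norm_le_pi_norm (Zc ω) i
      _ ≤ C := hC ω
  have hcondU : ∀ u (Zc : Ω → Fin K → Fin N → ℝ), StronglyMeasurable[𝓕 u] Zc → ∀ i,
      μ[fun ω => ∑ j, Zc ω i j * M (u + 1) ω j|𝓕 u] =ᵐ[μ] 0 := by
    intro u Zc hZc i
    obtain ⟨C, hC⟩ := bounded_of_smeas X hXval h𝓕 u hZc
    have hZcomp : ∀ j, StronglyMeasurable[𝓕 u] (fun ω => Zc ω i j) := fun j =>
      smeas_comp X hXval h𝓕 u hZc (fun z => z i j)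
    have hint : ∀ j : Fin N, Integrable (fun ω => Zc ω i j * M (u + 1) ω j) μ := by
      intro j
      refine Integrable.bdd_mul (c := C) (hMj_int u j)
        (((hZcomp j).mono (𝓕.le u)).aestronglyMeasurable) (Filter.Eventually.of_forall fun ω => ?_)
      calc ‖Zc ω i j‖ ≤ ‖Zc ω i‖ := norm_le_pi_norm (Zc ω i) j
        _ ≤ ‖Zc ω‖ := norm_le_pi_norm (Zc ω) i
        _ ≤ C := hC ω
    have hfe : (fun ω => ∑ j, Zc ω i j * M (u + 1) ω j)
        = ∑ j : Fin N, fun ω => Zc ω i j * M (u + 1) ω j := by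
      funext ω; rw [Finset.sum_apply]
    rw [hfe]
    refine (condExp_finsetSum (fun j _ => hint j) _).trans ?_
    have hj : ∀ j : Fin N, μ[fun ω => Zc ω i j * M (u + 1) ω j|𝓕 u] =ᵐ[μ] 0 := by
      intro j
      have h0 : (fun ω => Zc ω i j * M (u + 1) ω j)
          = (fun ω => Zc ω i j) * fun ω => M (u + 1) ω j := rfl
      rw [h0]
      refine (condExp_mul_of_stronglyMeasurable_left (hZcomp j) (by rw [← h0]; exact hint j)
        (hMj_int u j)).trans ?_
      filter_upwards [hMzero u j] with ω hω
      show Zc ω i j * (μ[fun ω' => M (u + 1) ω' j|𝓕 u]) ω = (0 : Ω → ℝ) ω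
      rw [hω]
      simp
    have hall : ∀ᵐ ω ∂μ, ∀ j : Fin N,
        (μ[fun ω' => Zc ω' i j * M (u + 1) ω' j|𝓕 u]) ω = 0 :=
      ae_all_iff.2 fun j => (hj j).mono fun ω h => by simpa using h
    filter_upwards [hall] with ω hω
    simp only [Finset.sum_apply, Pi.zero_apply]
    exact Finset.sum_eq_zero fun j _ => hω j
  -- the key identification step for uniqueness
  have hkey : ∀ u, u < T →
      ∀ (Ya : Ω → Fin K → ℝ) (Za : Ω → Fin K → Fin N → ℝ)
        (Yb : Ω → Fin K → ℝ) (Zb : Ω → Fin K → Fin N → ℝ),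
      StronglyMeasurable[𝓕 u] Ya → StronglyMeasurable[𝓕 u] Za →
      StronglyMeasurable[𝓕 u] Yb → StronglyMeasurable[𝓕 u] Zb →
      (∀ᵐ ω ∂μ, (Ya ω - F ω u (Ya ω) (Za ω) + fun i => ∑ j, Za ω i j * M (u + 1) ω j)
        = (Yb ω - F ω u (Yb ω) (Zb ω) + fun i => ∑ j, Zb ω i j * M (u + 1) ω j)) →
      ((∀ᵐ ω ∂μ, Ya ω - F ω u (Ya ω) (Za ω) = Yb ω - F ω u (Yb ω) (Zb ω)) ∧
       (∀ᵐ ω ∂μ, (fun i => ∑ j, Za ω i j * M (u + 1) ω j)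
          = fun i => ∑ j, Zb ω i j * M (u + 1) ω j)) := by
    intro u hu Ya Za Yb Zb hYa hZa hYb hZb hae
    have hAsm : StronglyMeasurable[𝓕 u] (fun ω => Ya ω - F ω u (Ya ω) (Za ω)) :=
      hYa.sub (hFmeas u hu Ya Za hYa hZa)
    have hBsm : StronglyMeasurable[𝓕 u] (fun ω => Yb ω - F ω u (Yb ω) (Zb ω)) :=
      hYb.sub (hFmeas u hu Yb Zb hYb hZb)
    have hABi : ∀ i, (fun ω => (Ya ω - F ω u (Ya ω) (Za ω)) i)
        =ᵐ[μ] (fun ω => (Yb ω - F ω u (Yb ω) (Zb ω)) i) := by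
      intro i
      have hAi : StronglyMeasurable[𝓕 u] (fun ω => (Ya ω - F ω u (Ya ω) (Za ω)) i) :=
        smeas_comp X hXval h𝓕 u hAsm (fun v => v i)
      have hBi : StronglyMeasurable[𝓕 u] (fun ω => (Yb ω - F ω u (Yb ω) (Zb ω)) i) :=
        smeas_comp X hXval h𝓕 u hBsm (fun v => v i)
      have hAint : Integrable (fun ω => (Ya ω - F ω u (Ya ω) (Za ω)) i) μ :=
        integrable_of_smeas X hXval h𝓕 u hAi
      have hBint : Integrable (fun ω => (Yb ω - F ω u (Yb ω) (Zb ω)) i) μ :=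
        integrable_of_smeas X hXval h𝓕 u hBi
      have hL : ∀ (Yc : Ω → Fin K → ℝ) (Zc : Ω → Fin K → Fin N → ℝ),
          StronglyMeasurable[𝓕 u] Zc →
          StronglyMeasurable[𝓕 u] (fun ω => (Yc ω - F ω u (Yc ω) (Zc ω)) i) →
          Integrable (fun ω => (Yc ω - F ω u (Yc ω) (Zc ω)) i) μ →
          μ[fun ω => (Yc ω - F ω u (Yc ω) (Zc ω)) i
              + ∑ j, Zc ω i j * M (u + 1) ω j|𝓕 u]
            =ᵐ[μ] fun ω => (Yc ω - F ω u (Yc ω) (Zc ω)) i := by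
        intro Yc Zc hZc hCi hCint
        have h0 : (fun ω => (Yc ω - F ω u (Yc ω) (Zc ω)) i + ∑ j, Zc ω i j * M (u + 1) ω j)
            = (fun ω => (Yc ω - F ω u (Yc ω) (Zc ω)) i)
              + fun ω => ∑ j, Zc ω i j * M (u + 1) ω j := rfl
        rw [h0]
        refine (condExp_add hCint (hUint u Zc hZc i) _).trans ?_
        have h1 : μ[fun ω => (Yc ω - F ω u (Yc ω) (Zc ω)) i|𝓕 u]
            = fun ω => (Yc ω - F ω u (Yc ω) (Zc ω)) i :=
          condExp_of_stronglyMeasurable (𝓕.le u) hCi hCint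
        rw [h1]
        filter_upwards [hcondU u Zc hZc i] with ω hω
        show (Yc ω - F ω u (Yc ω) (Zc ω)) i
            + (μ[fun ω' => ∑ j, Zc ω' i j * M (u + 1) ω' j|𝓕 u]) ω
          = (Yc ω - F ω u (Yc ω) (Zc ω)) i
        rw [hω]
        simp
      have hsum_i : (fun ω => (Ya ω - F ω u (Ya ω) (Za ω)) i + ∑ j, Za ω i j * M (u + 1) ω j)
          =ᵐ[μ] fun ω => (Yb ω - F ω u (Yb ω) (Zb ω)) i + ∑ j, Zb ω i j * M (u + 1) ω j := by
        filter_upwards [hae] with ω h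
        have h2 := congrFun h i
        simpa using h2
      calc (fun ω => (Ya ω - F ω u (Ya ω) (Za ω)) i)
          =ᵐ[μ] μ[fun ω => (Ya ω - F ω u (Ya ω) (Za ω)) i
              + ∑ j, Za ω i j * M (u + 1) ω j|𝓕 u] := (hL Ya Za hZa hAi hAint).symm
        _ =ᵐ[μ] μ[fun ω => (Yb ω - F ω u (Yb ω) (Zb ω)) i
              + ∑ j, Zb ω i j * M (u + 1) ω j|𝓕 u] := condExp_congr_ae hsum_i
        _ =ᵐ[μ] fun ω => (Yb ω - F ω u (Yb ω) (Zb ω)) i := hL Yb Zb hZb hBi hBint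
    have hAB : ∀ᵐ ω ∂μ, Ya ω - F ω u (Ya ω) (Za ω) = Yb ω - F ω u (Yb ω) (Zb ω) := by
      have hall := ae_all_iff.2 hABi
      filter_upwards [hall] with ω hω
      funext i; exact hω i
    refine ⟨hAB, ?_⟩
    filter_upwards [hae, hAB] with ω h1 h2
    rw [h2] at h1
    exact add_left_cancel h1
  -- a one-step equation holds for any solution
  have hstep' : ∀ (Yb : ℕ → Ω → Fin K → ℝ) (Zb : ℕ → Ω → Fin K → Fin N → ℝ),
      (∀ t ≤ T, ∀ᵐ ω ∂μ, Yb t ω - ∑ u ∈ Finset.Ico t T, F ω u (Yb u ω) (Zb u ω)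
          + ∑ u ∈ Finset.Ico t T, (fun i => ∑ j, Zb u ω i j * M (u + 1) ω j) = Q ω) →
      ∀ t, t < T → ∀ᵐ ω ∂μ,
        Yb t ω - F ω t (Yb t ω) (Zb t ω) + (fun i => ∑ j, Zb t ω i j * M (t + 1) ω j)
          = Yb (t + 1) ω := by
    intro Yb Zb hEq t ht
    filter_upwards [hEq t ht.le, hEq (t + 1) ht] with ω h1 h2
    rw [Finset.sum_eq_sum_Ico_succ_bot ht, Finset.sum_eq_sum_Ico_succ_bot ht] at h1
    linear_combination h1 - h2
  refine ⟨Y, Z, hYsm, hZsm, hfull, ?_⟩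
  intro Y' Z' hY'sm hZ'sm hEq'
  have hstepY := hstep' Y Z hfull
  have hstepY' := hstep' Y' Z' hEq'
  -- combined step: if the next values agree, apply hkey
  have hpair : ∀ u, u < T → Y (u + 1) =ᵐ[μ] Y' (u + 1) →
      ((∀ᵐ ω ∂μ, Y u ω - F ω u (Y u ω) (Z u ω) = Y' u ω - F ω u (Y' u ω) (Z' u ω)) ∧
       (∀ᵐ ω ∂μ, (fun i => ∑ j, Z u ω i j * M (u + 1) ω j)
          = fun i => ∑ j, Z' u ω i j * M (u + 1) ω j)) := by
    intro u hu hnext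
    refine hkey u hu (Y u) (Z u) (Y' u) (Z' u) (hYsm u) (hZsm u) (hY'sm u) (hZ'sm u) ?_
    filter_upwards [hstepY u hu, hstepY' u hu, hnext] with ω h1 h2 h3
    rw [h1, h2, h3]
  have main : ∀ k t, t + k = T → Y t =ᵐ[μ] Y' t := by
    intro k
    induction k with
    | zero =>
      intro t htk
      have h0 : t = T := by omega
      subst h0
      filter_upwards [hfull t le_rfl, hEq' t le_rfl] with ω h1 h2
      rw [Finset.Ico_self, Finset.sum_empty, Finset.sum_empty, sub_zero, add_zero] at h1 h2
      rw [h1, h2]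
    | succ k ih =>
      intro t htk
      have ht : t < T := by omega
      have hnext : Y (t + 1) =ᵐ[μ] Y' (t + 1) := ih (t + 1) (by omega)
      obtain ⟨hAB, hZab⟩ := hpair t ht hnext
      have hFinv' := hFinv t ht (Y' t) (Z t) (Z' t) hZab
      filter_upwards [hAB, hFinv', hFbij t ht (Z t)] with ω h1 h2 h3
      refine h3.injective ?_
      show Y t ω - F ω t (Y t ω) (Z t ω) = Y' t ω - F ω t (Y' t ω) (Z t ω)
      rw [h1, h2]
  constructor
  · intro t htT
    exact main (T - t) t (by omega)
  · intro u hu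
    exact (hpair u hu (main (T - (u + 1)) (u + 1) (by omega))).2
end

section
/- If for some t and Z the map y ↦ y - F(ω,t,y,Z_t) fails to be surjective onto R^K with positive probability, then there exists a terminal condition Q for which the discrete BSDE admits no adapted solution on {t,...,T}. -/
open MeasureTheory

lemma factor_of_comap {Ω β E : Type*} [MeasurableSpace β] [MeasurableSpace E] [MeasurableSingletonClass E]
    {g : Ω → β} {f : Ω → E}
    (hf : @Measurable Ω E (MeasurableSpace.comap g inferInstance) _ f)
    {ω1 ω2 : Ω} (h : g ω1 = g ω2) : f ω1 = f ω2 := by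
  have hs : MeasurableSet[MeasurableSpace.comap g inferInstance] (f ⁻¹' {f ω1}) :=
    hf (measurableSet_singleton _)
  obtain ⟨A, -, hA⟩ := MeasurableSpace.measurableSet_comap.mp hs
  have h1 : ω1 ∈ g ⁻¹' A := by rw [hA]; exact rfl
  have h2 : ω2 ∈ g ⁻¹' A := by simpa [Set.mem_preimage, ← h] using h1
  rw [hA] at h2
  exact h2.symm

lemma unit_inj {N : ℕ} {a b : Fin N}
    (h : (fun j => if j = a then (1:ℝ) else 0) = fun j => if j = b then (1:ℝ) else 0) :
    a = b := by
  by_contra hab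
  have := congrFun h a
  simp [hab] at this

lemma smeas_zm {Ω : Type*} (m : MeasurableSpace Ω) {N K : ℕ}
    (Zf : Ω → Fin K → Fin N → ℝ) (Mf : Ω → Fin N → ℝ)
    (hZ : StronglyMeasurable[m] Zf) (hM : StronglyMeasurable[m] Mf) :
    StronglyMeasurable[m] (fun ω (i : Fin K) => ∑ j, Zf ω i j * Mf ω j) := by
  apply Measurable.stronglyMeasurable
  apply measurable_pi_iff.mpr
  intro i
  apply Finset.measurable_sum
  intro j _
  exact ((measurable_pi_apply j).comp ((measurable_pi_apply i).comp hZ.measurable)).mul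
    ((measurable_pi_apply j).comp hM.measurable)

lemma bounded_of_fin_comap {Ω : Type*} {N K n : ℕ} (hN : 0 < N)
    (P : Ω → Fin n → Fin N → ℝ)
    (hP : ∀ ω u, ∃ i : Fin N, P ω u = fun j => if j = i then (1:ℝ) else 0)
    (f : Ω → Fin K → ℝ)
    (hf : @Measurable Ω _ (MeasurableSpace.comap P inferInstance) _ f) :
    ∃ C, ∀ ω, ‖f ω‖ ≤ C := by
  classical
  by_cases hΩ : Nonempty Ω
  · haveI : Nonempty (Fin N) := ⟨⟨0, hN⟩⟩
    set idx : Ω → Fin n → Fin N := fun ω u => (hP ω u).choose with hidx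
    have hPidx : ∀ ω, P ω = fun u j => if j = idx ω u then (1:ℝ) else 0 := by
      intro ω; funext u; exact (hP ω u).choose_spec
    have hkey : ∀ ω ω', idx ω = idx ω' → f ω = f ω' := by
      intro ω ω' h
      exact factor_of_comap hf (by rw [hPidx ω, hPidx ω', h])
    set g : (Fin n → Fin N) → ℝ := fun v => if h : ∃ ω, idx ω = v then ‖f h.choose‖ else 0 with hg
    refine ⟨Finset.univ.sup' (Finset.univ_nonempty) g, fun ω => ?_⟩
    have : g (idx ω) = ‖f ω‖ := by
      have hex : ∃ ω', idx ω' = idx ω := ⟨ω, rfl⟩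
      show (if h : ∃ ω', idx ω' = idx ω then ‖f h.choose‖ else 0) = ‖f ω‖
      rw [dif_pos hex]
      exact congrArg norm (hkey _ _ hex.choose_spec)
    rw [← this]
    exact Finset.le_sup' g (Finset.mem_univ _)
  · exact ⟨0, fun ω => absurd ⟨ω⟩ hΩ⟩

lemma key_zero {Ω : Type*} (m : MeasurableSpace Ω) {m0 : MeasurableSpace Ω}
    {μ : Measure Ω} [IsProbabilityMeasure μ]
    {N K n : ℕ} (hm : m ≤ m0)
    (P : Ω → Fin n → Fin N → ℝ)
    (hP : ∀ ω u, ∃ i : Fin N, P ω u = fun j => if j = i then (1:ℝ) else 0)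
    (hmP : m = MeasurableSpace.comap P inferInstance)
    (Xn : Ω → Fin N → ℝ) (hXi : Integrable Xn μ)
    (M : Ω → Fin N → ℝ) (hMdef : M = Xn - μ[Xn | m])
    (Z1 Z2 : Ω → Fin K → Fin N → ℝ)
    (hZ1 : StronglyMeasurable[m] Z1) (hZ2 : StronglyMeasurable[m] Z2)
    (H : Ω → Fin K → ℝ) (hH : StronglyMeasurable[m] H)
    (hae : ∀ᵐ ω ∂μ, (fun i => ∑ j, Z1 ω i j * M ω j) = (fun i => ∑ j, Z2 ω i j * M ω j) + H ω) :
    ∀ᵐ ω ∂μ, (fun i => ∑ j, Z1 ω i j * M ω j) = (fun i => ∑ j, Z2 ω i j * M ω j) := by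
  classical
  set c : Ω → Fin N → ℝ := μ[Xn | m] with hc
  set idx : Ω → Fin n → Fin N := fun ω u => (hP ω u).choose with hidx
  have hPidx : ∀ ω, P ω = fun u j => if j = idx ω u then (1:ℝ) else 0 :=
    fun ω => funext fun u => (hP ω u).choose_spec
  have hidxP : ∀ ω ω', idx ω = idx ω' → P ω = P ω' := fun ω ω' h => by
    rw [hPidx ω, hPidx ω', h]
  have hset : ∀ ω₀, {ω | idx ω = idx ω₀} = P ⁻¹' {P ω₀} := by
    intro ω₀; ext ω
    simp only [Set.mem_setOf_eq, Set.mem_preimage, Set.mem_singleton_iff]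
    constructor
    · exact hidxP ω ω₀
    · intro h
      funext u
      apply unit_inj (N := N)
      have h' := h
      rw [hPidx ω, hPidx ω₀] at h'
      exact congrFun h' u
  have hAm : ∀ ω₀, MeasurableSet[m] {ω | idx ω = idx ω₀} := fun ω₀ => by
    rw [hset, hmP]
    exact MeasurableSpace.measurableSet_comap.mpr ⟨{P ω₀}, measurableSet_singleton _, rfl⟩
  have hAm0 : ∀ ω₀, MeasurableSet[m0] {ω | idx ω = idx ω₀} := fun ω₀ => hm _ (hAm ω₀)
  have hXij : ∀ j, Integrable (fun ω => Xn ω j) μ :=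
    fun j => (ContinuousLinearMap.proj (R := ℝ) (φ := fun _ : Fin N => ℝ) j).integrable_comp hXi
  have hcm : @Measurable Ω _ (MeasurableSpace.comap P inferInstance) _ c := by
    rw [← hmP]; exact stronglyMeasurable_condExp.measurable
  have hZ1m : @Measurable Ω _ (MeasurableSpace.comap P inferInstance) _ Z1 := by
    rw [← hmP]; exact hZ1.measurable
  have hZ2m : @Measurable Ω _ (MeasurableSpace.comap P inferInstance) _ Z2 := by
    rw [← hmP]; exact hZ2.measurable
  have hHm : @Measurable Ω _ (MeasurableSpace.comap P inferInstance) _ H := by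
    rw [← hmP]; exact hH.measurable
  have hmain : ∀ ω₀, μ {ω | idx ω = idx ω₀} ≠ 0 → H ω₀ = 0 := by
    intro ω₀ hμ
    set A := {ω | idx ω = idx ω₀} with hAdef
    have hconst : ∀ ω ∈ A, P ω = P ω₀ := fun ω h => hidxP _ _ h
    have hvec : ∫ ω in A, c ω ∂μ = ∫ ω in A, Xn ω ∂μ := setIntegral_condExp hm hXi (hAm ω₀)
    have hcoord : ∀ j, ∫ ω in A, Xn ω j ∂μ = c ω₀ j * (μ A).toReal := by
      intro j
      have h1 : ∫ ω in A, Xn ω j ∂μ = (∫ ω in A, Xn ω ∂μ) j :=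
        (ContinuousLinearMap.proj (R := ℝ) (φ := fun _ : Fin N => ℝ) j).integral_comp_comm
          (hXi.integrableOn)
      have h2 : ∫ ω in A, c ω j ∂μ = (∫ ω in A, c ω ∂μ) j :=
        (ContinuousLinearMap.proj (R := ℝ) (φ := fun _ : Fin N => ℝ) j).integral_comp_comm
          (integrable_condExp.integrableOn)
      have h3 : ∫ ω in A, c ω j ∂μ = c ω₀ j * (μ A).toReal := by
        rw [setIntegral_congr_fun (hAm0 ω₀)
          (fun ω hω => congrFun (factor_of_comap hcm (hconst ω hω)) j :
            Set.EqOn (fun ω => c ω j) (fun _ => c ω₀ j) A)]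
        rw [setIntegral_const, smul_eq_mul, mul_comm]; rfl
      rw [h1, ← hvec, ← h2, h3]
    funext i
    show H ω₀ i = 0
    set W : Ω → ℝ := fun ω => (∑ j, Z1 ω i j * M ω j) - (∑ j, Z2 ω i j * M ω j) with hW
    have hWA : Set.EqOn W (fun ω => ∑ j, (Z1 ω₀ i j - Z2 ω₀ i j) * (Xn ω j - c ω₀ j)) A := by
      intro ω hω
      have e1 : Z1 ω = Z1 ω₀ := factor_of_comap hZ1m (hconst ω hω)
      have e2 : Z2 ω = Z2 ω₀ := factor_of_comap hZ2m (hconst ω hω)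
      have e3 : c ω = c ω₀ := factor_of_comap hcm (hconst ω hω)
      show (∑ j, Z1 ω i j * M ω j) - (∑ j, Z2 ω i j * M ω j)
          = ∑ j, (Z1 ω₀ i j - Z2 ω₀ i j) * (Xn ω j - c ω₀ j)
      rw [← Finset.sum_sub_distrib]
      refine Finset.sum_congr rfl fun j _ => ?_
      have hMj : M ω j = Xn ω j - c ω₀ j := by
        rw [hMdef]
        simp only [Pi.sub_apply]
        rw [e3]
      rw [e1, e2, hMj]; ring
    have hIW0 : ∫ ω in A, W ω ∂μ = 0 := by
      rw [setIntegral_congr_fun (hAm0 ω₀) hWA]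
      rw [integral_finset_sum (μ := μ.restrict A) Finset.univ
        (f := fun (j : Fin N) (ω : Ω) => (Z1 ω₀ i j - Z2 ω₀ i j) * (Xn ω j - c ω₀ j))
        (fun j _ => (((hXij j).sub (integrable_const _)).const_mul _).integrableOn)]
      refine Finset.sum_eq_zero fun j _ => ?_
      rw [integral_const_mul]
      rw [integral_sub ((hXij j).integrableOn) (integrable_const _).integrableOn]
      rw [setIntegral_const, hcoord j, smul_eq_mul, Measure.real]
      ring
    have hIWH : ∫ ω in A, W ω ∂μ = H ω₀ i * (μ A).toReal := by
      have hae' : ∀ᵐ ω ∂(μ.restrict A), W ω = H ω i := by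
        refine ae_restrict_of_ae (hae.mono fun ω h => ?_)
        have := congrFun h i
        simp only [Pi.add_apply] at this
        simp only [hW]
        linarith
      rw [integral_congr_ae hae']
      rw [setIntegral_congr_fun (hAm0 ω₀)
        (fun ω hω => (congrFun (factor_of_comap hHm (hconst ω hω)) i :
          (fun ω => H ω i) ω = (fun _ => H ω₀ i) ω))]
      rw [setIntegral_const, smul_eq_mul, mul_comm]; rfl
    have htR : (μ A).toReal ≠ 0 := ENNReal.toReal_ne_zero.mpr ⟨hμ, measure_ne_top μ A⟩
    have h0 : H ω₀ i * (μ A).toReal = 0 := by rw [← hIWH, hIW0]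
    rcases mul_eq_zero.mp h0 with h | h
    · exact h
    · exact absurd h htR
  have hnull : μ (⋃ v ∈ {v : Fin n → Fin N | μ {ω | idx ω = v} = 0}, {ω | idx ω = v}) = 0 :=
    (measure_biUnion_null_iff (Set.to_countable _)).mpr fun v hv => hv
  have hnmem := measure_eq_zero_iff_ae_notMem.mp hnull
  filter_upwards [hae, hnmem] with ω h1 h2
  have hμω : μ {ω' | idx ω' = idx ω} ≠ 0 := by
    intro h0
    exact h2 (Set.mem_biUnion (h0 : μ {ω' | idx ω' = idx ω} = 0) rfl)
  rw [h1, hmain ω hμω, add_zero]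

/-- forward recursion used to build the terminal condition -/
def fwd {Ω : Type*} {N K : ℕ} (F : Ω → ℕ → (Fin K → ℝ) → (Fin K → Fin N → ℝ) → (Fin K → ℝ))
    (Y0 : Ω → Fin K → ℝ) (t1 : ℕ) : ℕ → Ω → Fin K → ℝ
  | 0 => Y0
  | (n+1) => fun ω => fwd F Y0 t1 n ω - F ω (t1 + n) (fwd F Y0 t1 n ω) 0

/-- necessity of surjectivity.  If `y ↦ y - F(ω,t,y,Z)` fails to be surjective
with positive probability (for some `𝓕 t`-measurable `Z`, missing a value `q`), then there is
a terminal condition `Q` for which the discrete BSDE admits no adapted solution on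
`{t,…,T}`. -/
theorem necessity_of_surjectivity
    {Ω : Type*} {m0 : MeasurableSpace Ω} {μ : Measure Ω} [IsProbabilityMeasure μ]
    {N K T : ℕ} (𝓕 : Filtration ℕ m0)
    (X : ℕ → Ω → (Fin N → ℝ))
    (hXval : ∀ t ω, ∃ i : Fin N, X t ω = fun j => if j = i then (1 : ℝ) else 0)
    (h𝓕 : ∀ t, (𝓕 t : MeasurableSpace Ω)
      = MeasurableSpace.comap (fun ω (s : Fin (t + 1)) => X (s : ℕ) ω) inferInstance)
    (hXint : ∀ t, Integrable (X t) μ)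
    (M : ℕ → Ω → (Fin N → ℝ))
    (hM : ∀ t, M t = X t - μ[X t | 𝓕 (t - 1)])
    (F : Ω → ℕ → (Fin K → ℝ) → (Fin K → Fin N → ℝ) → (Fin K → ℝ))
    (hFmeas : ∀ s < T, ∀ (Y : Ω → Fin K → ℝ) (Z : Ω → Fin K → Fin N → ℝ),
      StronglyMeasurable[𝓕 s] Y → StronglyMeasurable[𝓕 s] Z →
      StronglyMeasurable[𝓕 s] (fun ω => F ω s (Y ω) (Z ω)))
    (hFinv : ∀ s < T, ∀ (Y : Ω → Fin K → ℝ) (Z1 Z2 : Ω → Fin K → Fin N → ℝ),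
      (∀ᵐ ω ∂μ, (fun i => ∑ j, Z1 ω i j * M (s + 1) ω j)
          = (fun i => ∑ j, Z2 ω i j * M (s + 1) ω j)) →
      ∀ᵐ ω ∂μ, F ω s (Y ω) (Z1 ω) = F ω s (Y ω) (Z2 ω))
    (t : ℕ) (ht : t < T)
    -- bijectivity may be assumed at all other times
    (hFbij : ∀ s < T, s ≠ t → ∀ Z : Ω → Fin K → Fin N → ℝ,
      ∀ᵐ ω ∂μ, Function.Bijective (fun y : Fin K → ℝ => y - F ω s y (Z ω)))
    -- failure of surjectivity at time t with positive probability
    (Z : Ω → Fin K → Fin N → ℝ) (hZmeas : StronglyMeasurable[𝓕 t] Z)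
    (hZbdd : ∃ C, ∀ ω i j, |Z ω i j| ≤ C)
    (q : Fin K → ℝ)
    (hnosurj : 0 < μ {ω | ∀ y : Fin K → ℝ, y - F ω t y (Z ω) ≠ q}) :
    ∃ Q : Ω → Fin K → ℝ,
      StronglyMeasurable[𝓕 T] Q ∧ (∃ C, ∀ ω, ‖Q ω‖ ≤ C) ∧
      ¬ ∃ (Y : ℕ → Ω → Fin K → ℝ) (Z' : ℕ → Ω → Fin K → Fin N → ℝ),
          (∀ s, StronglyMeasurable[𝓕 s] (Y s)) ∧
          (∀ s, StronglyMeasurable[𝓕 s] (Z' s)) ∧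
          (∀ s, t ≤ s → s ≤ T → ∀ᵐ ω ∂μ,
            Y s ω - ∑ u ∈ Finset.Ico s T, F ω u (Y u ω) (Z' u ω)
              + ∑ u ∈ Finset.Ico s T, (fun i => ∑ j, Z' u ω i j * M (u + 1) ω j) = Q ω) := by
  classical
  -- nonemptiness and N > 0
  have hΩne : Nonempty Ω := by
    by_contra h
    have huniv : (Set.univ : Set Ω) = ∅ := by
      ext ω; exact absurd ⟨ω⟩ h
    have := measure_univ (μ := μ)
    rw [huniv] at this
    simp at this
  have hN : 0 < N := by
    obtain ⟨ω⟩ := hΩne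
    obtain ⟨i, -⟩ := hXval 0 ω
    exact i.pos
  -- measurability of X s with respect to 𝓕 s'
  have hXmeas : ∀ s s', s ≤ s' → StronglyMeasurable[𝓕 s'] (X s) := by
    intro s s' hss'
    have hPmeas : Measurable[𝓕 s'] (fun ω (u : Fin (s'+1)) => X (u:ℕ) ω) := by
      rw [h𝓕 s']
      exact measurable_iff_comap_le.mpr le_rfl
    have : X s = fun ω => (fun (u : Fin (s'+1)) => X (u:ℕ) ω) ⟨s, by omega⟩ := rfl
    rw [this]
    exact ((measurable_pi_apply _).comp hPmeas).stronglyMeasurable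
  -- measurability of M (s+1)
  have hMmeas : ∀ s : ℕ, StronglyMeasurable[𝓕 (s+1)] (M (s+1)) := by
    intro s
    rw [hM (s+1)]
    exact (hXmeas (s+1) (s+1) le_rfl).sub
      (stronglyMeasurable_condExp.mono (𝓕.mono (by omega)))
  have hMdef' : ∀ s : ℕ, M (s+1) = X (s+1) - μ[X (s+1) | 𝓕 s] := by
    intro s; simpa using hM (s+1)
  -- forward construction
  set Y0 : Ω → Fin K → ℝ := fun ω => q + fun i => ∑ j, Z ω i j * M (t + 1) ω j with hY0def
  set Ytil : ℕ → Ω → Fin K → ℝ := fun s => fwd F Y0 (t + 1) (s - (t + 1)) with hYtildef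
  have hbase : Ytil (t+1) = Y0 := by
    simp only [hYtildef, Nat.sub_self]
    rfl
  have hYtilstep : ∀ s, t + 1 ≤ s →
      Ytil (s+1) = fun ω => Ytil s ω - F ω s (Ytil s ω) 0 := by
    intro s hs
    obtain ⟨n, rfl⟩ : ∃ n, s = t + 1 + n := ⟨s - (t+1), by omega⟩
    have e1 : t + 1 + n + 1 - (t + 1) = n + 1 := by omega
    have e2 : t + 1 + n - (t + 1) = n := by omega
    simp only [hYtildef, e1, e2]
    rfl
  -- measurability of Ytil
  have hYtilmeas : ∀ s, t + 1 ≤ s → s ≤ T → StronglyMeasurable[𝓕 s] (Ytil s) := by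
    intro s hs
    induction s, hs using Nat.le_induction with
    | base =>
      intro _
      rw [hbase]
      exact stronglyMeasurable_const.add
        (smeas_zm (𝓕 (t+1)) Z (M (t+1)) (hZmeas.mono (𝓕.mono (Nat.le_succ t))) (hMmeas t))
    | succ s hs ih =>
      intro hsT
      have hmeas_s := ih (by omega)
      rw [hYtilstep s hs]
      exact (hmeas_s.sub
        (hFmeas s (by omega) (Ytil s) (fun _ => 0) hmeas_s stronglyMeasurable_const)).mono
        (𝓕.mono (Nat.le_succ s))
  have hQmeas : StronglyMeasurable[𝓕 T] (Ytil T) := hYtilmeas T (by omega) le_rfl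
  have hQbdd : ∃ C, ∀ ω, ‖Ytil T ω‖ ≤ C := by
    refine bounded_of_fin_comap hN (fun ω (u : Fin (T+1)) => X (u:ℕ) ω)
      (fun ω u => hXval (u:ℕ) ω) (Ytil T) ?_
    rw [← h𝓕 T]
    exact hQmeas.measurable
  refine ⟨Ytil T, hQmeas, hQbdd, ?_⟩
  rintro ⟨Y, Z', hYmeas, hZ'meas, hsol⟩
  -- one-step equations
  have hstep : ∀ s, t ≤ s → s < T →
      ∀ᵐ ω ∂μ, Y s ω - F ω s (Y s ω) (Z' s ω)
        + (fun i => ∑ j, Z' s ω i j * M (s+1) ω j) = Y (s+1) ω := by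
    intro s hts hsT
    filter_upwards [hsol s hts (le_of_lt hsT), hsol (s+1) (by omega) hsT] with ω h1 h2
    rw [Finset.sum_eq_sum_Ico_succ_bot hsT, Finset.sum_eq_sum_Ico_succ_bot hsT] at h1
    funext i
    have h1i := congrFun h1 i
    have h2i := congrFun h2 i
    simp only [Pi.add_apply, Pi.sub_apply, Finset.sum_apply] at h1i h2i ⊢
    linarith
  have hYT : ∀ᵐ ω ∂μ, Y T ω = Ytil T ω := by
    filter_upwards [hsol T (le_of_lt ht) le_rfl] with ω h
    simpa [Finset.Ico_self] using h
  -- backward identification of solutions with Ytil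
  have hback : ∀ k s, t + 1 ≤ s → s + k = T → (∀ᵐ ω ∂μ, Y s ω = Ytil s ω) := by
    intro k
    induction k with
    | zero =>
      intro s hs hsk
      have : s = T := by omega
      subst this
      exact hYT
    | succ k ihk =>
      intro s hs hsk
      have hsT : s < T := by omega
      have hst : s ≠ t := by omega
      have ih := ihk (s+1) (by omega) (by omega)
      have hYtilm : StronglyMeasurable[𝓕 s] (Ytil s) := hYtilmeas s hs (le_of_lt hsT)
      have hFm1 : StronglyMeasurable[𝓕 s] (fun ω => F ω s (Y s ω) (Z' s ω)) :=
        hFmeas s hsT _ _ (hYmeas s) (hZ'meas s)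
      have hFm2 : StronglyMeasurable[𝓕 s] (fun ω => F ω s (Ytil s ω) 0) :=
        hFmeas s hsT (Ytil s) (fun _ => 0) hYtilm stronglyMeasurable_const
      set H : Ω → Fin K → ℝ :=
        fun ω => Ytil s ω - F ω s (Ytil s ω) 0 - (Y s ω - F ω s (Y s ω) (Z' s ω)) with hHdef
      have hHmeas : StronglyMeasurable[𝓕 s] H :=
        (hYtilm.sub hFm2).sub ((hYmeas s).sub hFm1)
      have haeH : ∀ᵐ ω ∂μ, (fun i => ∑ j, Z' s ω i j * M (s+1) ω j)
          = (fun i => ∑ j, (fun _ : Ω => (0 : Fin K → Fin N → ℝ)) ω i j * M (s+1) ω j) + H ω := by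
        filter_upwards [hstep s (by omega) hsT, ih] with ω h1 h2
        funext i
        have h1i := congrFun h1 i
        have h2i := congrFun h2 i
        have h3i := congrFun (congrFun (hYtilstep s hs) ω) i
        simp only [Pi.add_apply, Pi.sub_apply, Pi.zero_apply, zero_mul,
          Finset.sum_const_zero, zero_add, hHdef] at h1i h2i h3i ⊢
        linarith
      have hZM0 := key_zero (𝓕 s) (𝓕.le s) (fun ω (u : Fin (s+1)) => X (u:ℕ) ω)
        (fun ω u => hXval (u:ℕ) ω) (h𝓕 s) (X (s+1)) (hXint (s+1)) (M (s+1)) (hMdef' s)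
        (Z' s) (fun _ => 0) (hZ'meas s) stronglyMeasurable_const H hHmeas haeH
      have hFeq := hFinv s hsT (Y s) (Z' s) (fun _ => 0) hZM0
      filter_upwards [hstep s (by omega) hsT, ih, hZM0, hFeq,
        hFbij s hsT hst (fun _ => 0)] with ω h1 h2 h3 h4 h5
      have hZM0' : (fun i => ∑ j, Z' s ω i j * M (s+1) ω j) = (0 : Fin K → ℝ) := by
        rw [h3]
        funext i
        simp
      apply h5.1
      show Y s ω - F ω s (Y s ω) 0 = Ytil s ω - F ω s (Ytil s ω) 0
      have h4' : F ω s (Y s ω) (Z' s ω) = F ω s (Y s ω) 0 := h4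
      rw [← h4']
      rw [hZM0', add_zero] at h1
      rw [h1, h2, hYtilstep s hs]
  -- time t argument
  have hfin := hback (T - (t+1)) (t+1) le_rfl (by omega)
  set H2 : Ω → Fin K → ℝ := fun ω => q - (Y t ω - F ω t (Y t ω) (Z' t ω)) with hH2def
  have hH2meas : StronglyMeasurable[𝓕 t] H2 :=
    stronglyMeasurable_const.sub ((hYmeas t).sub (hFmeas t ht _ _ (hYmeas t) (hZ'meas t)))
  have haeH2 : ∀ᵐ ω ∂μ, (fun i => ∑ j, Z' t ω i j * M (t+1) ω j)
      = (fun i => ∑ j, Z ω i j * M (t+1) ω j) + H2 ω := by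
    filter_upwards [hstep t le_rfl ht, hfin] with ω h1 h2
    funext i
    have h1i := congrFun h1 i
    have h2i := congrFun h2 i
    have h3i : Ytil (t+1) ω i = q i + ∑ j, Z ω i j * M (t+1) ω j := by
      rw [hbase]
      simp [hY0def]
    simp only [Pi.add_apply, Pi.sub_apply, hH2def] at h1i h2i ⊢
    linarith
  have hZMt := key_zero (𝓕 t) (𝓕.le t) (fun ω (u : Fin (t+1)) => X (u:ℕ) ω)
    (fun ω u => hXval (u:ℕ) ω) (h𝓕 t) (X (t+1)) (hXint (t+1)) (M (t+1)) (hMdef' t)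
    (Z' t) Z (hZ'meas t) hZmeas H2 hH2meas haeH2
  have hFeqt := hFinv t ht (Y t) (Z' t) Z hZMt
  have hfinal : ∀ᵐ ω ∂μ, Y t ω - F ω t (Y t ω) (Z ω) = q := by
    filter_upwards [hstep t le_rfl ht, hfin, hZMt, hFeqt] with ω h1 h2 h3 h4
    funext i
    have h1i := congrFun h1 i
    have h3i := congrFun h3 i
    have h4i := congrFun h4 i
    have h2i := congrFun h2 i
    have h5i : Ytil (t+1) ω i = q i + ∑ j, Z ω i j * M (t+1) ω j := by
      rw [hbase]
      simp [hY0def]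
    simp only [Pi.add_apply, Pi.sub_apply] at h1i h2i h3i h4i ⊢
    linarith
  have hbadsub : {ω | ∀ y : Fin K → ℝ, y - F ω t y (Z ω) ≠ q}
      ⊆ {ω | ¬ (Y t ω - F ω t (Y t ω) (Z ω) = q)} := fun ω h => h (Y t ω)
  have h0 : μ {ω | ¬ (Y t ω - F ω t (Y t ω) (Z ω) = q)} = 0 := ae_iff.mp hfinal
  exact hnosurj.ne' (measure_mono_null hbadsub h0)
end

section
/- (One-step bijection) Let F satisfy the hypotheses of the existence theorem. Then for each t there is a bijection, up to a.s.-equality and ∼_{M_{t+1}}-equivalence, between pairs (Y_t, Z_t) ∈ L^∞(F_t) × L^∞(F_t) and terminal values Y_{t+1} ∈ L^∞(F_{t+1}), given by Y_{t+1} = Y_t - F(ω,t,Y_t,Z_t) + Z_t M_{t+1}. -/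
open MeasureTheory
section aux
variable {Ω γ β : Type*}

lemma aux_const_of_meas [mγ : MeasurableSpace γ] {mβ : MeasurableSpace β}
    [MeasurableSingletonClass β] {V : Ω → γ} {m : MeasurableSpace Ω}
    (hm : m = MeasurableSpace.comap V mγ) {g : Ω → β} (hg : Measurable[m] g) :
    ∀ ω1 ω2, V ω1 = V ω2 → g ω1 = g ω2 := by
  subst hm
  intro ω1 ω2 hV
  have h := hg (MeasurableSet.singleton (g ω1))
  rw [MeasurableSpace.measurableSet_comap] at h
  obtain ⟨A, -, hpre⟩ := h
  have h1 : V ω1 ∈ A := by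
    have h0 : ω1 ∈ g ⁻¹' {g ω1} := rfl
    rw [← hpre] at h0; exact h0
  have h2 : ω2 ∈ V ⁻¹' A := by rw [Set.mem_preimage, ← hV]; exact h1
  rw [hpre] at h2
  exact h2.symm

lemma aux_meas_of_const [mγ : MeasurableSpace γ] [MeasurableSingletonClass γ]
    {mβ : MeasurableSpace β} {V : Ω → γ} (hV : (Set.range V).Finite) {g : Ω → β}
    (hg : ∀ ω1 ω2, V ω1 = V ω2 → g ω1 = g ω2) :
    Measurable[MeasurableSpace.comap V mγ] g := by
  intro B _
  rw [MeasurableSpace.measurableSet_comap]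
  refine ⟨V '' (g ⁻¹' B), (hV.subset (Set.image_subset_range _ _)).measurableSet, ?_⟩
  ext ω
  simp only [Set.mem_preimage, Set.mem_image]
  constructor
  · rintro ⟨ω', hω', hVeq⟩; rwa [← hg ω' ω hVeq]
  · intro h; exact ⟨ω, h, rfl⟩

lemma aux_finite_range [Nonempty β] {V : Ω → γ} (hV : (Set.range V).Finite)
    {g : Ω → β} (hg : ∀ ω1 ω2, V ω1 = V ω2 → g ω1 = g ω2) : (Set.range g).Finite := by
  classical
  have hsub : Set.range g ⊆
      (fun v => if h : ∃ ω, V ω = v then g h.choose else Classical.arbitrary β) '' (Set.range V) := by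
    rintro _ ⟨ω, rfl⟩
    refine ⟨V ω, Set.mem_range_self ω, ?_⟩
    have hex : ∃ ω', V ω' = V ω := ⟨ω, rfl⟩
    simp only [dif_pos hex]
    exact hg _ _ hex.choose_spec
  exact (hV.image _).subset hsub

lemma aux_bound [SeminormedAddGroup β] {g : Ω → β}
    (h : (Set.range g).Finite) : ∃ C, ∀ ω, ‖g ω‖ ≤ C := by
  obtain ⟨C, hC⟩ := (h.image norm).bddAbove
  exact ⟨C, fun ω => hC (Set.mem_image_of_mem _ (Set.mem_range_self ω))⟩

lemma aux_integrable_apply {ι : Type*} [Fintype ι] {m : MeasurableSpace Ω} {μ : Measure Ω}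
    {f : Ω → ι → ℝ} (hf : Integrable f μ) (j : ι) : Integrable (fun ω => f ω j) μ :=
  hf.norm.mono' ((continuous_apply j).comp_aestronglyMeasurable hf.1)
    (ae_of_all _ fun ω => by simpa using norm_le_pi_norm (f ω) j)

example {n m : ℕ} : MeasurableSingletonClass (Fin n → Fin m → ℝ) := inferInstance

end aux

/-- one-step bijection.  Under the hypotheses of the existence theorem there
is, for each `t`, a bijection (up to a.s. equality and `∼_{M_{t+1}}`-equivalence) between
pairs `(Y_t, Z_t)` and terminal values `Y_{t+1}`, via
`Y_{t+1} = Y_t - F(ω,t,Y_t,Z_t) + Z_t M_{t+1}`. -/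
theorem one_step_bijection
    {Ω : Type*} {m0 : MeasurableSpace Ω} {μ : Measure Ω} [IsProbabilityMeasure μ]
    {N K : ℕ} (𝓕 : Filtration ℕ m0)
    (X : ℕ → Ω → (Fin N → ℝ))
    (hXval : ∀ t ω, ∃ i : Fin N, X t ω = fun j => if j = i then (1 : ℝ) else 0)
    (h𝓕 : ∀ t, (𝓕 t : MeasurableSpace Ω)
      = MeasurableSpace.comap (fun ω (s : Fin (t + 1)) => X (s : ℕ) ω) inferInstance)
    (hXint : ∀ t, Integrable (X t) μ)
    (M : ℕ → Ω → (Fin N → ℝ))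
    (hM : ∀ t, M t = X t - μ[X t | 𝓕 (t - 1)])
    (F : Ω → ℕ → (Fin K → ℝ) → (Fin K → Fin N → ℝ) → (Fin K → ℝ))
    (t : ℕ)
    (hFmeas : ∀ (Y : Ω → Fin K → ℝ) (Z : Ω → Fin K → Fin N → ℝ),
      StronglyMeasurable[𝓕 t] Y → StronglyMeasurable[𝓕 t] Z →
      StronglyMeasurable[𝓕 t] (fun ω => F ω t (Y ω) (Z ω)))
    (hFinv : ∀ (Y : Ω → Fin K → ℝ) (Z1 Z2 : Ω → Fin K → Fin N → ℝ),
      (∀ᵐ ω ∂μ, (fun i => ∑ j, Z1 ω i j * M (t + 1) ω j)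
          = (fun i => ∑ j, Z2 ω i j * M (t + 1) ω j)) →
      ∀ᵐ ω ∂μ, F ω t (Y ω) (Z1 ω) = F ω t (Y ω) (Z2 ω))
    (hFbij : ∀ Z : Ω → Fin K → Fin N → ℝ,
      ∀ᵐ ω ∂μ, Function.Bijective (fun y : Fin K → ℝ => y - F ω t y (Z ω))) :
    -- for every essentially bounded 𝓕 (t+1)-measurable terminal value there is a unique
    -- (up to a.s. equality and ∼_{M_{t+1}}) pair (Y_t, Z_t) generating it
    ∀ Ynext : Ω → Fin K → ℝ,
      StronglyMeasurable[𝓕 (t + 1)] Ynext → (∃ C, ∀ ω, ‖Ynext ω‖ ≤ C) →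
      ∃ (Yt : Ω → Fin K → ℝ) (Zt : Ω → Fin K → Fin N → ℝ),
        StronglyMeasurable[𝓕 t] Yt ∧ StronglyMeasurable[𝓕 t] Zt ∧
        (∀ᵐ ω ∂μ,
          Yt ω - F ω t (Yt ω) (Zt ω) + (fun i => ∑ j, Zt ω i j * M (t + 1) ω j) = Ynext ω) ∧
        ∀ (Yt' : Ω → Fin K → ℝ) (Zt' : Ω → Fin K → Fin N → ℝ),
          StronglyMeasurable[𝓕 t] Yt' → StronglyMeasurable[𝓕 t] Zt' →
          (∀ᵐ ω ∂μ,
            Yt' ω - F ω t (Yt' ω) (Zt' ω)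
              + (fun i => ∑ j, Zt' ω i j * M (t + 1) ω j) = Ynext ω) →
          (Yt =ᵐ[μ] Yt') ∧
          (∀ᵐ ω ∂μ, (fun i => ∑ j, Zt ω i j * M (t + 1) ω j)
              = (fun i => ∑ j, Zt' ω i j * M (t + 1) ω j)) := by
  classical
  intro Ynext hYmeas _hYbd
  -- basic setup
  set V : Ω → (Fin (t + 1) → Fin N → ℝ) := fun ω s => X (s : ℕ) ω with hVdef
  set W : Ω → (Fin (t + 2) → Fin N → ℝ) := fun ω s => X (s : ℕ) ω with hWdef
  have hmle : (𝓕 t : MeasurableSpace Ω) ≤ m0 := 𝓕.le t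
  haveI : SigmaFinite (μ.trim hmle) := inferInstance
  have hVfin : (Set.range V).Finite := by
    have hsub : Set.range V ⊆ Set.pi Set.univ
        (fun _ : Fin (t + 1) => Set.range (fun i : Fin N => fun j => if j = i then (1 : ℝ) else 0)) := by
      rintro _ ⟨ω, rfl⟩ s _
      obtain ⟨i, hi⟩ := hXval s ω
      exact ⟨i, hi.symm⟩
    exact (Set.Finite.pi (fun s => Set.finite_range _)).subset hsub
  -- fiber constancy from 𝓕 t-measurability and conversely
  have hconst : ∀ {β : Type} [MeasurableSpace β] [MeasurableSingletonClass β]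
      (g : Ω → β), Measurable[𝓕 t] g → ∀ ω1 ω2, V ω1 = V ω2 → g ω1 = g ω2 := by
    intro β _ _ g hg
    exact aux_const_of_meas (h𝓕 t) hg
  have hmeasR : ∀ (g : Ω → Fin K → ℝ), (∀ ω1 ω2, V ω1 = V ω2 → g ω1 = g ω2) →
      StronglyMeasurable[𝓕 t] g := by
    intro g hg
    apply Measurable.stronglyMeasurable
    rw [h𝓕 t]
    exact aux_meas_of_const hVfin hg
  have hmeasZ : ∀ (g : Ω → Fin K → Fin N → ℝ), (∀ ω1 ω2, V ω1 = V ω2 → g ω1 = g ω2) →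
      StronglyMeasurable[𝓕 t] g := by
    intro g hg
    apply Measurable.stronglyMeasurable
    rw [h𝓕 t]
    exact aux_meas_of_const hVfin hg
  -- Ynext is constant on W-fibers
  have hYc : ∀ ω1 ω2, W ω1 = W ω2 → Ynext ω1 = Ynext ω2 :=
    aux_const_of_meas (h𝓕 (t + 1)) hYmeas.measurable
  have hYc' : ∀ ω1 ω2, V ω1 = V ω2 → X (t + 1) ω1 = X (t + 1) ω2 → Ynext ω1 = Ynext ω2 := by
    intro ω1 ω2 h1 h2
    apply hYc
    funext s
    rcases lt_or_ge (s : ℕ) (t + 1) with hs | hs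
    · exact congrFun h1 ⟨(s : ℕ), hs⟩
    · have hst : (s : ℕ) = t + 1 := le_antisymm (Nat.lt_succ_iff.mp s.2) hs
      show X (s : ℕ) ω1 = X (s : ℕ) ω2
      rw [hst]; exact h2
  -- martingale representation data
  set g : Fin N → (Fin (t + 1) → Fin N → ℝ) → (Fin K → ℝ) := fun j v =>
    if h : ∃ ω', V ω' = v ∧ X (t + 1) ω' = (fun k => if k = j then (1 : ℝ) else 0)
    then Ynext h.choose else 0 with hgdef
  set Zt : Ω → Fin K → Fin N → ℝ := fun ω i j => g j (V ω) i with hZdef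
  have hZconst : ∀ ω1 ω2, V ω1 = V ω2 → Zt ω1 = Zt ω2 := by
    intro ω1 ω2 h; simp only [hZdef, h]
  have hZmeas : StronglyMeasurable[𝓕 t] Zt := hmeasZ Zt hZconst
  -- representation of Ynext
  have hrep : ∀ ω, Ynext ω = fun i => ∑ j, Zt ω i j * X (t + 1) ω j := by
    intro ω
    obtain ⟨i, hi⟩ := hXval (t + 1) ω
    funext k
    have hsum : ∑ j, Zt ω k j * X (t + 1) ω j = Zt ω k i := by
      rw [hi]
      simp [Finset.sum_ite_eq', Finset.mem_univ]
    rw [hsum]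
    have hex : ∃ ω', V ω' = V ω ∧ X (t + 1) ω' = (fun k => if k = i then (1 : ℝ) else 0) :=
      ⟨ω, rfl, hi⟩
    have h1 : Zt ω k i = Ynext hex.choose k := by
      simp only [hZdef, hgdef, dif_pos hex]
    have hc := hex.choose_spec
    rw [h1, hYc' hex.choose ω hc.1 (hc.2.trans hi.symm)]
  -- conditional expectation of X (t+1)
  set Q : Ω → Fin N → ℝ := μ[X (t + 1) | 𝓕 t] with hQdef
  have hQmeas : StronglyMeasurable[𝓕 t] Q := stronglyMeasurable_condExp
  have hQconst : ∀ ω1 ω2, V ω1 = V ω2 → Q ω1 = Q ω2 := hconst Q hQmeas.measurable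
  have hMeq : ∀ ω j, M (t + 1) ω j = X (t + 1) ω j - Q ω j := by
    intro ω j
    have h := hM (t + 1)
    simp only [Nat.add_sub_cancel] at h
    rw [h]; rfl
  set U : Ω → Fin K → ℝ := fun ω i => ∑ j, Zt ω i j * Q ω j with hUdef
  have hUconst : ∀ ω1 ω2, V ω1 = V ω2 → U ω1 = U ω2 := by
    intro ω1 ω2 h
    simp only [hUdef, hZconst ω1 ω2 h, hQconst ω1 ω2 h]
  have hZM : ∀ ω, (fun i => ∑ j, Zt ω i j * M (t + 1) ω j) = fun i => Ynext ω i - U ω i := by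
    intro ω; funext i
    simp only [hMeq, mul_sub, Finset.sum_sub_distrib, hUdef]
    congr 1
    exact (congrFun (hrep ω) i).symm
  -- the one-step map is constant on fibers
  have hΦconst : ∀ ω1 ω2, V ω1 = V ω2 →
      (fun y : Fin K → ℝ => y - F ω1 t y (Zt ω1)) = (fun y => y - F ω2 t y (Zt ω2)) := by
    intro ω1 ω2 hv
    funext y
    have hm := hFmeas (fun _ => y) Zt stronglyMeasurable_const hZmeas
    have h := hconst _ hm.measurable ω1 ω2 hv
    try simp only at h
    rw [h]
  -- define Yt by inverting the one-step map fiberwise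
  set Y0 : (Fin (t + 1) → Fin N → ℝ) → (Fin K → ℝ) := fun v =>
    if h : ∃ ω0, V ω0 = v then
      (if hb : Function.Bijective (fun y : Fin K → ℝ => y - F h.choose t y (Zt h.choose)) then
        (hb.2 (U h.choose)).choose else 0)
    else 0 with hY0def
  set Yt : Ω → Fin K → ℝ := fun ω => Y0 (V ω) with hYtdef
  have hYconst : ∀ ω1 ω2, V ω1 = V ω2 → Yt ω1 = Yt ω2 := by
    intro ω1 ω2 h; simp only [hYtdef, h]
  have hYtmeas : StronglyMeasurable[𝓕 t] Yt := hmeasR Yt hYconst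
  have hsolve : ∀ᵐ ω ∂μ, Yt ω - F ω t (Yt ω) (Zt ω) = U ω := by
    filter_upwards [hFbij Zt] with ω hbij
    have hex : ∃ ω0, V ω0 = V ω := ⟨ω, rfl⟩
    have hΦ : (fun y : Fin K → ℝ => y - F hex.choose t y (Zt hex.choose))
        = (fun y => y - F ω t y (Zt ω)) := hΦconst _ _ hex.choose_spec
    have hb : Function.Bijective (fun y : Fin K → ℝ => y - F hex.choose t y (Zt hex.choose)) := by
      rw [hΦ]; exact hbij
    have hYt : Yt ω = (hb.2 (U hex.choose)).choose := by
      simp only [hYtdef, hY0def, dif_pos hex, dif_pos hb]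
    have hspec := (hb.2 (U hex.choose)).choose_spec
    have hptw := congrFun hΦ ((hb.2 (U hex.choose)).choose)
    beta_reduce at hspec
    rw [hYt, ← hptw, hspec, hUconst _ _ hex.choose_spec]
  have heqn : ∀ᵐ ω ∂μ,
      Yt ω - F ω t (Yt ω) (Zt ω) + (fun i => ∑ j, Zt ω i j * M (t + 1) ω j) = Ynext ω := by
    filter_upwards [hsolve] with ω h
    rw [hZM ω, h]
    funext i
    show U ω i + (Ynext ω i - U ω i) = Ynext ω i
    ring
  refine ⟨Yt, Zt, hYtmeas, hZmeas, heqn, ?_⟩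
  -- boundedness tools
  have hbddR : ∀ (c : Ω → Fin K → ℝ), (∀ ω1 ω2, V ω1 = V ω2 → c ω1 = c ω2) →
      ∃ C, ∀ ω, ‖c ω‖ ≤ C := fun c hc => aux_bound (aux_finite_range hVfin hc)
  have hbddZ : ∀ (c : Ω → Fin K → Fin N → ℝ), (∀ ω1 ω2, V ω1 = V ω2 → c ω1 = c ω2) →
      ∃ C, ∀ ω, ‖c ω‖ ≤ C := fun c hc => aux_bound (aux_finite_range hVfin hc)
  have haint : ∀ (c : Ω → ℝ), StronglyMeasurable[𝓕 t] c → (∃ C, ∀ ω, ‖c ω‖ ≤ C) →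
      Integrable c μ := by
    rintro c hc ⟨C, hC⟩
    exact (integrable_const C).mono' (hc.mono hmle).aestronglyMeasurable (ae_of_all _ hC)
  -- conditional expectation of components of M (t+1) vanishes
  have hMj_int : ∀ j, Integrable (fun ω => M (t + 1) ω j) μ := by
    intro j
    have h1 : Integrable (fun ω => X (t + 1) ω j) μ := aux_integrable_apply (hXint (t + 1)) j
    have h2 : Integrable (fun ω => Q ω j) μ := aux_integrable_apply integrable_condExp j
    exact (h1.sub h2).congr (ae_of_all _ fun ω => (hMeq ω j).symm)
  have hQj : ∀ j, (fun ω => Q ω j) =ᵐ[μ] μ[(fun ω => X (t + 1) ω j) | 𝓕 t] := by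
    intro j
    refine ae_eq_condExp_of_forall_setIntegral_eq hmle (aux_integrable_apply (hXint (t + 1)) j)
      (fun s _ _ => (aux_integrable_apply integrable_condExp j).integrableOn)
      (fun s hs hμs => ?_)
      ((continuous_apply j).comp_stronglyMeasurable hQmeas).aestronglyMeasurable
    have hQint : IntegrableOn Q s μ := integrable_condExp.integrableOn
    have hXint' : IntegrableOn (X (t + 1)) s μ := (hXint (t + 1)).integrableOn
    have hv := setIntegral_condExp hmle (hXint (t + 1)) hs
    calc ∫ x in s, Q x j ∂μ
        = (∫ x in s, Q x ∂μ) j := (ContinuousLinearMap.proj (R := ℝ) j).integral_comp_comm hQint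
      _ = (∫ x in s, X (t + 1) x ∂μ) j := by rw [hv]
      _ = ∫ x in s, X (t + 1) x j ∂μ :=
          ((ContinuousLinearMap.proj (R := ℝ) j).integral_comp_comm hXint').symm
  have hMj_ce : ∀ j, μ[(fun ω => M (t + 1) ω j) | 𝓕 t] =ᵐ[μ] 0 := by
    intro j
    have hQjmeas : StronglyMeasurable[𝓕 t] (fun ω => Q ω j) :=
      (continuous_apply j).comp_stronglyMeasurable hQmeas
    have hQjint : Integrable (fun ω => Q ω j) μ := aux_integrable_apply integrable_condExp j
    have hXjint : Integrable (fun ω => X (t + 1) ω j) μ := aux_integrable_apply (hXint (t + 1)) j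
    have he : (fun ω => M (t + 1) ω j) = (fun ω => X (t + 1) ω j) - (fun ω => Q ω j) :=
      funext fun ω => hMeq ω j
    calc μ[(fun ω => M (t + 1) ω j) | 𝓕 t]
        =ᵐ[μ] μ[(fun ω => X (t + 1) ω j) | 𝓕 t] - μ[(fun ω => Q ω j) | 𝓕 t] := by
          rw [he]; exact condExp_sub hXjint hQjint _
      _ =ᵐ[μ] 0 := by
          rw [condExp_of_stronglyMeasurable hmle hQjmeas hQjint]
          filter_upwards [hQj j] with ω h
          show (μ[(fun ω => X (t + 1) ω j) | 𝓕 t]) ω - Q ω j = 0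
          rw [h, sub_self]
  -- products with M components: integrability and vanishing conditional expectation
  have hprod_int : ∀ (Zc : Ω → Fin K → Fin N → ℝ), StronglyMeasurable[𝓕 t] Zc → ∀ i j,
      Integrable (fun ω => Zc ω i j * M (t + 1) ω j) μ := by
    intro Zc hZc i j
    obtain ⟨C, hC⟩ := hbddZ Zc (hconst Zc hZc.measurable)
    have hcm : StronglyMeasurable[𝓕 t] (fun ω => Zc ω i j) :=
      (continuous_apply j).comp_stronglyMeasurable ((continuous_apply i).comp_stronglyMeasurable hZc)
    refine Integrable.bdd_mul (hMj_int j) (c := C) (hcm.mono hmle).aestronglyMeasurable (ae_of_all _ fun ω => ?_)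
    exact le_trans (norm_le_pi_norm (Zc ω i) j) (le_trans (norm_le_pi_norm (Zc ω) i) (hC ω))
  have hsum_int : ∀ (Zc : Ω → Fin K → Fin N → ℝ), StronglyMeasurable[𝓕 t] Zc → ∀ i,
      Integrable (fun ω => ∑ j, Zc ω i j * M (t + 1) ω j) μ := by
    intro Zc hZc i
    have := integrable_finset_sum' Finset.univ (fun j _ => hprod_int Zc hZc i j)
    refine this.congr (ae_of_all _ fun ω => ?_)
    simp [Finset.sum_apply]
  have hZce : ∀ (Zc : Ω → Fin K → Fin N → ℝ), StronglyMeasurable[𝓕 t] Zc → ∀ i,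
      μ[(fun ω => ∑ j, Zc ω i j * M (t + 1) ω j) | 𝓕 t] =ᵐ[μ] 0 := by
    intro Zc hZc i
    have hcomp : ∀ j, StronglyMeasurable[𝓕 t] (fun ω => Zc ω i j) := fun j =>
      (continuous_apply j).comp_stronglyMeasurable ((continuous_apply i).comp_stronglyMeasurable hZc)
    have hsum : (fun ω => ∑ j, Zc ω i j * M (t + 1) ω j)
        = ∑ j : Fin N, (fun ω => Zc ω i j * M (t + 1) ω j) := by
      funext ω; simp [Finset.sum_apply]
    have hj : ∀ j : Fin N, μ[(fun ω => Zc ω i j * M (t + 1) ω j) | 𝓕 t] =ᵐ[μ] 0 := by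
      intro j
      calc μ[(fun ω => Zc ω i j * M (t + 1) ω j) | 𝓕 t]
          =ᵐ[μ] (fun ω => Zc ω i j) * μ[(fun ω => M (t + 1) ω j) | 𝓕 t] :=
            condExp_mul_of_stronglyMeasurable_left (hcomp j) (hprod_int Zc hZc i j) (hMj_int j)
        _ =ᵐ[μ] 0 := by
            filter_upwards [hMj_ce j] with ω h
            show Zc ω i j * (μ[(fun ω => M (t + 1) ω j) | 𝓕 t]) ω = 0
            rw [show (μ[(fun ω => M (t + 1) ω j) | 𝓕 t]) ω = 0 from h, mul_zero]
    rw [hsum]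
    calc μ[∑ j : Fin N, (fun ω => Zc ω i j * M (t + 1) ω j) | 𝓕 t]
        =ᵐ[μ] ∑ j : Fin N, μ[(fun ω => Zc ω i j * M (t + 1) ω j) | 𝓕 t] :=
          condExp_finset_sum (fun j _ => hprod_int Zc hZc i j) _
      _ =ᵐ[μ] 0 := by
          have hall : ∀ᵐ ω ∂μ, ∀ j : Fin N,
              (μ[(fun ω => Zc ω i j * M (t + 1) ω j) | 𝓕 t]) ω = 0 :=
            ae_all_iff.2 fun j => by filter_upwards [hj j] with ω h; exact h
          filter_upwards [hall] with ω h
          show (∑ j : Fin N, μ[(fun ω => Zc ω i j * M (t + 1) ω j) | 𝓕 t]) ω = (0 : Ω → ℝ) ω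
          rw [Finset.sum_apply]
          simp [h]
  -- the key identification via conditional expectation
  have key : ∀ (B : Ω → Fin K → ℝ) (Zc : Ω → Fin K → Fin N → ℝ),
      StronglyMeasurable[𝓕 t] B → StronglyMeasurable[𝓕 t] Zc →
      (∀ᵐ ω ∂μ, B ω + (fun k => ∑ j, Zc ω k j * M (t + 1) ω j) = Ynext ω) →
      ∀ i, (fun ω => B ω i) =ᵐ[μ] μ[(fun ω => Ynext ω i) | 𝓕 t] := by
    intro B Zc hB hZc heq i
    obtain ⟨CB, hCB⟩ := hbddR B (hconst B hB.measurable)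
    have hBi_meas : StronglyMeasurable[𝓕 t] (fun ω => B ω i) :=
      (continuous_apply i).comp_stronglyMeasurable hB
    have hBi_int : Integrable (fun ω => B ω i) μ :=
      haint _ hBi_meas ⟨CB, fun ω => le_trans (norm_le_pi_norm (B ω) i) (hCB ω)⟩
    have hmi_int : Integrable (fun ω => ∑ j, Zc ω i j * M (t + 1) ω j) μ := hsum_int Zc hZc i
    have h1 : ((fun ω => B ω i) + (fun ω => ∑ j, Zc ω i j * M (t + 1) ω j))
        =ᵐ[μ] (fun ω => Ynext ω i) := by
      filter_upwards [heq] with ω h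
      show B ω i + ∑ j, Zc ω i j * M (t + 1) ω j = Ynext ω i
      exact congrFun h i
    have c2 : μ[(fun ω => B ω i) | 𝓕 t] = fun ω => B ω i :=
      condExp_of_stronglyMeasurable hmle hBi_meas hBi_int
    calc (fun ω => B ω i)
        =ᵐ[μ] μ[(fun ω => B ω i) | 𝓕 t] := by rw [c2]
      _ =ᵐ[μ] μ[(fun ω => B ω i) | 𝓕 t] + μ[(fun ω => ∑ j, Zc ω i j * M (t + 1) ω j) | 𝓕 t] := by
          filter_upwards [hZce Zc hZc i] with ω h
          show (μ[(fun ω => B ω i) | 𝓕 t]) ω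
            = (μ[(fun ω => B ω i) | 𝓕 t]) ω + (μ[(fun ω => ∑ j, Zc ω i j * M (t + 1) ω j) | 𝓕 t]) ω
          rw [show (μ[(fun ω => ∑ j, Zc ω i j * M (t + 1) ω j) | 𝓕 t]) ω = 0 from h, add_zero]
      _ =ᵐ[μ] μ[(fun ω => B ω i) + (fun ω => ∑ j, Zc ω i j * M (t + 1) ω j) | 𝓕 t] :=
          (condExp_add hBi_int hmi_int _).symm
      _ =ᵐ[μ] μ[(fun ω => Ynext ω i) | 𝓕 t] := condExp_congr_ae h1
  -- uniqueness
  intro Yt' Zt' hY'meas hZ'meas heqn'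
  have hAmeas : StronglyMeasurable[𝓕 t] (fun ω => Yt ω - F ω t (Yt ω) (Zt ω)) :=
    hYtmeas.sub (hFmeas Yt Zt hYtmeas hZmeas)
  have hA'meas : StronglyMeasurable[𝓕 t] (fun ω => Yt' ω - F ω t (Yt' ω) (Zt' ω)) :=
    hY'meas.sub (hFmeas Yt' Zt' hY'meas hZ'meas)
  have hAA' : ∀ i, (fun ω => (Yt ω - F ω t (Yt ω) (Zt ω)) i)
      =ᵐ[μ] (fun ω => (Yt' ω - F ω t (Yt' ω) (Zt' ω)) i) := by
    intro i
    exact (key _ Zt hAmeas hZmeas heqn i).trans (key _ Zt' hA'meas hZ'meas heqn' i).symm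
  have hAA : ∀ᵐ ω ∂μ, Yt ω - F ω t (Yt ω) (Zt ω) = Yt' ω - F ω t (Yt' ω) (Zt' ω) := by
    have hall : ∀ᵐ ω ∂μ, ∀ i, (Yt ω - F ω t (Yt ω) (Zt ω)) i
        = (Yt' ω - F ω t (Yt' ω) (Zt' ω)) i :=
      ae_all_iff.2 fun i => by filter_upwards [hAA' i] with ω h; exact h
    filter_upwards [hall] with ω h
    funext i; exact h i
  have hZZ : ∀ᵐ ω ∂μ, (fun i => ∑ j, Zt ω i j * M (t + 1) ω j)
      = (fun i => ∑ j, Zt' ω i j * M (t + 1) ω j) := by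
    filter_upwards [heqn, heqn', hAA] with ω h1 h2 h3
    calc (fun i => ∑ j, Zt ω i j * M (t + 1) ω j)
        = Ynext ω - (Yt ω - F ω t (Yt ω) (Zt ω)) := eq_sub_of_add_eq' h1
      _ = Ynext ω - (Yt' ω - F ω t (Yt' ω) (Zt' ω)) := by rw [h3]
      _ = (fun i => ∑ j, Zt' ω i j * M (t + 1) ω j) := (eq_sub_of_add_eq' h2).symm
  refine ⟨?_, hZZ⟩
  have hFF : ∀ᵐ ω ∂μ, F ω t (Yt' ω) (Zt ω) = F ω t (Yt' ω) (Zt' ω) := hFinv Yt' Zt Zt' hZZ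
  filter_upwards [hAA, hFF, hFbij Zt] with ω h1 h2 hbij
  have hkey : Yt ω - F ω t (Yt ω) (Zt ω) = Yt' ω - F ω t (Yt' ω) (Zt ω) := by
    rw [h1, h2]
  exact hbij.1 hkey
end

section
/- Under the hypotheses of the existence theorem, for any t there is a bijection (up to a.s. equality and ∼_M equivalence) between (Y_0, {Z_s}_{s<t}) and Y_t, and between (Y_t, {Z_s}_{t≤s<T}) and Y_T. -/
open MeasureTheory

set_option linter.unusedSectionVars false

namespace MSBaux

variable {Ω γ β : Type*}

lemma measurable_comap_of_fiber_const [MeasurableSpace γ] [MeasurableSingletonClass γ]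
    [MeasurableSpace β] {π : Ω → γ} (hfin : (Set.range π).Finite) {g : Ω → β}
    (hg : ∀ ω ω', π ω = π ω' → g ω = g ω') :
    Measurable[MeasurableSpace.comap π inferInstance] g := by
  intro B _
  refine ⟨π '' (g ⁻¹' B), (hfin.subset (Set.image_subset_range _ _)).measurableSet, ?_⟩
  ext ω
  simp only [Set.mem_preimage, Set.mem_image]
  constructor
  · rintro ⟨ω', hω', hπ⟩
    rwa [hg ω ω' hπ.symm]
  · intro h; exact ⟨ω, h, rfl⟩

lemma fiber_const_of_measurable_comap [MeasurableSpace γ] [MeasurableSpace β]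
    [MeasurableSingletonClass β] {π : Ω → γ} {g : Ω → β}
    (hg : Measurable[MeasurableSpace.comap π inferInstance] g) :
    ∀ ω ω', π ω = π ω' → g ω = g ω' := by
  intro ω ω' h
  obtain ⟨A, -, hA⟩ := MeasurableSpace.measurableSet_comap.mp
    (hg (MeasurableSet.singleton (g ω')))
  have hω' : ω' ∈ π ⁻¹' A := by rw [hA]; exact rfl
  have hω : ω ∈ π ⁻¹' A := by simpa [Set.mem_preimage, h] using hω'
  rw [hA] at hω; exact hω

lemma finite_range_of_fiber_const [Zero β] {π : Ω → γ} (hfin : (Set.range π).Finite)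
    {g : Ω → β} (hg : ∀ ω ω', π ω = π ω' → g ω = g ω') : (Set.range g).Finite := by
  classical
  have hsub : Set.range g ⊆
      (fun v => if hv : ∃ ω, π ω = v then g hv.choose else 0) '' Set.range π := by
    rintro _ ⟨ω, rfl⟩
    refine ⟨π ω, ⟨ω, rfl⟩, ?_⟩
    simp only []
    rw [dif_pos (⟨ω, rfl⟩ : ∃ ω', π ω' = π ω)]
    exact hg _ _ (Exists.choose_spec (⟨ω, rfl⟩ : ∃ ω', π ω' = π ω))
  exact (hfin.image _).subset hsub

lemma bounded_of_finite_range [SeminormedAddGroup β] {g : Ω → β}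
    (h : (Set.range g).Finite) : ∃ C, ∀ ω, ‖g ω‖ ≤ C := by
  obtain ⟨C, hC⟩ := (h.image norm).bddAbove
  exact ⟨C, fun ω => hC ⟨g ω, ⟨ω, rfl⟩, rfl⟩⟩

lemma integrable_of_bounded' {m0 : MeasurableSpace Ω} {μ : Measure Ω} [IsFiniteMeasure μ]
    {E : Type*} [NormedAddCommGroup E] {g : Ω → E} (hg : AEStronglyMeasurable g μ)
    {C : ℝ} (h : ∀ ω, ‖g ω‖ ≤ C) : Integrable g μ :=
  ⟨hg, HasFiniteIntegral.of_bounded (ae_of_all _ h)⟩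

lemma condexp_apply_coord {m m0 : MeasurableSpace Ω} {μ : Measure Ω} [IsProbabilityMeasure μ]
    (hm : m ≤ m0) {n : ℕ} {f : Ω → Fin n → ℝ} (hf : Integrable f μ) (i : Fin n) :
    (fun ω => (μ[f|m]) ω i) =ᵐ[μ] μ[fun ω => f ω i|m] := by
  have hL : ∀ (ν : Measure Ω) (g : Ω → Fin n → ℝ), Integrable g ν →
      Integrable (fun ω => g ω i) ν := fun ν g hg =>
    (ContinuousLinearMap.proj (R := ℝ) (φ := fun _ : Fin n => ℝ) i).integrable_comp hg
  refine ae_eq_condExp_of_forall_setIntegral_eq hm (hL μ _ hf)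
    (fun s _ _ => (hL _ _ integrable_condExp.integrableOn)) (fun s hs hμs => ?_) ?_
  · have h1 : ∫ x in s, (μ[f|m]) x i ∂μ
        = (ContinuousLinearMap.proj (R := ℝ) (φ := fun _ : Fin n => ℝ) i)
          (∫ x in s, (μ[f|m]) x ∂μ) :=
      (ContinuousLinearMap.proj (R := ℝ) (φ := fun _ : Fin n => ℝ) i).integral_comp_comm
        integrable_condExp.integrableOn
    have h2 : ∫ x in s, f x i ∂μ
        = (ContinuousLinearMap.proj (R := ℝ) (φ := fun _ : Fin n => ℝ) i)
          (∫ x in s, f x ∂μ) :=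
      (ContinuousLinearMap.proj (R := ℝ) (φ := fun _ : Fin n => ℝ) i).integral_comp_comm
        hf.integrableOn
    rw [h1, h2, setIntegral_condExp hm hf hs]
  · exact ((continuous_apply i).comp_stronglyMeasurable
      stronglyMeasurable_condExp).aestronglyMeasurable

section Ctx

variable {Ω : Type*} {m0 : MeasurableSpace Ω} {μ : Measure Ω} [IsProbabilityMeasure μ]
  {N K T : ℕ} {𝓕 : Filtration ℕ m0} {X : ℕ → Ω → (Fin N → ℝ)}
  {M : ℕ → Ω → (Fin N → ℝ)}
  {F : Ω → ℕ → (Fin K → ℝ) → (Fin K → Fin N → ℝ) → (Fin K → ℝ)}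

/-- the generating process of the filtration -/
def pim (X : ℕ → Ω → (Fin N → ℝ)) (u : ℕ) : Ω → (Fin (u + 1) → Fin N → ℝ) :=
  fun ω s => X (s : ℕ) ω

lemma pim_finite (hXval : ∀ t ω, ∃ i : Fin N, X t ω = fun j => if j = i then (1 : ℝ) else 0)
    (u : ℕ) : (Set.range (pim X u)).Finite := by
  have hb : (Set.range fun i : Fin N => fun j => if j = i then (1 : ℝ) else 0).Finite :=
    Set.finite_range _
  refine Set.Finite.subset (Set.Finite.pi (fun _ : Fin (u + 1) => hb)) ?_
  rintro _ ⟨ω, rfl⟩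
  intro r _
  obtain ⟨i, hi⟩ := hXval (r : ℕ) ω
  exact ⟨i, hi.symm⟩

lemma fiberConst (h𝓕 : ∀ t, (𝓕 t : MeasurableSpace Ω)
      = MeasurableSpace.comap (fun ω (s : Fin (t + 1)) => X (s : ℕ) ω) inferInstance)
    {u : ℕ} {β : Type*} [MeasurableSpace β] [MeasurableSingletonClass β] {g : Ω → β}
    (hg : Measurable[𝓕 u] g) : ∀ ω ω', pim X u ω = pim X u ω' → g ω = g ω' := by
  rw [h𝓕 u] at hg
  exact fiber_const_of_measurable_comap hg

lemma measOf (hXval : ∀ t ω, ∃ i : Fin N, X t ω = fun j => if j = i then (1 : ℝ) else 0)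
    (h𝓕 : ∀ t, (𝓕 t : MeasurableSpace Ω)
      = MeasurableSpace.comap (fun ω (s : Fin (t + 1)) => X (s : ℕ) ω) inferInstance)
    {u : ℕ} {β : Type*} [MeasurableSpace β] {g : Ω → β}
    (hg : ∀ ω ω', pim X u ω = pim X u ω' → g ω = g ω') : Measurable[𝓕 u] g := by
  rw [h𝓕 u]
  exact measurable_comap_of_fiber_const (pim_finite hXval u) hg

lemma bdd_of_sm (hXval : ∀ t ω, ∃ i : Fin N, X t ω = fun j => if j = i then (1 : ℝ) else 0)
    (h𝓕 : ∀ t, (𝓕 t : MeasurableSpace Ω)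
      = MeasurableSpace.comap (fun ω (s : Fin (t + 1)) => X (s : ℕ) ω) inferInstance)
    {u : ℕ} {β : Type*} [NormedAddCommGroup β] [MeasurableSpace β] [BorelSpace β]
    [MeasurableSingletonClass β] {g : Ω → β}
    (hg : StronglyMeasurable[𝓕 u] g) : ∃ C, ∀ ω, ‖g ω‖ ≤ C :=
  bounded_of_finite_range
    (finite_range_of_fiber_const (pim_finite hXval u) (fiberConst h𝓕 hg.measurable))

lemma M_coord (hM : ∀ t, M t = X t - μ[X t | 𝓕 (t - 1)]) (s : ℕ) (ω : Ω) (j : Fin N) :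
    M (s + 1) ω j = X (s + 1) ω j - (μ[X (s + 1)|𝓕 s]) ω j := by
  have h : M (s + 1) = X (s + 1) - μ[X (s + 1)|𝓕 s] := hM (s + 1)
  rw [h]; rfl

lemma M_int (hXint : ∀ t, Integrable (X t) μ)
    (hM : ∀ t, M t = X t - μ[X t | 𝓕 (t - 1)]) (s : ℕ) :
    Integrable (M (s + 1)) μ := by
  have h : M (s + 1) = X (s + 1) - μ[X (s + 1)|𝓕 s] := hM (s + 1)
  rw [h]
  exact (hXint (s + 1)).sub integrable_condExp

lemma Mj_int (hXint : ∀ t, Integrable (X t) μ)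
    (hM : ∀ t, M t = X t - μ[X t | 𝓕 (t - 1)]) (s : ℕ) (j : Fin N) :
    Integrable (fun ω => M (s + 1) ω j) μ :=
  (ContinuousLinearMap.proj (R := ℝ) (φ := fun _ : Fin N => ℝ) j).integrable_comp
    (M_int hXint hM s)

lemma condexp_Mj (hXint : ∀ t, Integrable (X t) μ)
    (hM : ∀ t, M t = X t - μ[X t | 𝓕 (t - 1)]) (s : ℕ) (j : Fin N) :
    μ[fun ω => M (s + 1) ω j|𝓕 s] =ᵐ[μ] 0 := by
  set C : Ω → Fin N → ℝ := μ[X (s + 1)|𝓕 s] with hC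
  have hXj : Integrable (fun ω => X (s + 1) ω j) μ :=
    (ContinuousLinearMap.proj (R := ℝ) (φ := fun _ : Fin N => ℝ) j).integrable_comp
      (hXint (s + 1))
  have hCj : Integrable (fun ω => C ω j) μ :=
    (ContinuousLinearMap.proj (R := ℝ) (φ := fun _ : Fin N => ℝ) j).integrable_comp
      integrable_condExp
  have heq : (fun ω => M (s + 1) ω j)
      = (fun ω => X (s + 1) ω j) - fun ω => C ω j := by
    funext ω; exact M_coord hM s ω j
  rw [heq]
  have h1 : μ[(fun ω => X (s + 1) ω j) - fun ω => C ω j|𝓕 s]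
      =ᵐ[μ] μ[fun ω => X (s + 1) ω j|𝓕 s] - μ[fun ω => C ω j|𝓕 s] :=
    condExp_sub hXj hCj _
  have h2 : μ[fun ω => C ω j|𝓕 s] = fun ω => C ω j :=
    condExp_of_stronglyMeasurable (𝓕.le s)
      ((continuous_apply j).comp_stronglyMeasurable stronglyMeasurable_condExp) hCj
  have h3 : (fun ω => C ω j) =ᵐ[μ] μ[fun ω => X (s + 1) ω j|𝓕 s] :=
    condexp_apply_coord (𝓕.le s) (hXint (s + 1)) j
  filter_upwards [h1, h3] with ω hω1 hω3
  rw [hω1]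
  simp only [Pi.sub_apply, h2, hω3, sub_self, Pi.zero_apply]

lemma ZM_term_int
    (hXval : ∀ t ω, ∃ i : Fin N, X t ω = fun j => if j = i then (1 : ℝ) else 0)
    (h𝓕 : ∀ t, (𝓕 t : MeasurableSpace Ω)
      = MeasurableSpace.comap (fun ω (s : Fin (t + 1)) => X (s : ℕ) ω) inferInstance)
    (hXint : ∀ t, Integrable (X t) μ)
    (hM : ∀ t, M t = X t - μ[X t | 𝓕 (t - 1)]) (s : ℕ)
    {Z : Ω → Fin K → Fin N → ℝ} (hZ : StronglyMeasurable[𝓕 s] Z) (i : Fin K) (j : Fin N) :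
    Integrable (fun ω => Z ω i j * M (s + 1) ω j) μ := by
  obtain ⟨C, hC⟩ := bdd_of_sm hXval h𝓕 hZ
  refine Integrable.bdd_mul (c := C) (Mj_int hXint hM s j) ?_ (ae_of_all _ fun ω => ?_)
  · exact (((continuous_apply j).comp_stronglyMeasurable
      ((continuous_apply i).comp_stronglyMeasurable hZ)).mono (𝓕.le s)).aestronglyMeasurable
  · exact le_trans (le_trans (norm_le_pi_norm (Z ω i) j) (norm_le_pi_norm (Z ω) i)) (hC ω)

lemma condexp_ZM_zero
    (hXval : ∀ t ω, ∃ i : Fin N, X t ω = fun j => if j = i then (1 : ℝ) else 0)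
    (h𝓕 : ∀ t, (𝓕 t : MeasurableSpace Ω)
      = MeasurableSpace.comap (fun ω (s : Fin (t + 1)) => X (s : ℕ) ω) inferInstance)
    (hXint : ∀ t, Integrable (X t) μ)
    (hM : ∀ t, M t = X t - μ[X t | 𝓕 (t - 1)]) (s : ℕ)
    {Z : Ω → Fin K → Fin N → ℝ} (hZ : StronglyMeasurable[𝓕 s] Z) (i : Fin K) :
    μ[fun ω => ∑ j, Z ω i j * M (s + 1) ω j|𝓕 s] =ᵐ[μ] 0 := by
  have h1 : (fun ω => ∑ j, Z ω i j * M (s + 1) ω j)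
      = ∑ j, fun ω => Z ω i j * M (s + 1) ω j := by
    funext ω; simp [Finset.sum_apply]
  rw [h1]
  have h2 := condExp_finsetSum (μ := μ) (m := 𝓕 s) (s := (Finset.univ : Finset (Fin N)))
    (f := fun j (ω : Ω) => Z ω i j * M (s + 1) ω j)
    (fun j _ => ZM_term_int hXval h𝓕 hXint hM s hZ i j)
  have h3 : ∀ j : Fin N, μ[fun ω => Z ω i j * M (s + 1) ω j|𝓕 s] =ᵐ[μ] 0 := by
    intro j
    have hmul := condExp_mul_of_stronglyMeasurable_left (μ := μ) (m := 𝓕 s)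
      ((continuous_apply j).comp_stronglyMeasurable
        ((continuous_apply i).comp_stronglyMeasurable hZ))
      (ZM_term_int hXval h𝓕 hXint hM s hZ i j) (Mj_int hXint hM s j)
    refine hmul.trans ?_
    filter_upwards [condexp_Mj hXint hM s j] with ω hω
    simp only [Pi.mul_apply, hω, Pi.zero_apply, mul_zero]
  have h4 : ∀ᵐ ω ∂μ, ∀ j : Fin N, (μ[fun ω => Z ω i j * M (s + 1) ω j|𝓕 s]) ω = 0 :=
    ae_all_iff.mpr fun j => h3 j
  filter_upwards [h2, h4] with ω hω2 hω4
  rw [hω2]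
  simp [Finset.sum_apply, hω4]

lemma condexp_rhs
    (hXval : ∀ t ω, ∃ i : Fin N, X t ω = fun j => if j = i then (1 : ℝ) else 0)
    (h𝓕 : ∀ t, (𝓕 t : MeasurableSpace Ω)
      = MeasurableSpace.comap (fun ω (s : Fin (t + 1)) => X (s : ℕ) ω) inferInstance)
    (hXint : ∀ t, Integrable (X t) μ)
    (hM : ∀ t, M t = X t - μ[X t | 𝓕 (t - 1)])
    (hFmeas : ∀ s < T, ∀ (Y : Ω → Fin K → ℝ) (Z : Ω → Fin K → Fin N → ℝ),
      StronglyMeasurable[𝓕 s] Y → StronglyMeasurable[𝓕 s] Z →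
      StronglyMeasurable[𝓕 s] (fun ω => F ω s (Y ω) (Z ω)))
    (s : ℕ) (hs : s < T) {Ys : Ω → Fin K → ℝ} {Zs : Ω → Fin K → Fin N → ℝ}
    (hYs : StronglyMeasurable[𝓕 s] Ys) (hZs : StronglyMeasurable[𝓕 s] Zs) (i : Fin K) :
    μ[fun ω => Ys ω i - F ω s (Ys ω) (Zs ω) i + ∑ j, Zs ω i j * M (s + 1) ω j|𝓕 s]
      =ᵐ[μ] fun ω => Ys ω i - F ω s (Ys ω) (Zs ω) i := by
  have hA_sm : StronglyMeasurable[𝓕 s] fun ω => Ys ω i - F ω s (Ys ω) (Zs ω) i :=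
    ((continuous_apply i).comp_stronglyMeasurable hYs).sub
      ((continuous_apply i).comp_stronglyMeasurable (hFmeas s hs Ys Zs hYs hZs))
  obtain ⟨C, hC⟩ := bdd_of_sm hXval h𝓕 hA_sm
  have hA_int : Integrable (fun ω => Ys ω i - F ω s (Ys ω) (Zs ω) i) μ :=
    integrable_of_bounded' (hA_sm.mono (𝓕.le s)).aestronglyMeasurable hC
  have hB_int : Integrable (fun ω => ∑ j, Zs ω i j * M (s + 1) ω j) μ := by
    have h1 : (fun ω => ∑ j, Zs ω i j * M (s + 1) ω j)
        = ∑ j, fun ω => Zs ω i j * M (s + 1) ω j := by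
      funext ω; simp [Finset.sum_apply]
    exact integrable_finset_sum _ fun j (_ : j ∈ (Finset.univ : Finset (Fin N))) =>
      ZM_term_int hXval h𝓕 hXint hM s hZs i j
  have hadd := condExp_add (μ := μ) (m := 𝓕 s) hA_int hB_int
  have hAfix : μ[fun ω => Ys ω i - F ω s (Ys ω) (Zs ω) i|𝓕 s]
      = fun ω => Ys ω i - F ω s (Ys ω) (Zs ω) i :=
    condExp_of_stronglyMeasurable (𝓕.le s) hA_sm hA_int
  refine hadd.trans ?_
  filter_upwards [condexp_ZM_zero hXval h𝓕 hXint hM s hZs i] with ω hω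
  simp only [Pi.add_apply, hAfix, hω, Pi.zero_apply, add_zero]


lemma oneStep_unique
    (hXval : ∀ t ω, ∃ i : Fin N, X t ω = fun j => if j = i then (1 : ℝ) else 0)
    (h𝓕 : ∀ t, (𝓕 t : MeasurableSpace Ω)
      = MeasurableSpace.comap (fun ω (s : Fin (t + 1)) => X (s : ℕ) ω) inferInstance)
    (hXint : ∀ t, Integrable (X t) μ)
    (hM : ∀ t, M t = X t - μ[X t | 𝓕 (t - 1)])
    (hFmeas : ∀ s < T, ∀ (Y : Ω → Fin K → ℝ) (Z : Ω → Fin K → Fin N → ℝ),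
      StronglyMeasurable[𝓕 s] Y → StronglyMeasurable[𝓕 s] Z →
      StronglyMeasurable[𝓕 s] (fun ω => F ω s (Y ω) (Z ω)))
    (hFinv : ∀ s < T, ∀ (Y : Ω → Fin K → ℝ) (Z1 Z2 : Ω → Fin K → Fin N → ℝ),
      (∀ᵐ ω ∂μ, (fun i => ∑ j, Z1 ω i j * M (s + 1) ω j)
          = (fun i => ∑ j, Z2 ω i j * M (s + 1) ω j)) →
      ∀ᵐ ω ∂μ, F ω s (Y ω) (Z1 ω) = F ω s (Y ω) (Z2 ω))
    (hFbij : ∀ s < T, ∀ Z : Ω → Fin K → Fin N → ℝ,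
      ∀ᵐ ω ∂μ, Function.Bijective (fun y : Fin K → ℝ => y - F ω s y (Z ω)))
    (s : ℕ) (hs : s < T) {Ys Y's : Ω → Fin K → ℝ} {Zs Z's : Ω → Fin K → Fin N → ℝ}
    (hYs : StronglyMeasurable[𝓕 s] Ys) (hZs : StronglyMeasurable[𝓕 s] Zs)
    (hY's : StronglyMeasurable[𝓕 s] Y's) (hZ's : StronglyMeasurable[𝓕 s] Z's)
    (h : ∀ᵐ ω ∂μ,
      (Ys ω - F ω s (Ys ω) (Zs ω) + fun i => ∑ j, Zs ω i j * M (s + 1) ω j)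
        = (Y's ω - F ω s (Y's ω) (Z's ω) + fun i => ∑ j, Z's ω i j * M (s + 1) ω j)) :
    (Ys =ᵐ[μ] Y's) ∧
      ∀ᵐ ω ∂μ, (fun i => ∑ j, Zs ω i j * M (s + 1) ω j)
        = (fun i => ∑ j, Z's ω i j * M (s + 1) ω j) := by
  -- componentwise conditional expectation
  have hcomp : ∀ i : Fin K,
      (fun ω => Ys ω i - F ω s (Ys ω) (Zs ω) i)
        =ᵐ[μ] fun ω => Y's ω i - F ω s (Y's ω) (Z's ω) i := by
    intro i
    have hae : (fun ω => Ys ω i - F ω s (Ys ω) (Zs ω) i + ∑ j, Zs ω i j * M (s + 1) ω j)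
        =ᵐ[μ] fun ω => Y's ω i - F ω s (Y's ω) (Z's ω) i
          + ∑ j, Z's ω i j * M (s + 1) ω j := by
      filter_upwards [h] with ω hω
      have := congrFun hω i
      simpa [Pi.add_apply, Pi.sub_apply] using this
    have h1 := condexp_rhs hXval h𝓕 hXint hM hFmeas s hs hYs hZs i
    have h2 := condexp_rhs hXval h𝓕 hXint hM hFmeas s hs hY's hZ's i
    exact h1.symm.trans ((condExp_congr_ae hae).trans h2)
  have hvec : ∀ᵐ ω ∂μ, Ys ω - F ω s (Ys ω) (Zs ω) = Y's ω - F ω s (Y's ω) (Z's ω) := by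
    have := ae_all_iff.mpr hcomp
    filter_upwards [this] with ω hω
    funext i
    simpa [Pi.sub_apply] using hω i
  have hZM : ∀ᵐ ω ∂μ, (fun i => ∑ j, Zs ω i j * M (s + 1) ω j)
      = (fun i => ∑ j, Z's ω i j * M (s + 1) ω j) := by
    filter_upwards [h, hvec] with ω hω hv
    have := hω
    rw [hv] at this
    exact add_left_cancel this
  refine ⟨?_, hZM⟩
  have hFeq := hFinv s hs Ys Zs Z's hZM
  filter_upwards [hvec, hFeq, hFbij s hs Z's] with ω hv hf hbij
  have : Ys ω - F ω s (Ys ω) (Z's ω) = Y's ω - F ω s (Y's ω) (Z's ω) := by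
    rw [← hf]; exact hv
  exact hbij.injective this


lemma oneStep_exists
    (hXval : ∀ t ω, ∃ i : Fin N, X t ω = fun j => if j = i then (1 : ℝ) else 0)
    (h𝓕 : ∀ t, (𝓕 t : MeasurableSpace Ω)
      = MeasurableSpace.comap (fun ω (s : Fin (t + 1)) => X (s : ℕ) ω) inferInstance)
    (hXint : ∀ t, Integrable (X t) μ)
    (hM : ∀ t, M t = X t - μ[X t | 𝓕 (t - 1)])
    (hFmeas : ∀ s < T, ∀ (Y : Ω → Fin K → ℝ) (Z : Ω → Fin K → Fin N → ℝ),
      StronglyMeasurable[𝓕 s] Y → StronglyMeasurable[𝓕 s] Z →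
      StronglyMeasurable[𝓕 s] (fun ω => F ω s (Y ω) (Z ω)))
    (hFbij : ∀ s < T, ∀ Z : Ω → Fin K → Fin N → ℝ,
      ∀ᵐ ω ∂μ, Function.Bijective (fun y : Fin K → ℝ => y - F ω s y (Z ω)))
    (s : ℕ) (hs : s < T) {W : Ω → Fin K → ℝ} (hW : StronglyMeasurable[𝓕 (s + 1)] W) :
    ∃ (Ys : Ω → Fin K → ℝ) (Zs : Ω → Fin K → Fin N → ℝ),
      StronglyMeasurable[𝓕 s] Ys ∧ StronglyMeasurable[𝓕 s] Zs ∧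
      ∀ᵐ ω ∂μ, W ω = Ys ω - F ω s (Ys ω) (Zs ω)
        + fun i => ∑ j, Zs ω i j * M (s + 1) ω j := by
  classical
  have hWc : ∀ ω ω', pim X (s + 1) ω = pim X (s + 1) ω' → W ω = W ω' :=
    fiberConst h𝓕 hW.measurable
  set basis : Fin N → Fin N → ℝ := fun i j => if j = i then 1 else 0 with hbasis
  set G : Fin N → (Fin (s + 1) → Fin N → ℝ) → Fin K → ℝ :=
    fun j v => if hv : ∃ ω', pim X s ω' = v ∧ X (s + 1) ω' = basis j then W hv.choose else 0
    with hGdef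
  set g : Fin N → Ω → Fin K → ℝ := fun j ω => G j (pim X s ω) with hgdef
  have hgc : ∀ j ω ω', pim X s ω = pim X s ω' → g j ω = g j ω' :=
    fun j ω ω' h => congrArg (G j) h
  -- key pointwise representation
  have hrep : ∀ ω, W ω = fun i => ∑ j, X (s + 1) ω j * g j ω i := by
    intro ω
    obtain ⟨i0, hi0⟩ := hXval (s + 1) ω
    have hex : ∃ ω', pim X s ω' = pim X s ω ∧ X (s + 1) ω' = basis i0 := ⟨ω, rfl, hi0⟩
    have hgval : g i0 ω = W ω := by
      have h1 : g i0 ω = W hex.choose := by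
        show G i0 (pim X s ω) = W hex.choose
        rw [hGdef]
        simp only []
        rw [dif_pos hex]
      obtain ⟨hc1, hc2⟩ := hex.choose_spec
      have hπ : pim X (s + 1) hex.choose = pim X (s + 1) ω := by
        funext r
        by_cases hr : (r : ℕ) < s + 1
        · exact congrFun hc1 ⟨(r : ℕ), hr⟩
        · have hr' : (r : ℕ) = s + 1 := by omega
          show X (r : ℕ) hex.choose = X (r : ℕ) ω
          rw [hr', hc2, hi0]
      rw [h1, hWc _ _ hπ]
    funext i
    have hsum : ∑ j, X (s + 1) ω j * g j ω i = g i0 ω i := by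
      rw [hi0]
      simp [Finset.sum_ite_eq']
    rw [hsum, hgval]
  set Zs : Ω → Fin K → Fin N → ℝ := fun ω i j => g j ω i with hZdef
  have hZc : ∀ ω ω', pim X s ω = pim X s ω' → Zs ω = Zs ω' := by
    intro ω ω' h
    funext i j
    show g j ω i = g j ω' i
    rw [hgc j ω ω' h]
  have hZsm : StronglyMeasurable[𝓕 s] Zs := (measOf hXval h𝓕 hZc).stronglyMeasurable
  set GW : Ω → Fin K → ℝ := fun ω i => (μ[fun ω' => W ω' i|𝓕 s]) ω with hGWdef
  have hGWm : Measurable[𝓕 s] GW :=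
    @measurable_pi_lambda Ω (Fin K) (fun _ => ℝ) (𝓕 s) _ _
      fun i => stronglyMeasurable_condExp.measurable
  have hGWc : ∀ ω ω', pim X s ω = pim X s ω' → GW ω = GW ω' := fiberConst h𝓕 hGWm
  set Ys : Ω → Fin K → ℝ :=
    fun ω => Function.invFun (fun y : Fin K → ℝ => y - F ω s y (Zs ω)) (GW ω) with hYdef
  have hYc : ∀ ω ω', pim X s ω = pim X s ω' → Ys ω = Ys ω' := by
    intro ω ω' h
    have hFc : ∀ y : Fin K → ℝ, F ω s y (Zs ω) = F ω' s y (Zs ω') := fun y =>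
      fiberConst h𝓕 (hFmeas s hs (fun _ => y) Zs stronglyMeasurable_const hZsm).measurable
        ω ω' h
    show Function.invFun (fun y : Fin K → ℝ => y - F ω s y (Zs ω)) (GW ω)
        = Function.invFun (fun y : Fin K → ℝ => y - F ω' s y (Zs ω')) (GW ω')
    rw [hGWc ω ω' h]
    congr 1
    funext y
    rw [hFc y]
  have hYsm : StronglyMeasurable[𝓕 s] Ys := (measOf hXval h𝓕 hYc).stronglyMeasurable
  -- integrability of W
  obtain ⟨CW, hCW⟩ := bdd_of_sm hXval h𝓕 hW
  have hWint : Integrable W μ :=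
    integrable_of_bounded' ((hW.mono (𝓕.le _)).aestronglyMeasurable) hCW
  -- components of Z
  have hgi_sm : ∀ (i : Fin K) (j : Fin N), StronglyMeasurable[𝓕 s] fun ω => g j ω i :=
    fun i j => (continuous_apply j).comp_stronglyMeasurable
      ((continuous_apply i).comp_stronglyMeasurable hZsm)
  obtain ⟨Cg, hCg⟩ := bdd_of_sm hXval h𝓕 hZsm
  have hgb : ∀ (i : Fin K) (j : Fin N) ω, ‖g j ω i‖ ≤ Cg := fun i j ω =>
    le_trans (le_trans (norm_le_pi_norm (Zs ω i) j) (norm_le_pi_norm (Zs ω) i)) (hCg ω)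
  have hXj_int : ∀ j, Integrable (fun ω => X (s + 1) ω j) μ := fun j =>
    (ContinuousLinearMap.proj (R := ℝ) (φ := fun _ : Fin N => ℝ) j).integrable_comp
      (hXint (s + 1))
  have hprod_int : ∀ (i : Fin K) (j : Fin N),
      Integrable (fun ω => g j ω i * X (s + 1) ω j) μ := fun i j =>
    Integrable.bdd_mul (hXj_int j) (((hgi_sm i j).mono (𝓕.le s)).aestronglyMeasurable)
      (ae_of_all _ fun ω => hgb i j ω)
  -- the conditional expectation identity
  have h2 : ∀ i : Fin K,
      (fun ω => ∑ j, g j ω i * (μ[X (s + 1)|𝓕 s]) ω j) =ᵐ[μ] fun ω => GW ω i := by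
    intro i
    have hWieq : (fun ω => W ω i) = ∑ j, fun ω => g j ω i * X (s + 1) ω j := by
      funext ω
      have hW' := congrFun (hrep ω) i
      simp only [Finset.sum_apply]
      rw [hW']
      exact Finset.sum_congr rfl fun j _ => mul_comm _ _
    have hsum := condExp_finsetSum (μ := μ) (m := 𝓕 s) (s := (Finset.univ : Finset (Fin N)))
      (f := fun j ω => g j ω i * X (s + 1) ω j) (fun j _ => hprod_int i j)
    have hWcond : μ[fun ω => W ω i|𝓕 s]
        =ᵐ[μ] ∑ j, μ[fun ω => g j ω i * X (s + 1) ω j|𝓕 s] := by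
      rw [hWieq]; exact hsum
    have hpull : ∀ j, μ[fun ω => g j ω i * X (s + 1) ω j|𝓕 s]
        =ᵐ[μ] (fun ω => g j ω i) * μ[fun ω => X (s + 1) ω j|𝓕 s] := fun j =>
      condExp_mul_of_stronglyMeasurable_left (hgi_sm i j) (hprod_int i j) (hXj_int j)
    have hcoord : ∀ j, (fun ω => (μ[X (s + 1)|𝓕 s]) ω j)
        =ᵐ[μ] μ[fun ω => X (s + 1) ω j|𝓕 s] := fun j =>
      condexp_apply_coord (𝓕.le s) (hXint (s + 1)) j
    filter_upwards [hWcond, ae_all_iff.mpr hpull, ae_all_iff.mpr hcoord] with ω hω hp hc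
    show ∑ j, g j ω i * (μ[X (s + 1)|𝓕 s]) ω j = GW ω i
    have hGWi : GW ω i = (μ[fun ω' => W ω' i|𝓕 s]) ω := rfl
    rw [hGWi, hω, Finset.sum_apply]
    refine Finset.sum_congr rfl fun j _ => ?_
    rw [hp j, Pi.mul_apply, ← hc j]
  -- the martingale representation
  have hZM : ∀ᵐ ω ∂μ, (fun i => ∑ j, Zs ω i j * M (s + 1) ω j)
      = fun i => W ω i - GW ω i := by
    filter_upwards [ae_all_iff.mpr h2] with ω hω
    funext i
    have hpt : ∑ j, Zs ω i j * M (s + 1) ω j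
        = W ω i - ∑ j, g j ω i * (μ[X (s + 1)|𝓕 s]) ω j := by
      have hterm : ∀ j : Fin N, Zs ω i j * M (s + 1) ω j
          = g j ω i * X (s + 1) ω j - g j ω i * (μ[X (s + 1)|𝓕 s]) ω j := by
        intro j
        show g j ω i * M (s + 1) ω j = _
        rw [M_coord hM s ω j]
        ring
      rw [Finset.sum_congr rfl fun j _ => hterm j, Finset.sum_sub_distrib]
      congr 1
      have hW' := congrFun (hrep ω) i
      rw [hW']
      exact Finset.sum_congr rfl fun j _ => mul_comm _ _
    rw [hpt, hω i]
  refine ⟨Ys, Zs, hYsm, hZsm, ?_⟩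
  filter_upwards [hFbij s hs Zs, hZM] with ω hbij hzm
  have hinv : Ys ω - F ω s (Ys ω) (Zs ω) = GW ω :=
    Function.invFun_eq (hbij.surjective (GW ω))
  rw [hzm, hinv]
  funext i
  simp only [Pi.add_apply, Pi.sub_apply]
  ring


lemma exists_upto
    (hXval : ∀ t ω, ∃ i : Fin N, X t ω = fun j => if j = i then (1 : ℝ) else 0)
    (h𝓕 : ∀ t, (𝓕 t : MeasurableSpace Ω)
      = MeasurableSpace.comap (fun ω (s : Fin (t + 1)) => X (s : ℕ) ω) inferInstance)
    (hXint : ∀ t, Integrable (X t) μ)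
    (hM : ∀ t, M t = X t - μ[X t | 𝓕 (t - 1)])
    (hFmeas : ∀ s < T, ∀ (Y : Ω → Fin K → ℝ) (Z : Ω → Fin K → Fin N → ℝ),
      StronglyMeasurable[𝓕 s] Y → StronglyMeasurable[𝓕 s] Z →
      StronglyMeasurable[𝓕 s] (fun ω => F ω s (Y ω) (Z ω)))
    (hFbij : ∀ s < T, ∀ Z : Ω → Fin K → Fin N → ℝ,
      ∀ᵐ ω ∂μ, Function.Bijective (fun y : Fin K → ℝ => y - F ω s y (Z ω)))
    (t : ℕ) (ht : t ≤ T) :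
    ∀ (Yt : Ω → Fin K → ℝ), StronglyMeasurable[𝓕 t] Yt →
    ∃ (Y : ℕ → Ω → Fin K → ℝ) (Z : ℕ → Ω → Fin K → Fin N → ℝ),
      (∀ s, StronglyMeasurable[𝓕 s] (Y s)) ∧ (∀ s, StronglyMeasurable[𝓕 s] (Z s)) ∧
      (∀ s < t, ∀ᵐ ω ∂μ, Y (s + 1) ω = Y s ω - F ω s (Y s ω) (Z s ω)
        + fun i => ∑ j, Z s ω i j * M (s + 1) ω j) ∧ Y t =ᵐ[μ] Yt := by
  induction t with
  | zero =>
    intro Yt hYt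
    exact ⟨fun _ => Yt, fun _ => fun _ _ _ => 0,
      fun s => hYt.mono (𝓕.mono (Nat.zero_le s)),
      fun s => stronglyMeasurable_const,
      fun s hs => absurd hs (Nat.not_lt_zero s), Filter.EventuallyEq.rfl⟩
  | succ t ih =>
    intro Yt hYt
    have hsT : t < T := lt_of_lt_of_le (Nat.lt_succ_self t) ht
    obtain ⟨Ys, Zs, hYsm, hZsm, hstep⟩ :=
      oneStep_exists hXval h𝓕 hXint hM hFmeas hFbij t hsT hYt
    obtain ⟨Y, Z, hYm, hZm, hdyn, hYt'⟩ := ih (Nat.le_of_succ_le ht) Ys hYsm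
    refine ⟨fun r => if r ≤ t then Y r else Yt, fun r => if r = t then Zs else Z r,
      ?_, ?_, ?_, ?_⟩
    · intro r
      by_cases hr : r ≤ t
      · simpa [hr] using hYm r
      · have h1 : t + 1 ≤ r := by omega
        simpa [hr] using hYt.mono (𝓕.mono h1)
    · intro r
      by_cases hr : r = t
      · subst hr; simpa using hZsm
      · simpa [hr] using hZm r
    · intro u hu
      by_cases hut : u < t
      · have h1 : u ≤ t := le_of_lt hut
        have h2 : u + 1 ≤ t := hut
        have h3 : ¬(u = t) := by omega
        simp only [if_pos h1, if_pos h2, if_neg h3]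
        exact hdyn u hut
      · have hut' : u = t := by omega
        subst hut'
        simp only [if_pos (le_refl u), if_neg (by omega : ¬ u + 1 ≤ u), if_pos rfl]
        filter_upwards [hstep, hYt'] with ω h1 h2
        rw [h2]
        exact h1
    · simp only [if_neg (by omega : ¬ t + 1 ≤ t)]
      exact Filter.EventuallyEq.rfl

lemma exists_from
    (hXval : ∀ t ω, ∃ i : Fin N, X t ω = fun j => if j = i then (1 : ℝ) else 0)
    (h𝓕 : ∀ t, (𝓕 t : MeasurableSpace Ω)
      = MeasurableSpace.comap (fun ω (s : Fin (t + 1)) => X (s : ℕ) ω) inferInstance)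
    (hXint : ∀ t, Integrable (X t) μ)
    (hM : ∀ t, M t = X t - μ[X t | 𝓕 (t - 1)])
    (hFmeas : ∀ s < T, ∀ (Y : Ω → Fin K → ℝ) (Z : Ω → Fin K → Fin N → ℝ),
      StronglyMeasurable[𝓕 s] Y → StronglyMeasurable[𝓕 s] Z →
      StronglyMeasurable[𝓕 s] (fun ω => F ω s (Y ω) (Z ω)))
    (hFbij : ∀ s < T, ∀ Z : Ω → Fin K → Fin N → ℝ,
      ∀ᵐ ω ∂μ, Function.Bijective (fun y : Fin K → ℝ => y - F ω s y (Z ω))) :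
    ∀ (d t : ℕ), t + d = T → ∀ (YT : Ω → Fin K → ℝ), StronglyMeasurable[𝓕 T] YT →
    ∃ (Y : ℕ → Ω → Fin K → ℝ) (Z : ℕ → Ω → Fin K → Fin N → ℝ),
      (∀ s, StronglyMeasurable[𝓕 s] (Y s)) ∧ (∀ s, StronglyMeasurable[𝓕 s] (Z s)) ∧
      (∀ s, t ≤ s → s < T → ∀ᵐ ω ∂μ, Y (s + 1) ω = Y s ω - F ω s (Y s ω) (Z s ω)
        + fun i => ∑ j, Z s ω i j * M (s + 1) ω j) ∧ Y T =ᵐ[μ] YT := by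
  intro d
  induction d with
  | zero =>
    intro t htd YT hYT
    refine ⟨fun r => if T ≤ r then YT else 0, fun _ => fun _ _ _ => 0, ?_, ?_, ?_, ?_⟩
    · intro r
      by_cases hr : T ≤ r
      · simpa [hr] using hYT.mono (𝓕.mono hr)
      · simp only [hr, if_false]; exact stronglyMeasurable_const
    · intro r; exact stronglyMeasurable_const
    · intro u hu huT
      exact absurd huT (by omega)
    · simp only [if_pos (le_refl T)]
      exact Filter.EventuallyEq.rfl
  | succ d ihd =>
    intro t htd YT hYT
    have h1 : (t + 1) + d = T := by omega
    obtain ⟨Y, Z, hYm, hZm, hdyn, hYT'⟩ := ihd (t + 1) h1 YT hYT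
    have htT : t < T := by omega
    obtain ⟨Ys, Zs, hYsm, hZsm, hstep⟩ :=
      oneStep_exists hXval h𝓕 hXint hM hFmeas hFbij t htT (hYm (t + 1))
    refine ⟨fun r => if r = t then Ys else Y r, fun r => if r = t then Zs else Z r,
      ?_, ?_, ?_, ?_⟩
    · intro r
      by_cases hr : r = t
      · subst hr; simpa using hYsm
      · simpa [hr] using hYm r
    · intro r
      by_cases hr : r = t
      · subst hr; simpa using hZsm
      · simpa [hr] using hZm r
    · intro u hu huT
      by_cases hut : u = t
      · subst hut
        simp only [if_neg (by omega : ¬ u + 1 = u), if_pos rfl]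
        exact hstep
      · have h2 : t + 1 ≤ u := by omega
        simp only [if_neg hut, if_neg (by omega : ¬ u + 1 = t)]
        exact hdyn u h2 huT
    · simp only [if_neg (by omega : ¬ T = t)]
      exact hYT'

lemma unique_range
    (hXval : ∀ t ω, ∃ i : Fin N, X t ω = fun j => if j = i then (1 : ℝ) else 0)
    (h𝓕 : ∀ t, (𝓕 t : MeasurableSpace Ω)
      = MeasurableSpace.comap (fun ω (s : Fin (t + 1)) => X (s : ℕ) ω) inferInstance)
    (hXint : ∀ t, Integrable (X t) μ)
    (hM : ∀ t, M t = X t - μ[X t | 𝓕 (t - 1)])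
    (hFmeas : ∀ s < T, ∀ (Y : Ω → Fin K → ℝ) (Z : Ω → Fin K → Fin N → ℝ),
      StronglyMeasurable[𝓕 s] Y → StronglyMeasurable[𝓕 s] Z →
      StronglyMeasurable[𝓕 s] (fun ω => F ω s (Y ω) (Z ω)))
    (hFinv : ∀ s < T, ∀ (Y : Ω → Fin K → ℝ) (Z1 Z2 : Ω → Fin K → Fin N → ℝ),
      (∀ᵐ ω ∂μ, (fun i => ∑ j, Z1 ω i j * M (s + 1) ω j)
          = (fun i => ∑ j, Z2 ω i j * M (s + 1) ω j)) →
      ∀ᵐ ω ∂μ, F ω s (Y ω) (Z1 ω) = F ω s (Y ω) (Z2 ω))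
    (hFbij : ∀ s < T, ∀ Z : Ω → Fin K → Fin N → ℝ,
      ∀ᵐ ω ∂μ, Function.Bijective (fun y : Fin K → ℝ => y - F ω s y (Z ω)))
    (a b : ℕ) (hbT : b ≤ T)
    {Y Y' : ℕ → Ω → Fin K → ℝ} {Z Z' : ℕ → Ω → Fin K → Fin N → ℝ}
    (hYm : ∀ s, StronglyMeasurable[𝓕 s] (Y s)) (hZm : ∀ s, StronglyMeasurable[𝓕 s] (Z s))
    (hY'm : ∀ s, StronglyMeasurable[𝓕 s] (Y' s)) (hZ'm : ∀ s, StronglyMeasurable[𝓕 s] (Z' s))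
    (hdyn : ∀ s, a ≤ s → s < b → ∀ᵐ ω ∂μ, Y (s + 1) ω = Y s ω - F ω s (Y s ω) (Z s ω)
      + fun i => ∑ j, Z s ω i j * M (s + 1) ω j)
    (hdyn' : ∀ s, a ≤ s → s < b → ∀ᵐ ω ∂μ, Y' (s + 1) ω = Y' s ω - F ω s (Y' s ω) (Z' s ω)
      + fun i => ∑ j, Z' s ω i j * M (s + 1) ω j)
    (hb : Y b =ᵐ[μ] Y' b) :
    (∀ s, a ≤ s → s ≤ b → Y s =ᵐ[μ] Y' s) ∧
      (∀ s, a ≤ s → s < b → ∀ᵐ ω ∂μ, (fun i => ∑ j, Z s ω i j * M (s + 1) ω j)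
        = fun i => ∑ j, Z' s ω i j * M (s + 1) ω j) := by
  have key : ∀ k s, a ≤ s → s + k = b → Y s =ᵐ[μ] Y' s := by
    intro k
    induction k with
    | zero =>
      intro s _ hsk
      have : s = b := by omega
      subst this; exact hb
    | succ k ihk =>
      intro s hsa hsk
      have hnext : Y (s + 1) =ᵐ[μ] Y' (s + 1) := ihk (s + 1) (by omega) (by omega)
      have hsT : s < T := by omega
      have hRR : ∀ᵐ ω ∂μ,
          (Y s ω - F ω s (Y s ω) (Z s ω) + fun i => ∑ j, Z s ω i j * M (s + 1) ω j)
            = (Y' s ω - F ω s (Y' s ω) (Z' s ω)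
              + fun i => ∑ j, Z' s ω i j * M (s + 1) ω j) := by
        filter_upwards [hdyn s hsa (by omega), hdyn' s hsa (by omega), hnext]
          with ω h1 h2 h3
        rw [← h1, ← h2, h3]
      exact (oneStep_unique hXval h𝓕 hXint hM hFmeas hFinv hFbij s hsT
        (hYm s) (hZm s) (hY'm s) (hZ'm s) hRR).1
  refine ⟨fun s hsa hsb => key (b - s) s hsa (by omega), ?_⟩
  intro s hsa hsb
  have hnext : Y (s + 1) =ᵐ[μ] Y' (s + 1) := key (b - (s + 1)) (s + 1) (by omega) (by omega)
  have hsT : s < T := by omega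
  have hRR : ∀ᵐ ω ∂μ,
      (Y s ω - F ω s (Y s ω) (Z s ω) + fun i => ∑ j, Z s ω i j * M (s + 1) ω j)
        = (Y' s ω - F ω s (Y' s ω) (Z' s ω)
          + fun i => ∑ j, Z' s ω i j * M (s + 1) ω j) := by
    filter_upwards [hdyn s hsa hsb, hdyn' s hsa hsb, hnext] with ω h1 h2 h3
    rw [← h1, ← h2, h3]
  exact (oneStep_unique hXval h𝓕 hXint hM hFmeas hFinv hFbij s hsT
    (hYm s) (hZm s) (hY'm s) (hZ'm s) hRR).2


end Ctx

end MSBaux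

/-- multi-step bijection.  Under the hypotheses of the existence theorem,
for any `t ≤ T` there is a bijection (up to a.s. equality and `∼_M`-equivalence) between
`(Y 0, {Z s}_{s<t})` and `Y t`, and between `(Y t, {Z s}_{t ≤ s < T})` and `Y T`, where the
dynamics are `Y (s+1) = Y s - F(ω,s,Y s,Z s) + Z s • M (s+1)`. -/
theorem multi_step_bijection
    {Ω : Type*} {m0 : MeasurableSpace Ω} {μ : Measure Ω} [IsProbabilityMeasure μ]
    {N K T : ℕ} (𝓕 : Filtration ℕ m0)
    (X : ℕ → Ω → (Fin N → ℝ))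
    (hXval : ∀ t ω, ∃ i : Fin N, X t ω = fun j => if j = i then (1 : ℝ) else 0)
    (h𝓕 : ∀ t, (𝓕 t : MeasurableSpace Ω)
      = MeasurableSpace.comap (fun ω (s : Fin (t + 1)) => X (s : ℕ) ω) inferInstance)
    (hXint : ∀ t, Integrable (X t) μ)
    (M : ℕ → Ω → (Fin N → ℝ))
    (hM : ∀ t, M t = X t - μ[X t | 𝓕 (t - 1)])
    (F : Ω → ℕ → (Fin K → ℝ) → (Fin K → Fin N → ℝ) → (Fin K → ℝ))
    (hFmeas : ∀ s < T, ∀ (Y : Ω → Fin K → ℝ) (Z : Ω → Fin K → Fin N → ℝ),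
      StronglyMeasurable[𝓕 s] Y → StronglyMeasurable[𝓕 s] Z →
      StronglyMeasurable[𝓕 s] (fun ω => F ω s (Y ω) (Z ω)))
    (hFinv : ∀ s < T, ∀ (Y : Ω → Fin K → ℝ) (Z1 Z2 : Ω → Fin K → Fin N → ℝ),
      (∀ᵐ ω ∂μ, (fun i => ∑ j, Z1 ω i j * M (s + 1) ω j)
          = (fun i => ∑ j, Z2 ω i j * M (s + 1) ω j)) →
      ∀ᵐ ω ∂μ, F ω s (Y ω) (Z1 ω) = F ω s (Y ω) (Z2 ω))
    (hFbij : ∀ s < T, ∀ Z : Ω → Fin K → Fin N → ℝ,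
      ∀ᵐ ω ∂μ, Function.Bijective (fun y : Fin K → ℝ => y - F ω s y (Z ω)))
    (t : ℕ) (ht : t ≤ T) :
    -- Bijection between (Y 0, {Z s}_{s < t}) and Y t:
    ((∀ Yt : Ω → Fin K → ℝ,
        StronglyMeasurable[𝓕 t] Yt → (∃ C, ∀ ω, ‖Yt ω‖ ≤ C) →
        ∃ (Y : ℕ → Ω → Fin K → ℝ) (Z : ℕ → Ω → Fin K → Fin N → ℝ),
          (∀ s, StronglyMeasurable[𝓕 s] (Y s)) ∧ (∀ s, StronglyMeasurable[𝓕 s] (Z s)) ∧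
          (∀ s < t, ∀ᵐ ω ∂μ,
            Y (s + 1) ω
              = Y s ω - F ω s (Y s ω) (Z s ω) + (fun i => ∑ j, Z s ω i j * M (s + 1) ω j)) ∧
          Y t =ᵐ[μ] Yt) ∧
      (∀ (Y Y' : ℕ → Ω → Fin K → ℝ) (Z Z' : ℕ → Ω → Fin K → Fin N → ℝ),
        (∀ s, StronglyMeasurable[𝓕 s] (Y s)) → (∀ s, StronglyMeasurable[𝓕 s] (Z s)) →
        (∀ s, StronglyMeasurable[𝓕 s] (Y' s)) → (∀ s, StronglyMeasurable[𝓕 s] (Z' s)) →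
        (∀ s < t, ∀ᵐ ω ∂μ,
          Y (s + 1) ω
            = Y s ω - F ω s (Y s ω) (Z s ω) + (fun i => ∑ j, Z s ω i j * M (s + 1) ω j)) →
        (∀ s < t, ∀ᵐ ω ∂μ,
          Y' (s + 1) ω
            = Y' s ω - F ω s (Y' s ω) (Z' s ω)
              + (fun i => ∑ j, Z' s ω i j * M (s + 1) ω j)) →
        Y t =ᵐ[μ] Y' t →
        (Y 0 =ᵐ[μ] Y' 0) ∧
        ∀ s < t, ∀ᵐ ω ∂μ,
          (fun i => ∑ j, Z s ω i j * M (s + 1) ω j)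
            = (fun i => ∑ j, Z' s ω i j * M (s + 1) ω j))) ∧
    -- Bijection between (Y t, {Z s}_{t ≤ s < T}) and Y T:
    ((∀ YT : Ω → Fin K → ℝ,
        StronglyMeasurable[𝓕 T] YT → (∃ C, ∀ ω, ‖YT ω‖ ≤ C) →
        ∃ (Y : ℕ → Ω → Fin K → ℝ) (Z : ℕ → Ω → Fin K → Fin N → ℝ),
          (∀ s, StronglyMeasurable[𝓕 s] (Y s)) ∧ (∀ s, StronglyMeasurable[𝓕 s] (Z s)) ∧
          (∀ s, t ≤ s → s < T → ∀ᵐ ω ∂μ,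
            Y (s + 1) ω
              = Y s ω - F ω s (Y s ω) (Z s ω) + (fun i => ∑ j, Z s ω i j * M (s + 1) ω j)) ∧
          Y T =ᵐ[μ] YT) ∧
      (∀ (Y Y' : ℕ → Ω → Fin K → ℝ) (Z Z' : ℕ → Ω → Fin K → Fin N → ℝ),
        (∀ s, StronglyMeasurable[𝓕 s] (Y s)) → (∀ s, StronglyMeasurable[𝓕 s] (Z s)) →
        (∀ s, StronglyMeasurable[𝓕 s] (Y' s)) → (∀ s, StronglyMeasurable[𝓕 s] (Z' s)) →
        (∀ s, t ≤ s → s < T → ∀ᵐ ω ∂μ,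
          Y (s + 1) ω
            = Y s ω - F ω s (Y s ω) (Z s ω) + (fun i => ∑ j, Z s ω i j * M (s + 1) ω j)) →
        (∀ s, t ≤ s → s < T → ∀ᵐ ω ∂μ,
          Y' (s + 1) ω
            = Y' s ω - F ω s (Y' s ω) (Z' s ω)
              + (fun i => ∑ j, Z' s ω i j * M (s + 1) ω j)) →
        Y T =ᵐ[μ] Y' T →
        (Y t =ᵐ[μ] Y' t) ∧
        ∀ s, t ≤ s → s < T → ∀ᵐ ω ∂μ,
          (fun i => ∑ j, Z s ω i j * M (s + 1) ω j)
            = (fun i => ∑ j, Z' s ω i j * M (s + 1) ω j))) := by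
  refine ⟨⟨?_, ?_⟩, ?_, ?_⟩
  · intro Yt hYt _
    obtain ⟨Y, Z, h1, h2, h3, h4⟩ :=
      MSBaux.exists_upto hXval h𝓕 hXint hM hFmeas hFbij t ht Yt hYt
    exact ⟨Y, Z, h1, h2, h3, h4⟩
  · intro Y Y' Z Z' hYm hZm hY'm hZ'm hdyn hdyn' hbt
    obtain ⟨h1, h2⟩ := MSBaux.unique_range hXval h𝓕 hXint hM hFmeas hFinv hFbij 0 t ht
      hYm hZm hY'm hZ'm (fun s _ hs => hdyn s hs) (fun s _ hs => hdyn' s hs) hbt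
    exact ⟨h1 0 (le_refl 0) (Nat.zero_le t), fun s hs => h2 s (Nat.zero_le s) hs⟩
  · intro YT hYT _
    obtain ⟨Y, Z, h1, h2, h3, h4⟩ :=
      MSBaux.exists_from hXval h𝓕 hXint hM hFmeas hFbij (T - t) t (by omega) YT hYT
    exact ⟨Y, Z, h1, h2, h3, h4⟩
  · intro Y Y' Z Z' hYm hZm hY'm hZ'm hdyn hdyn' hbT
    obtain ⟨h1, h2⟩ := MSBaux.unique_range hXval h𝓕 hXint hM hFmeas hFinv hFbij t T le_rfl
      hYm hZm hY'm hZ'm hdyn hdyn' hbT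
    exact ⟨h1 t le_rfl ht, h2⟩
end

section
/- (Comparison theorem) Let (Y^1,Z^1), (Y^2,Z^2) solve discrete BSDEs with drivers F^1, F^2 and terminal conditions Q^1, Q^2, both satisfying the existence theorem. Assume componentwise a.s.: (i) Q^1 ≥ Q^2; (ii) F^1(ω,t,Y^2_t,Z^2_t) ≥ F^2(ω,t,Y^2_t,Z^2_t) for all t; (iii) for all t and i, e_i^* F^1(ω,t,Y^2_t,Z^1_t) - e_i^* F^1(ω,t,Y^2_t,Z^2_t) ≥ min_{j ∈ J_t} e_i^*(Z^1_t - Z^2_t)(e_j - E[X_{t+1}|F_t]), where J_t := {j : P(X_{t+1}=e_j|F_t) > 0}; (iv) for all t, if Y^1_t - F^1(ω,t,Y^1_t,Z^1_t) ≥ Y^2_t - F^1(ω,t,Y^2_t,Z^1_t) then Y^1_t ≥ Y^2_t. Then Y^1_t ≥ Y^2_t a.s. for all t. -/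
open MeasureTheory

/-- If `q` is positive on a set `A`, has the same integral over `A` as `f`,
`f` is `{0,1}`-valued, and `f = 1` only on a null part of `A`, then `A` is null. -/
lemma aux_null {Ω : Type*} {m0 : MeasurableSpace Ω} {μ : Measure Ω}
    {f q : Ω → ℝ} (hq : Integrable q μ)
    {A : Set Ω} (hA : MeasurableSet A)
    (hint : ∫ ω in A, q ω ∂μ = ∫ ω in A, f ω ∂μ)
    (hpos : ∀ ω ∈ A, 0 < q ω)
    (h01 : ∀ ω, f ω = 0 ∨ f ω = 1)
    (hnull : μ (A ∩ {ω | f ω = 1}) = 0) : μ A = 0 := by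
  have hfz : ∀ᵐ ω ∂μ, ω ∈ A → f ω = 0 := by
    rw [ae_iff]
    refine measure_mono_null ?_ hnull
    intro ω hω
    simp only [Set.mem_setOf_eq, not_forall] at hω
    push_neg at hω
    exact ⟨hω.1, (h01 ω).resolve_left hω.2⟩
  have h1 : ∫ ω in A, f ω ∂μ = 0 := by
    rw [setIntegral_congr_ae hA (hfz.mono fun ω h hω => h hω)]
    simp
  by_contra hne
  have hApos : 0 < μ A := lt_of_le_of_ne bot_le (Ne.symm hne)
  have h2 : 0 < ∫ ω in A, q ω ∂μ := by
    rw [setIntegral_pos_iff_support_of_nonneg_ae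
      ((ae_restrict_iff' hA).2 (ae_of_all _ fun ω hω => (hpos ω hω).le)) hq.integrableOn]
    exact lt_of_lt_of_le hApos (measure_mono fun ω hω => ⟨(hpos ω hω).ne', hω⟩)
  rw [hint, h1] at h2
  exact lt_irrefl _ h2

/-- Component version of `setIntegral_condexp`. -/
lemma aux_comp {Ω : Type*} {m : MeasurableSpace Ω} {m0 : MeasurableSpace Ω} {μ : Measure Ω}
    (hm : m ≤ m0) [SigmaFinite (μ.trim hm)] {N : ℕ}
    {X : Ω → Fin N → ℝ} (hX : Integrable X μ) {A : Set Ω} (hA : MeasurableSet[m] A) (j : Fin N) :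
    ∫ ω in A, (μ[X|m]) ω j ∂μ = ∫ ω in A, X ω j ∂μ := by
  have h := setIntegral_condExp hm hX hA
  let L : (Fin N → ℝ) →L[ℝ] ℝ := ContinuousLinearMap.proj j
  have hc : Integrable (μ[X|m]) (μ.restrict A) := integrable_condExp.integrableOn
  have hx : Integrable X (μ.restrict A) := hX.integrableOn
  have h1 := L.integral_comp_comm (μ := μ.restrict A) hc
  have h2 := L.integral_comp_comm (μ := μ.restrict A) hx
  simpa [L, h] using h1.trans ((congrArg L h).trans h2.symm)


/-- `Jmin p d` is `min_{j ∈ J} (e_j - p)·d = min_{j : p j > 0} (d j - ⟨d, p⟩)`, the minimum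
over the indices `j` of positive conditional probability of
`e_i^*(Z¹-Z²)(e_j - E[X_{t+1}|𝓕 t])` with `d` the relevant row of `Z¹ - Z²` and
`p = E[X_{t+1}|𝓕 t]`. -/
noncomputable def Jmin {N : ℕ} (p d : Fin N → ℝ) : ℝ :=
  sInf {a : ℝ | ∃ j, 0 < p j ∧ a = d j - ∑ l, d l * p l}

set_option maxHeartbeats 1000000 in
/-- the comparison theorem for discrete BSDEs. -/
theorem comparison_theorem
    {Ω : Type*} {m0 : MeasurableSpace Ω} {μ : Measure Ω} [IsProbabilityMeasure μ]
    {N K T : ℕ} (𝓕 : Filtration ℕ m0)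
    (X : ℕ → Ω → (Fin N → ℝ))
    (hXval : ∀ t ω, ∃ i : Fin N, X t ω = fun j => if j = i then (1 : ℝ) else 0)
    (h𝓕 : ∀ t, (𝓕 t : MeasurableSpace Ω)
      = MeasurableSpace.comap (fun ω (s : Fin (t + 1)) => X (s : ℕ) ω) inferInstance)
    (hXint : ∀ t, Integrable (X t) μ)
    (M : ℕ → Ω → (Fin N → ℝ))
    (hM : ∀ t, M t = X t - μ[X t | 𝓕 (t - 1)])
    (F1 F2 : Ω → ℕ → (Fin K → ℝ) → (Fin K → Fin N → ℝ) → (Fin K → ℝ))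
    -- both drivers satisfy the conditions of the existence theorem
    (hFmeas : ∀ F' ∈ [F1, F2], ∀ t < T, ∀ (Y : Ω → Fin K → ℝ) (Z : Ω → Fin K → Fin N → ℝ),
      StronglyMeasurable[𝓕 t] Y → StronglyMeasurable[𝓕 t] Z →
      StronglyMeasurable[𝓕 t] (fun ω => F' ω t (Y ω) (Z ω)))
    (hFinv : ∀ F' ∈ [F1, F2], ∀ t < T,
      ∀ (Y : Ω → Fin K → ℝ) (Za Zb : Ω → Fin K → Fin N → ℝ),
      (∀ᵐ ω ∂μ, (fun i => ∑ j, Za ω i j * M (t + 1) ω j)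
          = (fun i => ∑ j, Zb ω i j * M (t + 1) ω j)) →
      ∀ᵐ ω ∂μ, F' ω t (Y ω) (Za ω) = F' ω t (Y ω) (Zb ω))
    (hFbij : ∀ F' ∈ [F1, F2], ∀ t < T, ∀ Z : Ω → Fin K → Fin N → ℝ,
      ∀ᵐ ω ∂μ, Function.Bijective (fun y : Fin K → ℝ => y - F' ω t y (Z ω)))
    -- the two solutions
    (Q1 Q2 : Ω → Fin K → ℝ)
    (hQ1meas : StronglyMeasurable[𝓕 T] Q1) (hQ2meas : StronglyMeasurable[𝓕 T] Q2)
    (Y1 Y2 : ℕ → Ω → Fin K → ℝ) (Z1 Z2 : ℕ → Ω → Fin K → Fin N → ℝ)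
    (hY1 : ∀ t, StronglyMeasurable[𝓕 t] (Y1 t)) (hZ1 : ∀ t, StronglyMeasurable[𝓕 t] (Z1 t))
    (hY2 : ∀ t, StronglyMeasurable[𝓕 t] (Y2 t)) (hZ2 : ∀ t, StronglyMeasurable[𝓕 t] (Z2 t))
    (hsol1 : ∀ t ≤ T, ∀ᵐ ω ∂μ,
      Y1 t ω - ∑ u ∈ Finset.Ico t T, F1 ω u (Y1 u ω) (Z1 u ω)
        + ∑ u ∈ Finset.Ico t T, (fun i => ∑ j, Z1 u ω i j * M (u + 1) ω j) = Q1 ω)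
    (hsol2 : ∀ t ≤ T, ∀ᵐ ω ∂μ,
      Y2 t ω - ∑ u ∈ Finset.Ico t T, F2 ω u (Y2 u ω) (Z2 u ω)
        + ∑ u ∈ Finset.Ico t T, (fun i => ∑ j, Z2 u ω i j * M (u + 1) ω j) = Q2 ω)
    -- (i) Q¹ ≥ Q² a.s.
    (hQ : ∀ᵐ ω ∂μ, ∀ i, Q2 ω i ≤ Q1 ω i)
    -- (ii) F¹(ω,t,Y²,Z²) ≥ F²(ω,t,Y²,Z²) a.s.
    (hii : ∀ t < T, ∀ᵐ ω ∂μ, ∀ i,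
      F2 ω t (Y2 t ω) (Z2 t ω) i ≤ F1 ω t (Y2 t ω) (Z2 t ω) i)
    -- (iii)
    (hiii : ∀ t < T, ∀ᵐ ω ∂μ, ∀ i,
      Jmin ((μ[X (t + 1) | 𝓕 t]) ω) (fun j => Z1 t ω i j - Z2 t ω i j)
        ≤ F1 ω t (Y2 t ω) (Z1 t ω) i - F1 ω t (Y2 t ω) (Z2 t ω) i)
    -- (iv)
    (hiv : ∀ t < T, ∀ᵐ ω ∂μ,
      (∀ i, Y2 t ω i - F1 ω t (Y2 t ω) (Z1 t ω) i
          ≤ Y1 t ω i - F1 ω t (Y1 t ω) (Z1 t ω) i) →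
      ∀ i, Y2 t ω i ≤ Y1 t ω i) :
    ∀ t ≤ T, ∀ᵐ ω ∂μ, ∀ i, Y2 t ω i ≤ Y1 t ω i := by
  have hle : ∀ s, (𝓕 s : MeasurableSpace Ω) ≤ m0 := fun s => 𝓕.le s
  suffices H : ∀ k, ∀ t, t + k = T → ∀ᵐ ω ∂μ, ∀ i, Y2 t ω i ≤ Y1 t ω i by
    intro t ht; exact H (T - t) t (by omega)
  intro k
  induction k with
  | zero =>
    intro t ht
    have ht' : t = T := by omega
    subst ht'
    filter_upwards [hsol1 t le_rfl, hsol2 t le_rfl, hQ] with ω e1 e2 hq i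
    simp only [Finset.Ico_self, Finset.sum_empty, sub_zero, add_zero] at e1 e2
    rw [e1, e2]; exact hq i
  | succ k ih =>
    intro t ht
    have htT : t < T := by omega
    have IH := ih (t + 1) (by omega)
    set p : Ω → Fin N → ℝ := μ[X (t + 1) | 𝓕 t] with hp
    have hMp : M (t + 1) = fun ω => X (t + 1) ω - p ω := by
      rw [hM (t + 1)]; rfl
    -- measurability of the ingredients
    have hF11 := hFmeas F1 (by simp) t htT (Y1 t) (Z1 t) (hY1 t) (hZ1 t)
    have hF21 := hFmeas F1 (by simp) t htT (Y2 t) (Z1 t) (hY2 t) (hZ1 t)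
    have hF22 := hFmeas F1 (by simp) t htT (Y2 t) (Z2 t) (hY2 t) (hZ2 t)
    have hpm : StronglyMeasurable[𝓕 t] p := stronglyMeasurable_condExp
    have mp : ∀ l, Measurable[𝓕 t] fun ω => p ω l :=
      fun l => (measurable_pi_apply l).comp hpm.measurable
    have mZ1 : ∀ i l, Measurable[𝓕 t] fun ω => Z1 t ω i l := fun i l =>
      (measurable_pi_apply l).comp ((measurable_pi_apply i).comp (hZ1 t).measurable)
    have mZ2 : ∀ i l, Measurable[𝓕 t] fun ω => Z2 t ω i l := fun i l =>
      (measurable_pi_apply l).comp ((measurable_pi_apply i).comp (hZ2 t).measurable)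
    have mY1 : ∀ i, Measurable[𝓕 t] fun ω => Y1 t ω i :=
      fun i => (measurable_pi_apply i).comp (hY1 t).measurable
    have mY2 : ∀ i, Measurable[𝓕 t] fun ω => Y2 t ω i :=
      fun i => (measurable_pi_apply i).comp (hY2 t).measurable
    have mF11 : ∀ i, Measurable[𝓕 t] fun ω => F1 ω t (Y1 t ω) (Z1 t ω) i :=
      fun i => (measurable_pi_apply i).comp hF11.measurable
    have mF21 : ∀ i, Measurable[𝓕 t] fun ω => F1 ω t (Y2 t ω) (Z1 t ω) i :=
      fun i => (measurable_pi_apply i).comp hF21.measurable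
    have mF22 : ∀ i, Measurable[𝓕 t] fun ω => F1 ω t (Y2 t ω) (Z2 t ω) i :=
      fun i => (measurable_pi_apply i).comp hF22.measurable
    -- one step equations
    have step1 : ∀ᵐ ω ∂μ,
        Y1 t ω - F1 ω t (Y1 t ω) (Z1 t ω)
          + (fun i => ∑ j, Z1 t ω i j * M (t + 1) ω j) = Y1 (t + 1) ω := by
      filter_upwards [hsol1 t htT.le, hsol1 (t + 1) htT] with ω e1 e2
      rw [Finset.sum_eq_sum_Ico_succ_bot htT, Finset.sum_eq_sum_Ico_succ_bot htT] at e1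
      linear_combination e1 - e2
    have step2 : ∀ᵐ ω ∂μ,
        Y2 t ω - F2 ω t (Y2 t ω) (Z2 t ω)
          + (fun i => ∑ j, Z2 t ω i j * M (t + 1) ω j) = Y2 (t + 1) ω := by
      filter_upwards [hsol2 t htT.le, hsol2 (t + 1) htT] with ω e1 e2
      rw [Finset.sum_eq_sum_Ico_succ_bot htT, Finset.sum_eq_sum_Ico_succ_bot htT] at e1
      linear_combination e1 - e2
    -- the key almost-everywhere inequality
    have good : ∀ᵐ ω ∂μ, ∀ i,
        (F1 ω t (Y2 t ω) (Z1 t ω) i - F1 ω t (Y2 t ω) (Z2 t ω) i)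
          - ((Y1 t ω i - F1 ω t (Y1 t ω) (Z1 t ω) i)
              - (Y2 t ω i - F1 ω t (Y2 t ω) (Z1 t ω) i))
          ≤ ∑ l, (Z1 t ω i l - Z2 t ω i l) * (X (t + 1) ω l - p ω l) := by
      filter_upwards [step1, step2, hii t htT, IH] with ω e1 e2 h2 hIH i
      have e1i := congrFun e1 i
      have e2i := congrFun e2 i
      simp only [Pi.add_apply, Pi.sub_apply] at e1i e2i
      have hsum : ∑ l, (Z1 t ω i l - Z2 t ω i l) * (X (t + 1) ω l - p ω l)
          = (∑ j, Z1 t ω i j * M (t + 1) ω j) - (∑ j, Z2 t ω i j * M (t + 1) ω j) := by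
        simp only [hMp, Pi.sub_apply]
        rw [← Finset.sum_sub_distrib]
        exact Finset.sum_congr rfl fun l _ => by ring
      rw [hsum]
      linarith [h2 i, hIH i, e1i, e2i]
    -- each bad set is null
    have hAnull : ∀ (i : Fin K) (j : Fin N),
        μ {ω | 0 < p ω j ∧
            (Z1 t ω i j - Z2 t ω i j) - ∑ l, (Z1 t ω i l - Z2 t ω i l) * p ω l
              < (F1 ω t (Y2 t ω) (Z1 t ω) i - F1 ω t (Y2 t ω) (Z2 t ω) i)
                - ((Y1 t ω i - F1 ω t (Y1 t ω) (Z1 t ω) i)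
                    - (Y2 t ω i - F1 ω t (Y2 t ω) (Z1 t ω) i))} = 0 := by
      intro i j
      have hsetA : MeasurableSet[𝓕 t] {ω | 0 < p ω j ∧
          (Z1 t ω i j - Z2 t ω i j) - ∑ l, (Z1 t ω i l - Z2 t ω i l) * p ω l
            < (F1 ω t (Y2 t ω) (Z1 t ω) i - F1 ω t (Y2 t ω) (Z2 t ω) i)
              - ((Y1 t ω i - F1 ω t (Y1 t ω) (Z1 t ω) i)
                  - (Y2 t ω i - F1 ω t (Y2 t ω) (Z1 t ω) i))} := by
        have ma : Measurable[𝓕 t] fun ω =>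
            (Z1 t ω i j - Z2 t ω i j) - ∑ l, (Z1 t ω i l - Z2 t ω i l) * p ω l :=
          ((mZ1 i j).sub (mZ2 i j)).sub
            (Finset.measurable_sum _ fun l _ => ((mZ1 i l).sub (mZ2 i l)).mul (mp l))
        have mb : Measurable[𝓕 t] fun ω =>
            (F1 ω t (Y2 t ω) (Z1 t ω) i - F1 ω t (Y2 t ω) (Z2 t ω) i)
              - ((Y1 t ω i - F1 ω t (Y1 t ω) (Z1 t ω) i)
                  - (Y2 t ω i - F1 ω t (Y2 t ω) (Z1 t ω) i)) :=
          ((mF21 i).sub (mF22 i)).sub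
            (((mY1 i).sub (mF11 i)).sub ((mY2 i).sub (mF21 i)))
        exact (measurableSet_lt measurable_const (mp j)).inter (measurableSet_lt ma mb)
      refine aux_null (f := fun ω => X (t + 1) ω j) (q := fun ω => p ω j)
        ?_ (hle t _ hsetA) ?_ (fun ω hω => hω.1) ?_ ?_
      · exact (ContinuousLinearMap.proj j : (Fin N → ℝ) →L[ℝ] ℝ).integrable_comp
          integrable_condExp
      · exact aux_comp (hle t) (hXint (t + 1)) hsetA j
      · intro ω
        obtain ⟨i0, hi0⟩ := hXval (t + 1) ω
        by_cases h : j = i0 <;> simp [hi0, h]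
      · refine measure_mono_null ?_ (ae_iff.1 good)
        rintro ω ⟨⟨hpj, hlt⟩, hXj⟩
        simp only [Set.mem_setOf_eq, not_forall]
        refine ⟨i, ?_⟩
        obtain ⟨i0, hi0⟩ := hXval (t + 1) ω
        have hXj1 : X (t + 1) ω j = 1 := hXj
        have hji0 : j = i0 := by
          by_contra hne
          rw [congrFun hi0 j, if_neg hne] at hXj1
          norm_num at hXj1
        have hXev : ∀ l, X (t + 1) ω l = if l = j then 1 else 0 := by
          intro l; rw [congrFun hi0 l, hji0]
        have hsum : ∑ l, (Z1 t ω i l - Z2 t ω i l) * (X (t + 1) ω l - p ω l)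
            = (Z1 t ω i j - Z2 t ω i j) - ∑ l, (Z1 t ω i l - Z2 t ω i l) * p ω l := by
          have h1 : ∀ l, (Z1 t ω i l - Z2 t ω i l) * (X (t + 1) ω l - p ω l)
              = (if l = j then Z1 t ω i l - Z2 t ω i l else 0)
                - (Z1 t ω i l - Z2 t ω i l) * p ω l := by
            intro l; rw [hXev l]; split <;> ring
          rw [Finset.sum_congr rfl fun l _ => h1 l, Finset.sum_sub_distrib]
          simp
        rw [hsum]
        exact not_le.2 hlt
    -- a.e. some conditional probability is positive
    have hA0 : μ {ω | ∀ l, p ω l ≤ 0} = 0 := by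
      have hmA0 : MeasurableSet[𝓕 t] {ω | ∀ l, p ω l ≤ 0} := by
        have : {ω | ∀ l, p ω l ≤ 0} = ⋂ l, {ω | p ω l ≤ 0} := by ext ω; simp
        rw [this]
        exact MeasurableSet.iInter fun l => measurableSet_le (mp l) measurable_const
      have hintp : ∀ l : Fin N, Integrable (fun ω => p ω l) μ :=
        fun l => (ContinuousLinearMap.proj l : (Fin N → ℝ) →L[ℝ] ℝ).integrable_comp
          integrable_condExp
      have hintX : ∀ l : Fin N, Integrable (fun ω => X (t + 1) ω l) μ :=
        fun l => (ContinuousLinearMap.proj l : (Fin N → ℝ) →L[ℝ] ℝ).integrable_comp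
          (hXint (t + 1))
      have e1 : ∫ ω in {ω | ∀ l, p ω l ≤ 0}, (∑ l, p ω l) ∂μ
          = ∑ l, ∫ ω in {ω | ∀ l, p ω l ≤ 0}, p ω l ∂μ :=
        integral_finset_sum _ fun l _ => (hintp l).integrableOn
      have e2 : ∫ ω in {ω | ∀ l, p ω l ≤ 0}, (∑ l, X (t + 1) ω l) ∂μ
          = ∑ l, ∫ ω in {ω | ∀ l, p ω l ≤ 0}, X (t + 1) ω l ∂μ :=
        integral_finset_sum _ fun l _ => (hintX l).integrableOn
      have e3 : ∫ ω in {ω | ∀ l, p ω l ≤ 0}, (∑ l, X (t + 1) ω l) ∂μ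
          = (μ {ω | ∀ l, p ω l ≤ 0}).toReal := by
        have hone : ∀ᵐ ω ∂μ, ω ∈ {ω | ∀ l, p ω l ≤ 0} → (∑ l, X (t + 1) ω l) = 1 :=
          ae_of_all _ fun ω _ => by
            obtain ⟨i0, hi0⟩ := hXval (t + 1) ω; simp [hi0]
        rw [setIntegral_congr_ae (hle t _ hmA0) hone]
        simp [Measure.real]
      have e4 : ∫ ω in {ω | ∀ l, p ω l ≤ 0}, (∑ l, p ω l) ∂μ ≤ 0 := by
        refine setIntegral_nonpos (hle t _ hmA0) fun ω hω => ?_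
        exact Finset.sum_nonpos fun l _ => hω l
      have e5 : ∑ l, ∫ ω in {ω | ∀ l, p ω l ≤ 0}, p ω l ∂μ
          = ∑ l, ∫ ω in {ω | ∀ l, p ω l ≤ 0}, X (t + 1) ω l ∂μ :=
        Finset.sum_congr rfl fun l _ => aux_comp (hle t) (hXint (t + 1)) hmA0 l
      have : (μ {ω | ∀ l, p ω l ≤ 0}).toReal ≤ 0 := by
        rw [← e3, e2, ← e5, ← e1]; exact e4
      have hfin := measure_ne_top μ {ω | ∀ l, p ω l ≤ 0}
      have := le_antisymm this ENNReal.toReal_nonneg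
      exact (ENNReal.toReal_eq_zero_iff _).1 this |>.resolve_right hfin
    have hgtset : ∀ᵐ ω ∂μ, ∃ l, 0 < p ω l := by
      have h := (measure_eq_zero_iff_ae_notMem).1 hA0
      filter_upwards [h] with ω hω
      by_contra hc
      push_neg at hc
      exact hω fun l => (hc l)
    have hAae : ∀ᵐ ω ∂μ, ∀ (i : Fin K) (j : Fin N), ¬ (0 < p ω j ∧
        (Z1 t ω i j - Z2 t ω i j) - ∑ l, (Z1 t ω i l - Z2 t ω i l) * p ω l
          < (F1 ω t (Y2 t ω) (Z1 t ω) i - F1 ω t (Y2 t ω) (Z2 t ω) i)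
            - ((Y1 t ω i - F1 ω t (Y1 t ω) (Z1 t ω) i)
                - (Y2 t ω i - F1 ω t (Y2 t ω) (Z1 t ω) i))) :=
      (ae_all_iff).2 fun i => (ae_all_iff).2 fun j =>
        (measure_eq_zero_iff_ae_notMem).1 (hAnull i j)
    filter_upwards [hAae, hgtset, hiii t htT, hiv t htT] with ω hA hex h3 h4
    have hD : ∀ i, 0 ≤ (Y1 t ω i - F1 ω t (Y1 t ω) (Z1 t ω) i)
        - (Y2 t ω i - F1 ω t (Y2 t ω) (Z1 t ω) i) := by
      intro i
      have hcs : (F1 ω t (Y2 t ω) (Z1 t ω) i - F1 ω t (Y2 t ω) (Z2 t ω) i)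
          - ((Y1 t ω i - F1 ω t (Y1 t ω) (Z1 t ω) i)
              - (Y2 t ω i - F1 ω t (Y2 t ω) (Z1 t ω) i))
          ≤ Jmin (p ω) (fun j => Z1 t ω i j - Z2 t ω i j) := by
        unfold Jmin
        apply le_csInf
        · obtain ⟨l, hl⟩ := hex
          exact ⟨_, l, hl, rfl⟩
        · rintro b ⟨j, hj, rfl⟩
          have hnlt := hA i j
          push_neg at hnlt
          have := hnlt hj
          simpa using this
      have h3i := h3 i
      linarith
    exact h4 fun i => by linarith [hD i]
end
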